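/- arXiv:1906.05463 — 6 statements merged into one kernel-verified Lean document; each statement's English description precedes it below -/
import Mathlib

section
/- Let A be an affine arrangement of n hyperplanes in K^l and define I(bar(A)) as the set of strictly increasing (l+1)-tuples (i_1,...,i_{l+1}) in [n+1]^{l+1} such that the projective hyperplanes bar(H)_{i_1}, ..., bar(H)_{i_{l+1}} have nonempty common intersection. Then A is essential if and only if I(bar(A)) is a proper subset of the set of all strictly increasing (l+1)-tuples in [n+1]^{l+1}. -/
open MvPolynomial
open scoped Classical

/-- The affine hyperplane solution set `{x | ∑ aₖ xₖ = b}` in `K^l`. -/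
def hypSet (K : Type*) [CommRing K] {l : ℕ} (a : Fin l → K) (b : K) : Set (Fin l → K) :=
  {x | ∑ k, a k * x k = b}

/-- Dimension of a subset of `K^l` (intended: an affine subspace), with `adim ∅ = -1`. -/
noncomputable def adim (K : Type*) [CommRing K] {l : ℕ} (S : Set (Fin l → K)) : ℤ :=
  if S = ∅ then -1 else Module.finrank K (affineSpan K S).direction

/-- The homogenized forms of the cone `c𝒜` of the affine arrangement with forms
`x ↦ ∑ aᵢₖ xₖ - bᵢ`; the last index corresponds to the hyperplane at infinity. A projective
point of `KP^l` is represented by a nonzero `v : Fin (l+1) → K`, and `v` lies on the `i`-th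
projective hyperplane of `bar 𝒜` iff `coneForm a b i v = 0`. -/
def coneForm {K : Type*} [CommRing K] {l n : ℕ} (a : Fin n → Fin l → K) (b : Fin n → K)
    (i : Fin (n + 1)) (v : Fin (l + 1) → K) : K :=
  if h : (i : ℕ) < n then
    (∑ k : Fin l, a ⟨i, h⟩ k * v k.castSucc) - b ⟨i, h⟩ * v (Fin.last l)
  else v (Fin.last l)

/-- `𝓘(bar 𝒜)`: the set of strictly increasing `(l+1)`-tuples of indices in `[n+1]` whose
corresponding projective hyperplanes of `bar 𝒜` have nonempty common intersection. -/
def Ibar (K : Type*) [CommRing K] {l n : ℕ} (a : Fin n → Fin l → K) (b : Fin n → K) :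
    Set (Fin (l + 1) → Fin (n + 1)) :=
  {t | StrictMono t ∧ ∃ v : Fin (l + 1) → K, v ≠ 0 ∧ ∀ j, coneForm a b (t j) v = 0}

private lemma inter_singleton {K : Type*} [Field K] {l n : ℕ} (a : Fin n → Fin l → K)
    (b : Fin n → K) (s : Fin l → Fin n)
    (hinj : Function.Injective (Matrix.of fun j k => a (s j) k).mulVecLin) :
    ∃ x : Fin l → K, (⋂ j, hypSet K (a (s j)) (b (s j))) = {x} := by
  obtain ⟨x, hx⟩ := LinearMap.injective_iff_surjective.mp hinj (fun j => b (s j))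
  refine ⟨x, ?_⟩
  ext y
  simp only [Set.mem_iInter, hypSet, Set.mem_setOf_eq, Set.mem_singleton_iff]
  constructor
  · intro h
    apply hinj
    rw [hx]
    funext j
    simpa [Matrix.mulVecLin, Matrix.mulVec, dotProduct] using h j
  · rintro rfl j
    simpa [Matrix.mulVecLin, Matrix.mulVec, dotProduct] using congrFun hx j

private lemma snoc_ne_zero {K : Type*} [Field K] {l : ℕ} {v' : Fin l → K} (h : v' ≠ 0) :
    (Fin.snoc v' 0 : Fin (l + 1) → K) ≠ 0 := by
  intro hz
  apply h
  funext k
  have := congrFun hz k.castSucc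
  simpa using this

/-- Lemma 2.2, (1) ⟺ (3): `𝒜` is essential (some `l` of its hyperplanes
intersect in a single point) iff `𝓘(bar 𝒜)` is a proper subset of the set of all strictly
increasing `(l+1)`-tuples in `[n+1]^{l+1}`. -/
theorem stmt1 {K : Type*} [Field K] {l n : ℕ} (a : Fin n → Fin l → K) (b : Fin n → K)
    (ha : ∀ i, a i ≠ 0) :
    (∃ t : Fin l → Fin n, StrictMono t ∧
        ∃ x : Fin l → K, (⋂ j, hypSet K (a (t j)) (b (t j))) = {x}) ↔
      Ibar K a b ⊂ {t | StrictMono t} := by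
  constructor
  · rintro ⟨t, ht, x, hx⟩
    -- build the (l+1)-tuple: the l hyperplanes plus the hyperplane at infinity
    set t' : Fin (l + 1) → Fin (n + 1) :=
      Fin.snoc (fun i => (t i).castSucc) (Fin.last n) with ht'def
    have ht'mono : StrictMono t' := by
      intro i j hij
      rcases Fin.eq_castSucc_or_eq_last j with ⟨j', rfl⟩ | rfl
      · rcases Fin.eq_castSucc_or_eq_last i with ⟨i', rfl⟩ | rfl
        · simp only [ht'def, Fin.snoc_castSucc]
          exact Fin.castSucc_lt_castSucc_iff.mpr (ht (Fin.castSucc_lt_castSucc_iff.mp hij))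
        · exact absurd hij (Fin.castSucc_lt_last j').asymm
      · rcases Fin.eq_castSucc_or_eq_last i with ⟨i', rfl⟩ | rfl
        · simp only [ht'def, Fin.snoc_castSucc, Fin.snoc_last]
          exact Fin.castSucc_lt_last _
        · exact absurd hij (lt_irrefl _)
    have hnotmem : t' ∉ Ibar K a b := by
      rintro ⟨-, v, hv0, hv⟩
      have hlast : v (Fin.last l) = 0 := by
        have := hv (Fin.last l)
        simp only [ht'def, Fin.snoc_last] at this
        rw [coneForm, dif_neg (by simp)] at this
        exact this
      have hrow : ∀ i : Fin l, ∑ k : Fin l, a (t i) k * v k.castSucc = 0 := by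
        intro i
        have := hv i.castSucc
        simp only [ht'def, Fin.snoc_castSucc] at this
        rw [coneForm, dif_pos (by simp [Fin.is_lt])] at this
        simpa [hlast, Fin.coe_castSucc, Fin.eta] using this
      have hy : (fun k => x k + v k.castSucc) ∈ ⋂ j, hypSet K (a (t j)) (b (t j)) := by
        simp only [Set.mem_iInter, hypSet, Set.mem_setOf_eq]
        intro j
        have hxj : ∑ k, a (t j) k * x k = b (t j) := by
          have hxmem : x ∈ ⋂ j, hypSet K (a (t j)) (b (t j)) := hx ▸ rfl
          simpa [hypSet] using Set.mem_iInter.mp hxmem j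
        calc ∑ k, a (t j) k * (x k + v k.castSucc)
            = (∑ k, a (t j) k * x k) + ∑ k, a (t j) k * v k.castSucc := by
              rw [← Finset.sum_add_distrib]; congr 1; funext k; ring
          _ = b (t j) := by rw [hxj, hrow j, add_zero]
      rw [hx, Set.mem_singleton_iff] at hy
      apply hv0
      funext k
      refine Fin.lastCases hlast ?_ k
      intro k'
      have := congrFun hy k'
      simpa using this
    rw [Set.ssubset_iff_of_subset (fun u hu => hu.1)]
    exact ⟨t', ht'mono, hnotmem⟩
  · intro hss
    obtain ⟨t, ht, htI⟩ := (Set.ssubset_iff_of_subset (fun u hu => hu.1)).mp hss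
    have key : ∀ v : Fin (l + 1) → K, (∀ j, coneForm a b (t j) v = 0) → v = 0 := by
      intro v hv
      by_contra hv0
      exact htI ⟨ht, v, hv0, hv⟩
    by_cases hcase : (t (Fin.last l) : ℕ) < n
    · -- all indices are finite hyperplanes
      have hB : ∀ j, (t j : ℕ) < n := by
        intro j
        have h1 : (t j : ℕ) ≤ (t (Fin.last l) : ℕ) := ht.monotone (Fin.le_last j)
        omega
      have hexists : ∃ j₀ : Fin (l + 1), Function.Injective
          (Matrix.of fun (i : Fin l) k =>
            a ⟨t (j₀.succAbove i), hB _⟩ k).mulVecLin := by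
        by_contra hno
        push_neg at hno
        have hchoice : ∀ j₀ : Fin (l + 1), ∃ v' : Fin l → K, v' ≠ 0 ∧
            (∀ i : Fin l, ∑ k, a ⟨t (j₀.succAbove i), hB _⟩ k * v' k = 0) := by
          intro j₀
          have hker := hno j₀
          rw [← LinearMap.ker_eq_bot] at hker
          obtain ⟨v', hv'mem, hv'ne⟩ := Submodule.exists_mem_ne_zero_of_ne_bot hker
          refine ⟨v', hv'ne, fun i => ?_⟩
          have := congrFun (LinearMap.mem_ker.mp hv'mem) i
          simpa [Matrix.mulVecLin, Matrix.mulVec, dotProduct] using this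
        choose w hw0 hw using hchoice
        have hc : ∀ j₀ : Fin (l + 1), (∑ k, a ⟨t j₀, hB _⟩ k * w j₀ k) ≠ 0 := by
          intro j₀ hc0
          have hvz : (Fin.snoc (w j₀) 0 : Fin (l + 1) → K) = 0 := by
            apply key
            intro j
            rw [coneForm, dif_pos (hB j)]
            simp only [Fin.snoc_castSucc, Fin.snoc_last, mul_zero, sub_zero]
            rcases eq_or_ne j j₀ with rfl | hne
            · exact hc0
            · obtain ⟨i, hi⟩ := Fin.exists_succAbove_eq hne
              have := hw j₀ i
              rw [hi] at this
              exact this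
          exact snoc_ne_zero (hw0 j₀) hvz
        set Φ : (Fin l → K) →ₗ[K] (Fin (l + 1) → K) :=
          (Matrix.of fun (j : Fin (l + 1)) k => a ⟨t j, hB j⟩ k).mulVecLin with hΦ
        have hsurj : Function.Surjective Φ := by
          intro y
          refine ⟨fun k => ∑ j, y j * (∑ k', a ⟨t j, hB j⟩ k' * w j k')⁻¹ * w j k, ?_⟩
          funext i
          have hval : Φ (fun k => ∑ j, y j * (∑ k', a ⟨t j, hB j⟩ k' * w j k')⁻¹ * w j k) i
              = ∑ k, a ⟨t i, hB i⟩ k *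
                  ∑ j, y j * (∑ k', a ⟨t j, hB j⟩ k' * w j k')⁻¹ * w j k := by
            simp [hΦ, Matrix.mulVecLin, Matrix.mulVec, dotProduct]
          rw [hval]
          calc ∑ k, a ⟨t i, hB i⟩ k *
                  ∑ j, y j * (∑ k', a ⟨t j, hB j⟩ k' * w j k')⁻¹ * w j k
              = ∑ k, ∑ j, a ⟨t i, hB i⟩ k *
                  (y j * (∑ k', a ⟨t j, hB j⟩ k' * w j k')⁻¹ * w j k) := by
                simp_rw [Finset.mul_sum]
            _ = ∑ j, ∑ k, a ⟨t i, hB i⟩ k *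
                  (y j * (∑ k', a ⟨t j, hB j⟩ k' * w j k')⁻¹ * w j k) := Finset.sum_comm
            _ = ∑ j, y j * (∑ k', a ⟨t j, hB j⟩ k' * w j k')⁻¹ *
                  ∑ k, a ⟨t i, hB i⟩ k * w j k := by
                congr 1; funext j
                rw [Finset.mul_sum]; congr 1; funext k; ring
            _ = y i := by
                rw [Finset.sum_eq_single i]
                · rw [mul_assoc, inv_mul_cancel₀ (hc i), mul_one]
                · intro j _ hji
                  obtain ⟨i', hi'⟩ := Fin.exists_succAbove_eq hji.symm
                  have := hw j i'
                  rw [hi'] at this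
                  rw [this, mul_zero]
                · intro h; exact absurd (Finset.mem_univ i) h
        have h1 := Φ.finrank_range_le
        rw [LinearMap.range_eq_top.mpr hsurj] at h1
        simp [Module.finrank_pi] at h1
      obtain ⟨j₀, hj₀⟩ := hexists
      refine ⟨fun i => ⟨t (j₀.succAbove i), hB _⟩, ?_, ?_⟩
      · intro i i' hii'
        simp only [Fin.mk_lt_mk]
        exact ht ((Fin.strictMono_succAbove j₀) hii')
      · exact inter_singleton a b _ hj₀
    · -- the last index is the hyperplane at infinity
      have hfin : ∀ i : Fin l, (t i.castSucc : ℕ) < n := by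
        intro i
        have h1 : (t i.castSucc : ℕ) < (t (Fin.last l) : ℕ) := ht (Fin.castSucc_lt_last i)
        have h2 : (t (Fin.last l) : ℕ) ≤ n := Fin.is_le _
        omega
      refine ⟨fun i => ⟨t i.castSucc, hfin i⟩, ?_, ?_⟩
      · intro i i' hii'
        simp only [Fin.mk_lt_mk]
        exact ht (Fin.castSucc_lt_castSucc_iff.mpr hii')
      · apply inter_singleton
        apply LinearMap.ker_eq_bot.mp
        rw [LinearMap.ker_eq_bot']
        intro v' hv'
        have hv : (Fin.snoc v' 0 : Fin (l + 1) → K) = 0 := by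
          apply key
          intro j
          rcases Fin.eq_castSucc_or_eq_last j with ⟨j', rfl⟩ | rfl
          · rw [coneForm, dif_pos (hfin j')]
            simp only [Fin.snoc_castSucc, Fin.snoc_last, mul_zero, sub_zero]
            have := congrFun hv' j'
            simpa [Matrix.mulVecLin, Matrix.mulVec, dotProduct] using this
          · rw [coneForm, dif_neg hcase]
            simp
        funext k
        have := congrFun hv k.castSucc
        simpa using this
end

section
/- Let A be an essential affine arrangement of n hyperplanes in K^l. Then the set I(bar(A)) of increasing (l+1)-tuples of indices whose corresponding projective hyperplanes in bar(A) have nonempty intersection determines the intersection lattice L(A), and conversely L(A) determines I(bar(A)). -/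
open MvPolynomial
open scoped Classical

/-- Combinatorial equivalence of two ordered arrangements (over possibly different rings):
all corresponding intersections of subfamilies have the same dimension (`-1` for `∅`). -/
noncomputable def CombEquiv (K₁ K₂ : Type*) [CommRing K₁] [CommRing K₂] {l n : ℕ}
    (a₁ : Fin n → Fin l → K₁) (b₁ : Fin n → K₁)
    (a₂ : Fin n → Fin l → K₂) (b₂ : Fin n → K₂) : Prop :=
  ∀ (k : ℕ) (t : Fin k → Fin n), StrictMono t →
    adim K₁ (⋂ j, hypSet K₁ (a₁ (t j)) (b₁ (t j))) =
      adim K₂ (⋂ j, hypSet K₂ (a₂ (t j)) (b₂ (t j)))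

namespace Stmt2Aux

open Module Submodule Matrix

/-! ### Generic matroid-style lemmas -/

section Generic

variable {K : Type*} [Field K] {V : Type*} [AddCommGroup V] [Module K V]
  [FiniteDimensional K V] {ι : Type*} [Fintype ι] [DecidableEq ι]

/-- Independence of the subfamily indexed by a finset. -/
def FIndep (K : Type*) [Field K] {V : Type*} [AddCommGroup V] [Module K V]
    {ι : Type*} (r : ι → V) (T : Finset ι) : Prop :=
  LinearIndependent K (fun i : T => r ↑i)

lemma findep_mono {r : ι → V} {T' T : Finset ι} (h : T' ⊆ T) (hT : FIndep K r T) :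
    FIndep K r T' := by
  refine hT.comp (fun (x : {y // y ∈ T'}) => ⟨↑x, h x.2⟩) ?_
  intro x y hxy
  exact Subtype.ext (by simpa using congrArg Subtype.val hxy)

lemma findep_iff {r : ι → V} {T : Finset ι} :
    FIndep K r T ↔ T.card = Module.finrank K (span K (r '' ↑T)) := by
  rw [FIndep, linearIndependent_iff_card_eq_finrank_span]
  have h1 : Set.range (fun i : T => r ↑i) = r '' (↑T : Set ι) := (Set.image_eq_range r ↑T).symm
  rw [h1, Set.finrank, Fintype.card_coe]

lemma card_le_finrank {r : ι → V} {T' T : Finset ι} (h : T' ⊆ T)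
    (hT' : FIndep K r T') :
    T'.card ≤ Module.finrank K (span K (r '' ↑T)) := by
  rw [findep_iff.mp hT']
  exact Submodule.finrank_mono (span_mono (Set.image_mono  (by exact_mod_cast h)))

/-- Extraction of an independent subfamily with the same span. -/
lemma exists_indep_sub (r : ι → V) (T : Finset ι) :
    ∃ T' ⊆ T, FIndep K r T' ∧ span K (r '' ↑T') = span K (r '' ↑T) := by
  induction T using Finset.strongInductionOn with
  | _ T ih =>
    by_cases hT : FIndep K r T
    · exact ⟨T, subset_rfl, hT, rfl⟩
    · obtain ⟨g, hg, i₀, hi₀⟩ := Fintype.not_linearIndependent_iff.mp hT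
      have hsum : g i₀ • r ↑i₀ = -∑ i ∈ Finset.univ.erase i₀, g i • r ↑i := by
        have h0 := Finset.sum_erase_add Finset.univ (fun i : T => g i • r ↑i) (Finset.mem_univ i₀)
        rw [hg] at h0
        exact (neg_eq_of_add_eq_zero_right h0).symm
      have hmem : r ↑i₀ ∈ span K (r '' ↑(T.erase ↑i₀)) := by
        have hr : r ↑i₀ = (g i₀)⁻¹ • -∑ i ∈ Finset.univ.erase i₀, g i • r ↑i := by
          rw [← hsum, inv_smul_smul₀ hi₀]
        rw [hr]
        refine Submodule.smul_mem _ _ (Submodule.neg_mem _ (Submodule.sum_mem _ ?_))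
        intro i hi
        refine Submodule.smul_mem _ _ (Submodule.subset_span ?_)
        refine ⟨↑i, ?_, rfl⟩
        have hne : (↑i : ι) ≠ ↑i₀ := by
          intro hco
          exact (Finset.mem_erase.mp hi).1 (Subtype.ext hco)
        simp only [Finset.coe_erase, Set.mem_diff, Set.mem_singleton_iff]
        exact ⟨i.2, hne⟩
      have hspan : span K (r '' ↑T) = span K (r '' ↑(T.erase ↑i₀)) := by
        conv_lhs => rw [← Finset.insert_erase i₀.2]
        rw [Finset.coe_insert, Set.image_insert_eq, Submodule.span_insert_eq_span hmem]
      obtain ⟨T', hsub, hind, hsp⟩ := ih (T.erase ↑i₀) (Finset.erase_ssubset i₀.2)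
      exact ⟨T', hsub.trans (Finset.erase_subset _ _), hind, hsp.trans hspan.symm⟩

/-- Every independent subfamily of a spanning family extends to one of full size. -/
lemma exists_indep_sup (r : ι → V) (hr : span K (Set.range r) = ⊤) (T : Finset ι)
    (hT : FIndep K r T) :
    ∃ U, T ⊆ U ∧ U.card = Module.finrank K V ∧ FIndep K r U := by
  have hcard : T.card ≤ Module.finrank K V := by
    rw [findep_iff.mp hT]
    exact Submodule.finrank_le _
  obtain ⟨m, hm⟩ : ∃ m, Module.finrank K V = T.card + m := ⟨_, (Nat.add_sub_cancel' hcard).symm⟩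
  clear hcard
  induction m generalizing T with
  | zero => exact ⟨T, subset_rfl, by omega, hT⟩
  | succ m ihm =>
    have hlt : T.card < Module.finrank K V := by omega
    have hex : ∃ i, r i ∉ span K (r '' ↑T) := by
      by_contra hco
      push_neg at hco
      have htop : span K (r '' ↑T) = ⊤ := by
        rw [eq_top_iff, ← hr]
        exact Submodule.span_le.mpr (Set.range_subset_iff.mpr hco)
      have h5 := findep_iff.mp hT
      rw [htop, finrank_top] at h5
      omega
    obtain ⟨i, hi⟩ := hex
    have hiT : i ∉ T := fun h => hi (Submodule.subset_span (Set.mem_image_of_mem _ h))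
    have hiT' : i ∉ (↑T : Set ι) := by exact_mod_cast hiT
    have hInj : Set.InjOn r ↑T := by
      intro x hx y hy hxy
      have := hT.injective (a₁ := ⟨x, hx⟩) (a₂ := ⟨y, hy⟩) hxy
      exact congrArg Subtype.val this
    have hSet : LinearIndependent K (fun v : (r '' ↑T : Set V) => (v : V)) :=
      (linearIndepOn_iff_image hInj).mp hT
    have hIns : LinearIndependent K (fun v : (insert (r i) (r '' ↑T) : Set V) => (v : V)) :=
      LinearIndepOn.id_insert hSet hi
    have hInj' : Set.InjOn r (insert i ↑T) := by
      rw [Set.injOn_insert hiT']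
      exact ⟨hInj, fun hmem => hi (Submodule.subset_span hmem)⟩
    have hFam : FIndep K r (insert i T) := by
      have h2 := (linearIndepOn_iff_image hInj').mpr (by rwa [Set.image_insert_eq])
      have hcoe : (insert i (↑T : Set ι)) = ((insert i T : Finset ι) : Set ι) :=
        (Finset.coe_insert i T).symm
      rw [hcoe] at h2
      exact h2
    have hc : (insert i T).card = T.card + 1 := Finset.card_insert_of_notMem hiT
    obtain ⟨U, hTU, hUcard, hUind⟩ := ihm (insert i T) hFam (by omega)
    exact ⟨U, (Finset.subset_insert _ _).trans hTU, hUcard, hUind⟩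

end Generic

/-- The one-sided rank comparison from equality of independence of maximal subfamilies. -/
lemma rank_le_of_indep_imp {K₁ K₂ : Type*} [Field K₁] [Field K₂]
    {V₁ V₂ : Type*} [AddCommGroup V₁] [Module K₁ V₁] [AddCommGroup V₂] [Module K₂ V₂]
    [FiniteDimensional K₁ V₁] [FiniteDimensional K₂ V₂]
    {ι : Type*} [Fintype ι] [DecidableEq ι] {D : ℕ}
    (r₁ : ι → V₁) (r₂ : ι → V₂)
    (hD₁ : Module.finrank K₁ V₁ = D) (hD₂ : Module.finrank K₂ V₂ = D)
    (hsp₁ : span K₁ (Set.range r₁) = ⊤)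
    (hind : ∀ U : Finset ι, U.card = D → FIndep K₁ r₁ U → FIndep K₂ r₂ U)
    (T : Finset ι) :
    Module.finrank K₁ (span K₁ (r₁ '' ↑T)) ≤ Module.finrank K₂ (span K₂ (r₂ '' ↑T)) := by
  obtain ⟨T', hsub, hT'i, hsp⟩ := exists_indep_sub (K := K₁) r₁ T
  have h1 : Module.finrank K₁ (span K₁ (r₁ '' ↑T)) = T'.card := by
    rw [← hsp, ← findep_iff.mp hT'i]
  obtain ⟨U, hTU, hUcard, hUind⟩ := exists_indep_sup r₁ hsp₁ T' hT'i
  have h2 : FIndep K₂ r₂ U := hind U (by omega) hUind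
  have h3 : FIndep K₂ r₂ T' := findep_mono hTU h2
  rw [h1]
  exact card_le_finrank hsub h3

/-! ### Coned rows -/

section OneField

variable {K : Type*} [Field K] {l n : ℕ}

def vrow (a : Fin n → Fin l → K) (b : Fin n → K) (i : Fin n) : Fin (l + 1) → K :=
  Fin.snoc (a i) (-(b i))

def erow (K : Type*) [Field K] (l : ℕ) : Fin (l + 1) → K :=
  Fin.snoc 0 1

def crow (a : Fin n → Fin l → K) (b : Fin n → K) (i : Fin (n + 1)) : Fin (l + 1) → K :=
  if h : (i : ℕ) < n then vrow a b ⟨i, h⟩ else erow K l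

variable (a : Fin n → Fin l → K) (b : Fin n → K)

@[simp] lemma vrow_castSucc (i : Fin n) (k : Fin l) : vrow a b i k.castSucc = a i k := by
  simp [vrow]

@[simp] lemma vrow_last (i : Fin n) : vrow a b i (Fin.last l) = -(b i) := by
  simp [vrow]

@[simp] lemma erow_castSucc (k : Fin l) : erow K l k.castSucc = 0 := by
  simp [erow]

@[simp] lemma erow_last : erow K l (Fin.last l) = 1 := by
  simp [erow]

lemma erow_ne_zero : erow K l ≠ 0 := by
  intro h
  have := congrFun h (Fin.last l)
  simp [erow] at this

lemma crow_castSucc (i : Fin n) : crow a b i.castSucc = vrow a b i := by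
  have h : ((i.castSucc : Fin (n + 1)) : ℕ) < n := by simp [i.is_lt]
  rw [crow, dif_pos h]
  have h2 : (⟨((i.castSucc : Fin (n + 1)) : ℕ), h⟩ : Fin n) = i := Fin.ext (by simp)
  rw [h2]

lemma crow_last : crow a b (Fin.last n) = erow K l := by
  rw [crow, dif_neg (by simp)]

lemma coneForm_eq_dot (i : Fin (n + 1)) (v : Fin (l + 1) → K) :
    coneForm a b i v = crow a b i ⬝ᵥ v := by
  rw [coneForm, crow]
  split
  · rw [dotProduct, Fin.sum_univ_castSucc]
    simp [vrow, sub_eq_add_neg, neg_mul]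
  · rw [dotProduct, Fin.sum_univ_castSucc]
    simp [erow]

/-- The projection dropping the last coordinate. -/
noncomputable def projL (K : Type*) [Field K] (l : ℕ) :
    (Fin (l + 1) → K) →ₗ[K] (Fin l → K) :=
  LinearMap.funLeft K K Fin.castSucc

@[simp] lemma projL_apply (v : Fin (l + 1) → K) (k : Fin l) :
    projL K l v k = v k.castSucc := rfl

@[simp] lemma projL_vrow (i : Fin n) : projL K l (vrow a b i) = a i := by
  funext k; simp

@[simp] lemma projL_erow : projL K l (erow K l) = 0 := by
  funext k; simp

lemma eq_smul_erow {v : Fin (l + 1) → K} (h : ∀ k : Fin l, v k.castSucc = 0) :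
    v = v (Fin.last l) • erow K l := by
  funext j
  induction j using Fin.lastCases with
  | last => simp
  | cast k => simp [h k]

lemma finrank_of_erow_not_mem {W : Submodule K (Fin (l + 1) → K)} (hW : erow K l ∉ W) :
    Module.finrank K W = Module.finrank K (W.map (projL K l)) := by
  have h := LinearMap.finrank_range_add_finrank_ker ((projL K l).domRestrict W)
  have hker : LinearMap.ker ((projL K l).domRestrict W) = ⊥ := by
    ext x
    simp only [LinearMap.mem_ker, Submodule.mem_bot, LinearMap.domRestrict_apply]
    constructor
    · intro hx
      have hx' : ∀ k : Fin l, (x : Fin (l + 1) → K) k.castSucc = 0 := fun k => congrFun hx k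
      have heq := eq_smul_erow hx'
      by_cases hc : (x : Fin (l + 1) → K) (Fin.last l) = 0
      · ext1
        rw [heq, hc, zero_smul]
        rfl
      · exfalso
        apply hW
        set c : K := (x : Fin (l + 1) → K) (Fin.last l) with hcdef
        have : erow K l = c⁻¹ • (x : Fin (l + 1) → K) := by
          rw [heq, smul_smul, inv_mul_cancel₀ hc, one_smul]
        rw [this]
        exact Submodule.smul_mem _ _ x.2
    · rintro rfl; simp
  rw [LinearMap.range_domRestrict, hker, finrank_bot] at h
  omega

lemma finrank_of_erow_mem {W : Submodule K (Fin (l + 1) → K)} (hW : erow K l ∈ W) :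
    Module.finrank K W = Module.finrank K (W.map (projL K l)) + 1 := by
  have h := LinearMap.finrank_range_add_finrank_ker ((projL K l).domRestrict W)
  have hker : LinearMap.ker ((projL K l).domRestrict W)
      = span K {(⟨erow K l, hW⟩ : W)} := by
    apply le_antisymm
    · intro x hx
      simp only [LinearMap.mem_ker, LinearMap.domRestrict_apply] at hx
      have hx' : ∀ k : Fin l, (x : Fin (l + 1) → K) k.castSucc = 0 := fun k => congrFun hx k
      have heq := eq_smul_erow hx'
      rw [Submodule.mem_span_singleton]
      refine ⟨(x : Fin (l + 1) → K) (Fin.last l), Subtype.ext ?_⟩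
      rw [SetLike.val_smul]
      exact heq.symm
    · rw [Submodule.span_le, Set.singleton_subset_iff]
      simp only [SetLike.mem_coe, LinearMap.mem_ker, LinearMap.domRestrict_apply]
      exact projL_erow
  have hone : Module.finrank K (LinearMap.ker ((projL K l).domRestrict W)) = 1 := by
    rw [hker]
    apply finrank_span_singleton
    intro hco
    exact erow_ne_zero (congrArg Subtype.val hco)
  rw [LinearMap.range_domRestrict, hone] at h
  omega

lemma map_span_vrow (s : Finset (Fin n)) :
    (span K (vrow a b '' ↑s)).map (projL K l) = span K (a '' ↑s) := by
  rw [Submodule.map_span, Set.image_image]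
  have himg : (fun i => projL K l (vrow a b i)) '' ↑s = a '' ↑s :=
    Set.image_congr fun i _ => projL_vrow a b i
  rw [himg]

/-! ### The affine side -/

def interSet (a : Fin n → Fin l → K) (b : Fin n → K) (s : Finset (Fin n)) :
    Set (Fin l → K) :=
  ⋂ i ∈ s, hypSet K (a i) (b i)

lemma mem_interSet {s : Finset (Fin n)} {x : Fin l → K} :
    x ∈ interSet a b s ↔ ∀ i ∈ s, a i ⬝ᵥ x = b i := by
  simp [interSet, hypSet, dotProduct]

lemma tuple_inter {k : ℕ} (t : Fin k → Fin n) :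
    (⋂ j, hypSet K (a (t j)) (b (t j))) = interSet a b (Finset.image t Finset.univ) := by
  ext x
  simp only [interSet, Set.mem_iInter, Finset.mem_image, Finset.mem_univ, true_and]
  constructor
  · rintro h i ⟨j, rfl⟩
    exact h j
  · intro h j
    exact h (t j) ⟨j, rfl⟩

lemma interSet_nonempty_iff (s : Finset (Fin n)) :
    (interSet a b s).Nonempty ↔ erow K l ∉ span K (vrow a b '' ↑s) := by
  constructor
  · rintro ⟨x₀, hx₀⟩ hmem
    set f : (Fin (l + 1) → K) →ₗ[K] K :=
      (∑ k : Fin l, x₀ k • LinearMap.proj k.castSucc) + LinearMap.proj (Fin.last l) with hf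
    have hfapp : ∀ v, f v = (∑ k : Fin l, x₀ k * v k.castSucc) + v (Fin.last l) := by
      intro v
      simp [hf, LinearMap.sum_apply, smul_eq_mul]
    have hker : span K (vrow a b '' ↑s) ≤ LinearMap.ker f := by
      rw [Submodule.span_le]
      rintro _ ⟨i, hi, rfl⟩
      have hbi : a i ⬝ᵥ x₀ = b i := (mem_interSet a b).mp hx₀ i (by exact_mod_cast hi)
      simp only [SetLike.mem_coe, LinearMap.mem_ker, hfapp, vrow_castSucc, vrow_last]
      have h2 : ∑ k : Fin l, x₀ k * a i k = ∑ k : Fin l, a i k * x₀ k :=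
        Finset.sum_congr rfl fun k _ => mul_comm _ _
      rw [h2]
      rw [dotProduct] at hbi
      rw [hbi]
      ring
    have : f (erow K l) = 0 := hker hmem
    rw [hfapp] at this
    simp at this
  · intro hmem
    by_contra hne
    apply hmem
    rw [Set.not_nonempty_iff_eq_empty] at hne
    -- construct the coefficients via a separating functional
    set M : Matrix s (Fin l) K := Matrix.of (fun i : s => a ↑i) with hM
    set bv : s → K := fun i => b ↑i with hbv
    have hbvr : bv ∉ LinearMap.range M.mulVecLin := by
      rintro ⟨x, hx⟩
      have : x ∈ interSet a b s := by
        rw [mem_interSet]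
        intro i hi
        exact congrFun hx ⟨i, hi⟩
      rw [hne] at this
      exact this
    obtain ⟨g, hg0, hgbot⟩ :=
      Submodule.exists_dual_map_eq_bot_of_notMem hbvr inferInstance
    have hker : ∀ z ∈ LinearMap.range M.mulVecLin, g z = 0 := by
      intro z hz
      have : g z ∈ (LinearMap.range M.mulVecLin).map g := Submodule.mem_map_of_mem hz
      rw [hgbot] at this
      exact (Submodule.mem_bot K).mp this
    set y : s → K := fun i => g (fun j => if i = j then 1 else 0) with hy
    have hgrep : ∀ z : s → K, g z = ∑ i, z i * y i := by
      intro z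
      rw [LinearMap.pi_apply_eq_sum_univ g z]
      simp [hy, smul_eq_mul]
    have key1 : ∀ k : Fin l, ∑ i : s, y i * a ↑i k = 0 := by
      intro k
      have h0 : g (M.mulVecLin (Pi.single k 1)) = 0 :=
        hker _ (LinearMap.mem_range_self _ _)
      rw [hgrep] at h0
      have h1 : ∀ i : s, (M.mulVecLin (Pi.single k 1)) i = a ↑i k := by
        intro i
        simp [hM, Matrix.mulVecLin_apply, Matrix.mulVec, dotProduct, Pi.single_apply]
      rw [Finset.sum_congr rfl (fun i _ => by rw [h1 i])] at h0
      rw [← h0]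
      exact Finset.sum_congr rfl fun i _ => mul_comm _ _
    set c : K := g bv with hc
    have hcne : c ≠ 0 := hg0
    have key2 : ∑ i : s, b ↑i * y i = c := (hgrep bv).symm
    have herow : erow K l = ∑ i : s, ((-(y i)) * c⁻¹) • vrow a b ↑i := by
      funext j
      rw [Finset.sum_apply]
      induction j using Fin.lastCases with
      | last =>
        simp only [erow_last, Pi.smul_apply, vrow_last, smul_eq_mul]
        have : ∀ i : s, (-(y i)) * c⁻¹ * (-(b ↑i)) = c⁻¹ * (b ↑i * y i) := by
          intro i; ring
        rw [Finset.sum_congr rfl fun i _ => this i, ← Finset.mul_sum, key2,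
          inv_mul_cancel₀ hcne]
      | cast k =>
        simp only [erow_castSucc, Pi.smul_apply, vrow_castSucc, smul_eq_mul]
        have : ∀ i : s, (-(y i)) * c⁻¹ * a ↑i k = (-c⁻¹) * (y i * a ↑i k) := by
          intro i; ring
        rw [Finset.sum_congr rfl fun i _ => this i, ← Finset.mul_sum, key1,
          mul_zero]
    rw [herow]
    apply Submodule.sum_mem
    intro i _
    exact Submodule.smul_mem _ _ (Submodule.subset_span ⟨↑i, by exact_mod_cast i.2, rfl⟩)

lemma adim_of_nonempty {s : Finset (Fin n)} (hne : (interSet a b s).Nonempty) :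
    adim K (interSet a b s) = (l : ℤ) - Module.finrank K (span K (a '' ↑s)) ∧
      Module.finrank K (span K (a '' ↑s)) ≤ l := by
  obtain ⟨x₀, hx₀⟩ := hne
  set M : Matrix s (Fin l) K := Matrix.of (fun i : s => a ↑i) with hM
  have hset : interSet a b s = ↑(AffineSubspace.mk' x₀ (LinearMap.ker M.mulVecLin)) := by
    ext x
    rw [SetLike.mem_coe, AffineSubspace.mem_mk']
    have hv : x -ᵥ x₀ = x - x₀ := rfl
    rw [hv, LinearMap.mem_ker, Matrix.mulVecLin_apply]
    constructor
    · intro hx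
      funext i
      have h1 : a ↑i ⬝ᵥ x = b ↑i := (mem_interSet a b).mp hx ↑i i.2
      have h0 : a ↑i ⬝ᵥ x₀ = b ↑i := (mem_interSet a b).mp hx₀ ↑i i.2
      show a ↑i ⬝ᵥ (x - x₀) = 0
      rw [dotProduct_sub, h1, h0, sub_self]
    · intro hx
      rw [mem_interSet]
      intro i hi
      have h2 : a i ⬝ᵥ (x - x₀) = 0 := congrFun hx ⟨i, hi⟩
      have h0 : a i ⬝ᵥ x₀ = b i := (mem_interSet a b).mp hx₀ i hi
      rw [dotProduct_sub, h0] at h2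
      exact sub_eq_zero.mp h2
  have hnemp : interSet a b s ≠ ∅ := Set.nonempty_iff_ne_empty.mp ⟨x₀, hx₀⟩
  have hrank : M.rank = Module.finrank K (span K (a '' ↑s)) := by
    have himg : Set.range M.row = a '' ↑s := by
      rw [Set.image_eq_range]
      rfl
    rw [Matrix.rank_eq_finrank_span_row, himg]
  have hrn := LinearMap.finrank_range_add_finrank_ker M.mulVecLin
  rw [Module.finrank_fin_fun] at hrn
  have hrange : Module.finrank K (LinearMap.range M.mulVecLin) = M.rank := rfl
  rw [hrange, hrank] at hrn
  constructor
  · rw [adim, if_neg hnemp, hset, AffineSubspace.affineSpan_coe, AffineSubspace.direction_mk']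
    omega
  · omega

lemma adim_of_empty {s : Finset (Fin n)} (hs : interSet a b s = ∅) :
    adim K (interSet a b s) = -1 := by
  simp [adim, hs]

lemma finrank_vrow_of_nonempty {s : Finset (Fin n)} (hne : (interSet a b s).Nonempty) :
    Module.finrank K (span K (vrow a b '' ↑s)) = Module.finrank K (span K (a '' ↑s)) := by
  rw [finrank_of_erow_not_mem ((interSet_nonempty_iff a b s).mp hne), map_span_vrow]

lemma finrank_vrow_of_empty {s : Finset (Fin n)} (hs : interSet a b s = ∅) :
    Module.finrank K (span K (vrow a b '' ↑s))
      = Module.finrank K (span K (a '' ↑s)) + 1 := by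
  have hmem : erow K l ∈ span K (vrow a b '' ↑s) := by
    by_contra hco
    obtain ⟨x, hx⟩ := (interSet_nonempty_iff a b s).mpr hco
    rw [hs] at hx
    exact hx
  rw [finrank_of_erow_mem hmem, map_span_vrow]

lemma finrank_insert_erow (s : Finset (Fin n)) :
    Module.finrank K (span K (insert (erow K l) (vrow a b '' ↑s)))
      = Module.finrank K (span K (a '' ↑s)) + 1 := by
  have hmem : erow K l ∈ span K (insert (erow K l) (vrow a b '' ↑s)) :=
    Submodule.subset_span (Set.mem_insert _ _)
  rw [finrank_of_erow_mem hmem]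
  have himg : (fun i => projL K l (vrow a b i)) '' ↑s = a '' ↑s :=
    Set.image_congr fun i _ => projL_vrow a b i
  have hmap : (span K (insert (erow K l) (vrow a b '' ↑s))).map (projL K l)
      = span K (a '' ↑s) := by
    rw [Submodule.map_span, Set.image_insert_eq, projL_erow, Submodule.span_insert_zero,
      Set.image_image, himg]
  rw [hmap]

/-! ### crow images of index sets -/

noncomputable def backIdx (T : Finset (Fin (n + 1))) : Finset (Fin n) :=
  T.preimage Fin.castSucc (Fin.castSucc_injective n).injOn

lemma crow_image_of_not_mem {T : Finset (Fin (n + 1))} (hT : Fin.last n ∉ T) :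
    crow a b '' ↑T = vrow a b '' ↑(backIdx T) := by
  rw [backIdx, Finset.coe_preimage]
  ext v
  constructor
  · rintro ⟨i, hi, rfl⟩
    have hlt : (i : ℕ) < n := by
      rcases Fin.lt_or_eq_of_le (Fin.le_last i) with h | h
      · exact_mod_cast h
      · exact absurd (h ▸ hi) hT
    refine ⟨⟨i, hlt⟩, ?_, ?_⟩
    · show Fin.castSucc ⟨i, hlt⟩ ∈ (↑T : Set (Fin (n + 1)))
      have : Fin.castSucc ⟨(i : ℕ), hlt⟩ = i := Fin.ext (by simp)
      rwa [this]
    · have hci : (Fin.castSucc ⟨(i : ℕ), hlt⟩) = i := Fin.ext (by simp)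
      have hcs := crow_castSucc a b ⟨(i : ℕ), hlt⟩
      rw [hci] at hcs
      exact hcs.symm
  · rintro ⟨j, hj, rfl⟩
    exact ⟨j.castSucc, hj, crow_castSucc a b j⟩

lemma crow_image_of_mem {T : Finset (Fin (n + 1))} (hT : Fin.last n ∈ T) :
    crow a b '' ↑T = insert (erow K l) (vrow a b '' ↑(backIdx T)) := by
  have h1 : (↑T : Set (Fin (n + 1))) = insert (Fin.last n) (↑(T.erase (Fin.last n))) := by
    rw [Finset.coe_erase]
    rw [Set.insert_diff_singleton, Set.insert_eq_self.mpr (by exact_mod_cast hT)]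
  have h2 : backIdx T = backIdx (T.erase (Fin.last n)) := by
    ext j
    simp only [backIdx, Finset.mem_preimage, Finset.mem_erase]
    have hne : Fin.castSucc j ≠ Fin.last n := (Fin.castSucc_lt_last j).ne
    tauto
  rw [h1, Set.image_insert_eq, crow_last, h2,
    crow_image_of_not_mem a b (Finset.notMem_erase _ _)]

lemma crow_image_cs (s : Finset (Fin n)) :
    crow a b '' ↑(s.image Fin.castSucc) = vrow a b '' ↑s := by
  rw [Finset.coe_image, Set.image_image]
  exact Set.image_congr fun i _ => crow_castSucc a b i

lemma crow_image_insert_last (s : Finset (Fin n)) :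
    crow a b '' ↑(insert (Fin.last n) (s.image Fin.castSucc))
      = insert (erow K l) (vrow a b '' ↑s) := by
  rw [Finset.coe_insert, Set.image_insert_eq, crow_last, crow_image_cs]

/-! ### Ibar membership -/

lemma mem_Ibar_iff {t : Fin (l + 1) → Fin (n + 1)} (ht : StrictMono t) :
    t ∈ Ibar K a b ↔ ¬ LinearIndependent K (fun j => crow a b (t j)) := by
  rw [Ibar, Set.mem_setOf_eq]
  simp only [ht, true_and]
  set M : Matrix (Fin (l + 1)) (Fin (l + 1)) K := Matrix.of (fun j => crow a b (t j)) with hM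
  have h1 : (∃ v : Fin (l + 1) → K, v ≠ 0 ∧ ∀ j, coneForm a b (t j) v = 0)
      ↔ ∃ v, v ≠ 0 ∧ M.mulVec v = 0 := by
    apply exists_congr
    intro v
    apply and_congr_right'
    constructor
    · intro h
      funext j
      have := h j
      rw [coneForm_eq_dot] at this
      exact this
    · intro h j
      rw [coneForm_eq_dot]
      exact congrFun h j
  have h2 : (∃ v, v ≠ 0 ∧ M.mulVec v = 0) ↔ M.det = 0 :=
    Matrix.exists_mulVec_eq_zero_iff
  have h3 : ¬ LinearIndependent K (fun j => crow a b (t j)) ↔ M.det = 0 := by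
    rw [show (fun j => crow a b (t j)) = M.row from rfl,
      Matrix.linearIndependent_rows_iff_isUnit, Matrix.isUnit_iff_isUnit_det,
      isUnit_iff_ne_zero, not_not]
  rw [h1, h2, h3]

lemma strictMono_indep_iff (t : Fin (l + 1) → Fin (n + 1)) :
    LinearIndependent K (fun j => crow a b (t j)) ↔
      Module.finrank K (span K (crow a b '' ↑(Finset.image t Finset.univ))) = l + 1 := by
  rw [linearIndependent_iff_card_eq_finrank_span]
  have h1 : Set.range (fun j => crow a b (t j)) = crow a b '' ↑(Finset.image t Finset.univ) := by
    rw [Finset.coe_image, Finset.coe_univ, Set.image_univ, ← Set.range_comp]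
    rfl
  rw [h1, Set.finrank, Fintype.card_fin]
  exact eq_comm

lemma findep_card_iff {T : Finset (Fin (n + 1))} (hcard : T.card = l + 1) :
    FIndep K (crow a b) T ↔
      Module.finrank K (span K (crow a b '' ↑T)) = l + 1 := by
  rw [findep_iff, hcard]
  exact eq_comm

/-! ### Essentialness -/

lemma adim_singleton (x : Fin l → K) : adim K ({x} : Set (Fin l → K)) = 0 := by
  rw [adim, if_neg (by simp)]
  rw [direction_affineSpan, vectorSpan_singleton]
  simp

lemma span_crow_top
    (hess : ∃ t : Fin l → Fin n, StrictMono t ∧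
      ∃ x : Fin l → K, (⋂ j, hypSet K (a (t j)) (b (t j))) = {x}) :
    span K (Set.range (crow a b)) = ⊤ := by
  obtain ⟨t, ht, x, hx⟩ := hess
  set s : Finset (Fin n) := Finset.image t Finset.univ with hs
  have hIs : interSet a b s = {x} := by rw [← tuple_inter, hx]
  have hne : (interSet a b s).Nonempty := by rw [hIs]; exact ⟨x, rfl⟩
  obtain ⟨hdim, hle⟩ := adim_of_nonempty a b hne
  rw [hIs, adim_singleton] at hdim
  have hrk : Module.finrank K (span K (a '' ↑s)) = l := by omega
  have h1 : Module.finrank K (span K (insert (erow K l) (vrow a b '' ↑s))) = l + 1 := by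
    rw [finrank_insert_erow, hrk]
  have h2 : span K (insert (erow K l) (vrow a b '' ↑s)) ≤ span K (Set.range (crow a b)) := by
    apply Submodule.span_mono
    rw [← crow_image_insert_last]
    exact Set.image_subset_range _ _
  apply Submodule.eq_top_of_finrank_eq
  have h3 : Module.finrank K (Fin (l + 1) → K) = l + 1 := Module.finrank_fin_fun K
  have h4 := Submodule.finrank_mono h2
  have h5 := Submodule.finrank_le (span K (Set.range (crow a b)))
  omega

end OneField

/-! ### Two-field comparison lemmas -/

section TwoFields

variable {K₁ K₂ : Type*} [Field K₁] [Field K₂] {l n : ℕ}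
variable (a₁ : Fin n → Fin l → K₁) (b₁ : Fin n → K₁)
variable (a₂ : Fin n → Fin l → K₂) (b₂ : Fin n → K₂)

lemma aRank_le_of_adim_eq
    (hd : ∀ s : Finset (Fin n), adim K₁ (interSet a₁ b₁ s) = adim K₂ (interSet a₂ b₂ s))
    (s : Finset (Fin n)) :
    Module.finrank K₁ (Submodule.span K₁ (a₁ '' ↑s))
      ≤ Module.finrank K₂ (Submodule.span K₂ (a₂ '' ↑s)) := by
  obtain ⟨s', hsub, hind, hsp⟩ := exists_indep_sub (K := K₁) a₁ s
  have hne₁ : (interSet a₁ b₁ s').Nonempty := by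
    rw [interSet_nonempty_iff]
    intro hmem
    rw [Set.image_eq_range] at hmem
    obtain ⟨c, hc⟩ := (mem_span_range_iff_exists_fun K₁).mp hmem
    have hc0 : ∀ i : s', c i = 0 := by
      have hsum : ∑ i : s', c i • a₁ (↑i) = 0 := by
        funext k
        have h1 := congrFun hc (Fin.castSucc k)
        rw [Finset.sum_apply] at h1
        simp only [Pi.smul_apply, vrow_castSucc, erow_castSucc, smul_eq_mul] at h1
        simp only [Finset.sum_apply, Pi.smul_apply, smul_eq_mul, Pi.zero_apply]
        exact h1
      exact fun i => Fintype.linearIndependent_iff.mp hind c hsum i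
    have h2 := congrFun hc (Fin.last l)
    rw [Finset.sum_apply] at h2
    simp [hc0] at h2
  have hd' := hd s'
  obtain ⟨h1, hle1⟩ := adim_of_nonempty a₁ b₁ hne₁
  have hne₂ : (interSet a₂ b₂ s').Nonempty := by
    by_contra hco
    rw [Set.not_nonempty_iff_eq_empty] at hco
    rw [h1, adim_of_empty a₂ b₂ hco] at hd'
    omega
  obtain ⟨h2, hle2⟩ := adim_of_nonempty a₂ b₂ hne₂
  have heq : Module.finrank K₁ (Submodule.span K₁ (a₁ '' ↑s'))
      = Module.finrank K₂ (Submodule.span K₂ (a₂ '' ↑s')) := by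
    rw [h1, h2] at hd'
    omega
  rw [← hsp, heq]
  exact Submodule.finrank_mono (Submodule.span_mono
    (Set.image_mono (by exact_mod_cast hsub)))

lemma crow_rank_eq_of_adim_eq
    (hd : ∀ s : Finset (Fin n), adim K₁ (interSet a₁ b₁ s) = adim K₂ (interSet a₂ b₂ s))
    (T : Finset (Fin (n + 1))) :
    Module.finrank K₁ (Submodule.span K₁ (crow a₁ b₁ '' ↑T))
      = Module.finrank K₂ (Submodule.span K₂ (crow a₂ b₂ '' ↑T)) := by
  have haR : ∀ s : Finset (Fin n),
      Module.finrank K₁ (Submodule.span K₁ (a₁ '' ↑s))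
        = Module.finrank K₂ (Submodule.span K₂ (a₂ '' ↑s)) := fun s =>
    le_antisymm (aRank_le_of_adim_eq a₁ b₁ a₂ b₂ hd s)
      (aRank_le_of_adim_eq a₂ b₂ a₁ b₁ (fun s' => (hd s').symm) s)
  by_cases hlast : Fin.last n ∈ T
  · rw [crow_image_of_mem a₁ b₁ hlast, crow_image_of_mem a₂ b₂ hlast,
      finrank_insert_erow, finrank_insert_erow, haR (backIdx T)]
  · rw [crow_image_of_not_mem a₁ b₁ hlast, crow_image_of_not_mem a₂ b₂ hlast]
    set s := backIdx T with hsdef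
    by_cases hne : (interSet a₁ b₁ s).Nonempty
    · have hne₂ : (interSet a₂ b₂ s).Nonempty := by
        by_contra hco
        rw [Set.not_nonempty_iff_eq_empty] at hco
        have hds := hd s
        rw [(adim_of_nonempty a₁ b₁ hne).1, adim_of_empty a₂ b₂ hco] at hds
        have := (adim_of_nonempty a₁ b₁ hne).2
        omega
      rw [finrank_vrow_of_nonempty a₁ b₁ hne, finrank_vrow_of_nonempty a₂ b₂ hne₂, haR s]
    · rw [Set.not_nonempty_iff_eq_empty] at hne
      have hne₂ : interSet a₂ b₂ s = ∅ := by
        by_contra hco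
        have hco' : (interSet a₂ b₂ s).Nonempty := Set.nonempty_iff_ne_empty.mpr hco
        have hds := hd s
        rw [adim_of_empty a₁ b₁ hne, (adim_of_nonempty a₂ b₂ hco').1] at hds
        have := (adim_of_nonempty a₂ b₂ hco').2
        omega
      rw [finrank_vrow_of_empty a₁ b₁ hne, finrank_vrow_of_empty a₂ b₂ hne₂, haR s]

lemma crow_rank_eq_of_Ibar_eq (hI : Ibar K₁ a₁ b₁ = Ibar K₂ a₂ b₂)
    (hsp₁ : Submodule.span K₁ (Set.range (crow a₁ b₁)) = ⊤)
    (hsp₂ : Submodule.span K₂ (Set.range (crow a₂ b₂)) = ⊤)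
    (T : Finset (Fin (n + 1))) :
    Module.finrank K₁ (Submodule.span K₁ (crow a₁ b₁ '' ↑T))
      = Module.finrank K₂ (Submodule.span K₂ (crow a₂ b₂ '' ↑T)) := by
  have hind : ∀ U : Finset (Fin (n + 1)), U.card = l + 1 →
      (FIndep K₁ (crow a₁ b₁) U ↔ FIndep K₂ (crow a₂ b₂) U) := by
    intro U hU
    set t := U.orderEmbOfFin hU with htdef
    have ht : StrictMono ⇑t := t.strictMono
    have himg : Finset.image ⇑t Finset.univ = U := by
      apply Finset.coe_injective
      rw [Finset.coe_image, Finset.coe_univ, Set.image_univ, Finset.range_orderEmbOfFin]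
    have hIb : (⇑t ∈ Ibar K₁ a₁ b₁) ↔ (⇑t ∈ Ibar K₂ a₂ b₂) := by rw [hI]
    rw [mem_Ibar_iff a₁ b₁ ht, mem_Ibar_iff a₂ b₂ ht] at hIb
    have h1 := strictMono_indep_iff a₁ b₁ ⇑t
    have h2 := strictMono_indep_iff a₂ b₂ ⇑t
    rw [himg] at h1 h2
    rw [findep_card_iff a₁ b₁ hU, findep_card_iff a₂ b₂ hU, ← h1, ← h2]
    exact not_iff_not.mp hIb
  have hD₁ : Module.finrank K₁ (Fin (l + 1) → K₁) = l + 1 := Module.finrank_fin_fun K₁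
  have hD₂ : Module.finrank K₂ (Fin (l + 1) → K₂) = l + 1 := Module.finrank_fin_fun K₂
  exact le_antisymm
    (rank_le_of_indep_imp (crow a₁ b₁) (crow a₂ b₂) hD₁ hD₂ hsp₁
      (fun U hc h => (hind U hc).mp h) T)
    (rank_le_of_indep_imp (crow a₂ b₂) (crow a₁ b₁) hD₂ hD₁ hsp₂
      (fun U hc h => (hind U hc).mpr h) T)

lemma adim_eq_of_crow_rank_eq
    (hρ : ∀ T : Finset (Fin (n + 1)),
      Module.finrank K₁ (Submodule.span K₁ (crow a₁ b₁ '' ↑T))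
        = Module.finrank K₂ (Submodule.span K₂ (crow a₂ b₂ '' ↑T)))
    (s : Finset (Fin n)) :
    adim K₁ (interSet a₁ b₁ s) = adim K₂ (interSet a₂ b₂ s) := by
  have haR : Module.finrank K₁ (Submodule.span K₁ (a₁ '' ↑s))
      = Module.finrank K₂ (Submodule.span K₂ (a₂ '' ↑s)) := by
    have h1 := hρ (insert (Fin.last n) (s.image Fin.castSucc))
    rw [crow_image_insert_last a₁ b₁ s, crow_image_insert_last a₂ b₂ s,
      finrank_insert_erow, finrank_insert_erow] at h1
    omega
  have hvr := hρ (s.image Fin.castSucc)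
  rw [crow_image_cs a₁ b₁ s, crow_image_cs a₂ b₂ s] at hvr
  by_cases hne : (interSet a₁ b₁ s).Nonempty
  · have hne₂ : (interSet a₂ b₂ s).Nonempty := by
      by_contra hco
      rw [Set.not_nonempty_iff_eq_empty] at hco
      rw [finrank_vrow_of_nonempty a₁ b₁ hne, finrank_vrow_of_empty a₂ b₂ hco, haR] at hvr
      omega
    rw [(adim_of_nonempty a₁ b₁ hne).1, (adim_of_nonempty a₂ b₂ hne₂).1, haR]
  · rw [Set.not_nonempty_iff_eq_empty] at hne
    have hne₂ : interSet a₂ b₂ s = ∅ := by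
      by_contra hco
      have hco' : (interSet a₂ b₂ s).Nonempty := Set.nonempty_iff_ne_empty.mpr hco
      rw [finrank_vrow_of_empty a₁ b₁ hne, finrank_vrow_of_nonempty a₂ b₂ hco', haR] at hvr
      omega
    rw [adim_of_empty a₁ b₁ hne, adim_of_empty a₂ b₂ hne₂]

end TwoFields

end Stmt2Aux

/-- Theorem 3.3: for essential affine arrangements, `𝓘(bar 𝒜)` determines
the intersection lattice `L(𝒜)` and vice versa; i.e. two essential arrangements (over possibly
different fields) have the same `𝓘(bar ·)` if and only if they are combinatorially equivalent
(which is exactly the data of `L(·)` with its labelling). -/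
theorem stmt2 {K₁ K₂ : Type*} [Field K₁] [Field K₂] {l n : ℕ}
    (a₁ : Fin n → Fin l → K₁) (b₁ : Fin n → K₁)
    (a₂ : Fin n → Fin l → K₂) (b₂ : Fin n → K₂)
    (ha₁ : ∀ i, a₁ i ≠ 0) (ha₂ : ∀ i, a₂ i ≠ 0)
    (hess₁ : ∃ t : Fin l → Fin n, StrictMono t ∧
        ∃ x : Fin l → K₁, (⋂ j, hypSet K₁ (a₁ (t j)) (b₁ (t j))) = {x})
    (hess₂ : ∃ t : Fin l → Fin n, StrictMono t ∧
        ∃ x : Fin l → K₂, (⋂ j, hypSet K₂ (a₂ (t j)) (b₂ (t j))) = {x}) :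
    Ibar K₁ a₁ b₁ = Ibar K₂ a₂ b₂ ↔ CombEquiv K₁ K₂ a₁ b₁ a₂ b₂ := by
  open Stmt2Aux in
  constructor
  · intro hI
    have hsp₁ := Stmt2Aux.span_crow_top a₁ b₁ hess₁
    have hsp₂ := Stmt2Aux.span_crow_top a₂ b₂ hess₂
    have hρ := Stmt2Aux.crow_rank_eq_of_Ibar_eq a₁ b₁ a₂ b₂ hI hsp₁ hsp₂
    intro k t ht
    rw [Stmt2Aux.tuple_inter a₁ b₁ t, Stmt2Aux.tuple_inter a₂ b₂ t]
    exact Stmt2Aux.adim_eq_of_crow_rank_eq a₁ b₁ a₂ b₂ hρ _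
  · intro hce
    have hd : ∀ s : Finset (Fin n),
        adim K₁ (Stmt2Aux.interSet a₁ b₁ s) = adim K₂ (Stmt2Aux.interSet a₂ b₂ s) := by
      intro s
      have ht := (s.orderEmbOfFin rfl).strictMono
      have hmain := hce s.card (⇑(s.orderEmbOfFin rfl)) ht
      rw [Stmt2Aux.tuple_inter a₁ b₁, Stmt2Aux.tuple_inter a₂ b₂] at hmain
      have himg : Finset.image (⇑(s.orderEmbOfFin rfl)) Finset.univ = s := by
        apply Finset.coe_injective
        rw [Finset.coe_image, Finset.coe_univ, Set.image_univ, Finset.range_orderEmbOfFin]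
      rwa [himg] at hmain
    have hρ := Stmt2Aux.crow_rank_eq_of_adim_eq a₁ b₁ a₂ b₂ hd
    ext t
    by_cases ht : StrictMono t
    · rw [Stmt2Aux.mem_Ibar_iff a₁ b₁ ht, Stmt2Aux.mem_Ibar_iff a₂ b₂ ht,
        Stmt2Aux.strictMono_indep_iff a₁ b₁ t, Stmt2Aux.strictMono_indep_iff a₂ b₂ t,
        hρ]
    · simp only [Ibar, Set.mem_setOf_eq]
      exact iff_of_false (fun h => ht h.1) (fun h => ht h.1)
end

section
/- Let A be a central and essential arrangement in Q^l (defined over Z) and p a good prime for A. Then I(bar(A)) = I(bar(A_p)) if and only if 𝔉(A) = 𝔉(A_p), where 𝔉(B) denotes the set of increasing l-tuples of indices whose corresponding hyperplanes of B intersect in dimension 0. -/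
open MvPolynomial
open scoped Classical

/-- `𝔉(𝒜)`: increasing `l`-tuples of indices whose hyperplanes intersect in dimension `0`. -/
noncomputable def Frak (K : Type*) [CommRing K] {l n : ℕ} (a : Fin n → Fin l → K) :
    Set (Fin l → Fin n) :=
  {t | StrictMono t ∧ adim K (⋂ j, hypSet K (a (t j)) 0) = 0}

/-- The linear form `∑ aₖ xₖ` as a polynomial in `ℤ[x₁,…,x_l]`. -/
noncomputable def intForm {l : ℕ} (a : Fin l → ℤ) : MvPolynomial (Fin l) ℤ :=
  ∑ k, C (a k) * X k

/-- `p` is a good prime for the central arrangement with integral forms `a`: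
the reduction mod `p` of `Q(𝒜) = ∏ αᵢ` is a reduced (squarefree) polynomial. -/
noncomputable def GoodPrime {l n : ℕ} (a : Fin n → Fin l → ℤ) (p : ℕ) : Prop :=
  p.Prime ∧ Squarefree (MvPolynomial.map (Int.castRingHom (ZMod p)) (∏ i, intForm (a i)))

/-- No prime number divides (all the coefficients of) any of the forms `αᵢ`. -/
def Primitive {l n : ℕ} (a : Fin n → Fin l → ℤ) : Prop :=
  ∀ (i : Fin n) (q : ℕ), q.Prime → ∃ k, ¬ (q : ℤ) ∣ a i k


section Aux
variable {K : Type*} [Field K] {l n : ℕ}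

/-- linear dependence condition for the forms indexed by `t`. -/
def Dep (K : Type*) [CommRing K] {l n : ℕ} (a : Fin n → Fin l → K) (t : Fin l → Fin n) : Prop :=
  ∃ w : Fin l → K, w ≠ 0 ∧ ∀ j, ∑ k, a (t j) k * w k = 0

/-- extend an `l`-tuple in `[n]` to an `(l+1)`-tuple in `[n+1]` by appending `n`. -/
def extTup {l n : ℕ} (t' : Fin l → Fin n) : Fin (l + 1) → Fin (n + 1) :=
  Fin.snoc (fun j => (t' j).castSucc) (Fin.last n)

lemma extTup_sm {t' : Fin l → Fin n} (h : StrictMono t') : StrictMono (extTup t') := by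
  intro x y hxy
  induction y using Fin.lastCases with
  | last =>
    obtain ⟨x', rfl⟩ := Fin.exists_castSucc_eq.mpr (Fin.ne_last_of_lt hxy)
    simp only [extTup, Fin.snoc_castSucc, Fin.snoc_last]
    exact Fin.castSucc_lt_last _
  | cast y' =>
    obtain ⟨x', rfl⟩ := Fin.exists_castSucc_eq.mpr (Fin.ne_last_of_lt hxy)
    simp only [extTup, Fin.snoc_castSucc]
    exact Fin.castSucc_lt_castSucc_iff.mpr (h (Fin.castSucc_lt_castSucc_iff.mp hxy))

lemma L1 {a : Fin n → Fin l → K} {t' : Fin l → Fin n} (h : StrictMono t') :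
    extTup t' ∈ Ibar K a 0 ↔ Dep K a t' := by
  constructor
  · rintro ⟨-, v, hv, hall⟩
    have hlast : v (Fin.last l) = 0 := by
      have := hall (Fin.last l)
      simpa [extTup, coneForm, Fin.snoc_last] using this
    refine ⟨fun k => v k.castSucc, ?_, ?_⟩
    · intro hw
      apply hv
      funext j
      induction j using Fin.lastCases with
      | last => exact hlast
      | cast j' => exact congrFun hw j'
    · intro j
      have := hall j.castSucc
      have hlt : ((t' j).castSucc : ℕ) < n := (t' j).isLt
      simp only [extTup, Fin.snoc_castSucc, coneForm, dif_pos hlt, Pi.zero_apply, zero_mul,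
        sub_zero] at this
      convert this using 2
      rfl
  · rintro ⟨w, hw, hsum⟩
    refine ⟨extTup_sm h, Fin.snoc w 0, ?_, ?_⟩
    · intro hv
      apply hw
      funext k
      have := congrFun hv k.castSucc
      simpa [Fin.snoc_castSucc] using this
    · intro j
      induction j using Fin.lastCases with
      | last => simp [extTup, coneForm, Fin.snoc_last]
      | cast j' =>
        have hlt : ((t' j').castSucc : ℕ) < n := (t' j').isLt
        simp only [extTup, Fin.snoc_castSucc, coneForm, dif_pos hlt, Pi.zero_apply, zero_mul,
          sub_zero]
        convert hsum j' using 2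
        rfl

lemma L2 {a : Fin n → Fin l → K} {t : Fin (l + 1) → Fin (n + 1)} (h : StrictMono t)
    (hne : t (Fin.last l) ≠ Fin.last n) : t ∈ Ibar K a 0 := by
  refine ⟨h, Fin.snoc 0 1, ?_, ?_⟩
  · intro hv
    have := congrFun hv (Fin.last l)
    simp [Fin.snoc_last] at this
  · intro j
    have hle : t j ≤ t (Fin.last l) := h.monotone (Fin.le_last j)
    have hlt : ((t j : ℕ)) < n := by
      have h1 : t (Fin.last l) < Fin.last n := lt_of_le_of_ne (Fin.le_last _) hne
      have : t j < Fin.last n := lt_of_le_of_lt hle h1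
      simpa [Fin.lt_iff_val_lt_val] using this
    simp [coneForm, dif_pos hlt, Fin.snoc_castSucc, Fin.snoc_last]

lemma L3 {t : Fin (l + 1) → Fin (n + 1)} (h : StrictMono t)
    (hl : t (Fin.last l) = Fin.last n) : ∃ t' : Fin l → Fin n, StrictMono t' ∧ t = extTup t' := by
  have hlt : ∀ j : Fin l, (t j.castSucc : ℕ) < n := by
    intro j
    have : t j.castSucc < t (Fin.last l) := h (Fin.castSucc_lt_last j)
    rw [hl] at this
    simpa [Fin.lt_iff_val_lt_val] using this
  refine ⟨fun j => ⟨t j.castSucc, hlt j⟩, ?_, ?_⟩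
  · intro x y hxy
    exact Fin.mk_lt_mk.mpr (Fin.lt_def.mp (h (Fin.castSucc_lt_castSucc_iff.mpr hxy)))
  · funext j
    induction j using Fin.lastCases with
    | last => simp [extTup, Fin.snoc_last, hl]
    | cast j' =>
      simp only [extTup, Fin.snoc_castSucc]
      ext
      simp

lemma L4 {a : Fin n → Fin l → K} {t' : Fin l → Fin n} (h : StrictMono t') :
    t' ∈ Frak K a ↔ ¬ Dep K a t' := by
  set M : Matrix (Fin l) (Fin l) K := fun j k => a (t' j) k with hM
  have hSet : (⋂ j, hypSet K (a (t' j)) 0) = ↑(LinearMap.ker M.mulVecLin) := by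
    ext x
    simp only [Set.mem_iInter, hypSet, Set.mem_setOf_eq, SetLike.mem_coe, LinearMap.mem_ker,
      Matrix.mulVecLin_apply, funext_iff, Matrix.mulVec, dotProduct, Pi.zero_apply, hM]
    exact Iff.rfl
  have hne : (⋂ j, hypSet K (a (t' j)) 0) ≠ ∅ := by
    rw [hSet]
    exact Set.Nonempty.ne_empty ⟨0, Submodule.zero_mem _⟩
  have hdir : (affineSpan K (⋂ j, hypSet K (a (t' j)) 0)).direction
      = LinearMap.ker M.mulVecLin := by
    rw [hSet]
    have : affineSpan K (↑(LinearMap.ker M.mulVecLin) : Set (Fin l → K))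
        = (LinearMap.ker M.mulVecLin).toAffineSubspace := by
      have hcoe : ((LinearMap.ker M.mulVecLin).toAffineSubspace : Set (Fin l → K))
          = ↑(LinearMap.ker M.mulVecLin) := rfl
      rw [← hcoe, AffineSubspace.affineSpan_coe]
    rw [this, Submodule.toAffineSubspace_direction]
  have hadim : adim K (⋂ j, hypSet K (a (t' j)) 0)
      = (Module.finrank K (LinearMap.ker M.mulVecLin) : ℤ) := by
    rw [adim, if_neg hne, hdir]
  constructor
  · rintro ⟨-, hd⟩ ⟨w, hw, hsum⟩
    rw [hadim] at hd
    have h0 : Module.finrank K (LinearMap.ker M.mulVecLin) = 0 := by exact_mod_cast hd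
    have hbot : LinearMap.ker M.mulVecLin = ⊥ := Submodule.finrank_eq_zero.mp h0
    have hwk : w ∈ LinearMap.ker M.mulVecLin := by
      rw [LinearMap.mem_ker]
      funext j
      exact hsum j
    rw [hbot, Submodule.mem_bot] at hwk
    exact hw hwk
  · intro hnd
    refine ⟨h, ?_⟩
    rw [hadim]
    have hbot : LinearMap.ker M.mulVecLin = ⊥ := by
      by_contra hne'
      obtain ⟨w, hwk, hw⟩ := Submodule.exists_mem_ne_zero_of_ne_bot hne'
      exact hnd ⟨w, hw, fun j => by
        have := congrFun (LinearMap.mem_ker.mp hwk) j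
        exact this⟩
    rw [hbot]
    simp

end Aux

theorem stmt4' {l n : ℕ} (a : Fin n → Fin l → ℤ) (p : ℕ) (hp : p.Prime) :
    Ibar ℚ (fun i k => (a i k : ℚ)) 0 = Ibar (ZMod p) (fun i k => (a i k : ZMod p)) 0 ↔
      Frak ℚ (fun i k => (a i k : ℚ)) = Frak (ZMod p) (fun i k => (a i k : ZMod p)) := by
  haveI : Fact p.Prime := ⟨hp⟩
  set aQ : Fin n → Fin l → ℚ := fun i k => (a i k : ℚ)
  set aP : Fin n → Fin l → ZMod p := fun i k => (a i k : ZMod p)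
  constructor
  · intro hI
    ext t'
    by_cases hsm : StrictMono t'
    · rw [L4 hsm, L4 hsm, ← L1 hsm, ← L1 hsm, hI]
    · constructor <;> rintro ⟨h, -⟩ <;> exact absurd h hsm
  · intro hF
    ext t
    by_cases hsm : StrictMono t
    · by_cases hl : t (Fin.last l) = Fin.last n
      · obtain ⟨t', hsm', rfl⟩ := L3 hsm hl
        have key : Dep ℚ aQ t' ↔ Dep (ZMod p) aP t' := by
          have h1 := L4 (a := aQ) hsm'
          have h2 := L4 (a := aP) hsm'
          rw [hF] at h1
          tauto
        rw [L1 hsm', L1 hsm']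
        exact key
      · constructor <;> intro _ <;> exact L2 hsm hl
    · constructor <;> rintro ⟨h, -⟩ <;> exact absurd h hsm

/-- Lemma 4.3: for a central essential arrangement `𝒜` over `ℚ` with integral
forms and a good prime `p`, `𝓘(bar 𝒜) = 𝓘(bar 𝒜_p)` iff `𝔉(𝒜) = 𝔉(𝒜_p)`. -/
theorem stmt4 {l n : ℕ} (a : Fin n → Fin l → ℤ) (hprim : Primitive a)
    (hess : (Frak ℚ (fun i k => (a i k : ℚ))).Nonempty)
    (p : ℕ) (hgood : GoodPrime a p) :
    Ibar ℚ (fun i k => (a i k : ℚ)) 0 = Ibar (ZMod p) (fun i k => (a i k : ZMod p)) 0 ↔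
      Frak ℚ (fun i k => (a i k : ℚ)) = Frak (ZMod p) (fun i k => (a i k : ZMod p)) :=
  stmt4' a p hgood.1
end

section
/- Let α_{i_1},...,α_{i_l} be integer linear forms defining hyperplanes of a central arrangement A in Q^l, and let p be a good prime for A that is σ-lucky for the ideal I_Z = ⟨α_{i_1},...,α_{i_l}⟩ in Z[x_1,...,x_l]. Then H_{i_1} ∩ ... ∩ H_{i_l} = {0} in Q^l if and only if (H_{i_1})_p ∩ ... ∩ (H_{i_l})_p = {0} in F_p^l. -/
open MvPolynomial
open scoped Classical

/-- The leading term (exponent) `LT_σ(f)` of `f` with respect to the term ordering `σ`. -/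
noncomputable def LTerm {l : ℕ} (σ : MonomialOrder (Fin l)) (f : MvPolynomial (Fin l) ℤ) :
    Fin l →₀ ℕ :=
  σ.toSyn.symm (f.support.sup fun d => σ.toSyn d)

/-- The leading coefficient `LC_σ(f)` of `f` with respect to `σ`. -/
noncomputable def LCoef {l : ℕ} (σ : MonomialOrder (Fin l)) (f : MvPolynomial (Fin l) ℤ) : ℤ :=
  f.coeff (LTerm σ f)

/-- The leading monomial `LM_σ(f) = LC_σ(f)·LT_σ(f)` of `f`, as a polynomial. -/
noncomputable def LMon {l : ℕ} (σ : MonomialOrder (Fin l)) (f : MvPolynomial (Fin l) ℤ) :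
    MvPolynomial (Fin l) ℤ :=
  monomial (LTerm σ f) (LCoef σ f)

/-- `G` is a minimal strong `σ`-Gröbner basis of the ideal `I ⊆ ℤ[x₁,…,x_l]`. -/
def MinStrongGB {l : ℕ} (σ : MonomialOrder (Fin l)) (G : Finset (MvPolynomial (Fin l) ℤ))
    (I : Ideal (MvPolynomial (Fin l) ℤ)) : Prop :=
  (∀ g ∈ G, g ≠ 0) ∧ Ideal.span (G : Set (MvPolynomial (Fin l) ℤ)) = I ∧
  (∀ f ∈ I, f ≠ 0 → ∃ g ∈ G, LMon σ g ∣ LMon σ f) ∧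
  (∀ g ∈ G, ∀ g' ∈ G, g ≠ g' → ¬ LMon σ g ∣ LMon σ g')

/-- `p` is `σ`-lucky for `I`: it divides no leading coefficient of (any) minimal strong
`σ`-Gröbner basis of `I`. -/
def SigmaLucky {l : ℕ} (σ : MonomialOrder (Fin l)) (p : ℕ)
    (I : Ideal (MvPolynomial (Fin l) ℤ)) : Prop :=
  ∀ G : Finset (MvPolynomial (Fin l) ℤ), MinStrongGB σ G I → ∀ g ∈ G, ¬ (p : ℤ) ∣ LCoef σ g

section Stmt7AuxSection
namespace Stmt7Aux

variable {l : ℕ} (σ : MonomialOrder (Fin l))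

lemma toSyn_LTerm (f : MvPolynomial (Fin l) ℤ) :
    σ.toSyn (LTerm σ f) = f.support.sup fun d => σ.toSyn d := by
  simp [LTerm]

lemma le_toSyn_LTerm {f : MvPolynomial (Fin l) ℤ} {s : Fin l →₀ ℕ} (hs : s ∈ f.support) :
    σ.toSyn s ≤ σ.toSyn (LTerm σ f) := by
  rw [toSyn_LTerm]; exact Finset.le_sup hs

lemma LTerm_mem_support {f : MvPolynomial (Fin l) ℤ} (hf : f ≠ 0) : LTerm σ f ∈ f.support := by
  obtain ⟨b, hb, hbe⟩ :=
    Finset.exists_mem_eq_sup f.support (support_nonempty.mpr hf) (fun d => σ.toSyn d)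
  have : LTerm σ f = b := by
    rw [LTerm, hbe]; exact σ.toSyn.symm_apply_apply b
  rwa [this]

lemma LCoef_ne_zero {f : MvPolynomial (Fin l) ℤ} (hf : f ≠ 0) : LCoef σ f ≠ 0 :=
  mem_support_iff.mp (LTerm_mem_support σ hf)

lemma LTerm_eq_of {f : MvPolynomial (Fin l) ℤ} {m : Fin l →₀ ℕ} (h1 : f.coeff m ≠ 0)
    (h2 : ∀ s ∈ f.support, σ.toSyn s ≤ σ.toSyn m) : LTerm σ f = m := by
  have : (f.support.sup fun d => σ.toSyn d) = σ.toSyn m :=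
    le_antisymm (Finset.sup_le h2) (Finset.le_sup (mem_support_iff.mpr h1))
  rw [LTerm, this]; exact σ.toSyn.symm_apply_apply m

/-- polynomials with support `σ`-bounded by `m`, as a `ℤ`-submodule. -/
noncomputable def bdd (m : Fin l →₀ ℕ) : Submodule ℤ (MvPolynomial (Fin l) ℤ) where
  carrier := {f | ∀ s ∈ f.support, σ.toSyn s ≤ σ.toSyn m}
  add_mem' {f g} hf hg := by
    intro s hs
    rcases Finset.mem_union.mp (support_add hs) with h | h
    exacts [hf s h, hg s h]
  zero_mem' := by simp
  smul_mem' c f hf := fun s hs => hf s (support_smul hs)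

lemma mem_bdd {m : Fin l →₀ ℕ} {f : MvPolynomial (Fin l) ℤ} :
    f ∈ bdd σ m ↔ ∀ s ∈ f.support, σ.toSyn s ≤ σ.toSyn m := Iff.rfl

lemma self_mem_bdd (f : MvPolynomial (Fin l) ℤ) : f ∈ bdd σ (LTerm σ f) :=
  fun _ hs => le_toSyn_LTerm σ hs

/-- the ideal of `ℤ` of leading coefficients in `I` at the monomial `m`. -/
noncomputable def DD (I : Ideal (MvPolynomial (Fin l) ℤ)) (m : Fin l →₀ ℕ) : Ideal ℤ :=
  Submodule.map (lcoeff ℤ m) (I.restrictScalars ℤ ⊓ bdd σ m)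

lemma mem_DD {I : Ideal (MvPolynomial (Fin l) ℤ)} {m : Fin l →₀ ℕ} {c : ℤ} :
    c ∈ DD σ I m ↔ ∃ f, (f ∈ I ∧ f ∈ bdd σ m) ∧ f.coeff m = c := by
  simp [DD, Submodule.mem_map, Submodule.mem_inf, lcoeff]

end Stmt7Aux

section DDmono
open MvPolynomial
namespace Stmt7Aux
variable {l : ℕ} (σ : MonomialOrder (Fin l))

lemma DD_mono (I : Ideal (MvPolynomial (Fin l) ℤ)) {m m' : Fin l →₀ ℕ} (h : m' ≤ m) :
    DD σ I m' ≤ DD σ I m := by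
  rintro c hc
  obtain ⟨f, ⟨hfI, hfb⟩, hfc⟩ := (mem_DD σ).mp hc
  refine (mem_DD σ).mpr ⟨monomial (m - m') 1 * f, ⟨I.mul_mem_left _ hfI, ?_⟩, ?_⟩
  · intro s hs
    have hcs : coeff s (monomial (m - m') 1 * f) ≠ 0 := mem_support_iff.mp hs
    rw [coeff_monomial_mul'] at hcs
    by_cases hle : m - m' ≤ s
    · have h2 : s - (m - m') ∈ f.support := by
        rw [mem_support_iff]
        intro h0
        rw [if_pos hle, h0, mul_zero] at hcs
        exact hcs rfl
      calc σ.toSyn s = σ.toSyn (s - (m - m') + (m - m')) := by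
            rw [tsub_add_cancel_of_le hle]
        _ = σ.toSyn (s - (m - m')) + σ.toSyn (m - m') := by rw [map_add]
        _ ≤ σ.toSyn m' + σ.toSyn (m - m') := by
            exact add_le_add_left (hfb _ h2) _
        _ = σ.toSyn (m' + (m - m')) := by rw [map_add]
        _ = σ.toSyn m := by rw [add_tsub_cancel_of_le h]
    · rw [if_neg hle] at hcs; exact absurd rfl hcs
  · have h2 := coeff_monomial_mul m' (m - m') (1 : ℤ) f
    rw [tsub_add_cancel_of_le h] at h2
    rw [h2, one_mul, hfc]

def TT (I : Ideal (MvPolynomial (Fin l) ℤ)) : Set (Fin l →₀ ℕ) :=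
  {m | DD σ I m ≠ ⊥ ∧ ∀ m' ≤ m, m' ≠ m → DD σ I m' ≠ DD σ I m}

lemma TT_cover (I : Ideal (MvPolynomial (Fin l) ℤ)) :
    ∀ m, DD σ I m ≠ ⊥ → ∃ s ∈ TT σ I, s ≤ m ∧ DD σ I s = DD σ I m := by
  intro m
  induction m using WellFoundedLT.induction with
  | _ m IH =>
    intro hm
    by_cases hT : m ∈ TT σ I
    · exact ⟨m, hT, le_rfl, rfl⟩
    · have : ∃ m', m' ≤ m ∧ m' ≠ m ∧ DD σ I m' = DD σ I m := by
        by_contra hc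
        push_neg at hc
        exact hT ⟨hm, fun m' h1 h2 => hc m' h1 h2⟩
      obtain ⟨m', h1, h2, h3⟩ := this
      obtain ⟨s, hs, hle, heq⟩ := IH m' (lt_of_le_of_ne h1 h2) (h3 ▸ hm)
      exact ⟨s, hs, hle.trans h1, heq.trans h3⟩

lemma TT_finite (I : Ideal (MvPolynomial (Fin l) ℤ)) : (TT σ I).Finite := by
  by_contra hinf
  have hinf' : (TT σ I).Infinite := hinf
  let F := hinf'.natEmbedding
  let f : ℕ → (Fin l →₀ ℕ) := fun n => (F n : Fin l →₀ ℕ)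
  have hfinj : Function.Injective f := fun i j h => F.injective (Subtype.ext h)
  have hpwo : Set.IsPWO (Set.univ : Set (Fin l → ℕ)) := by
    have := Set.IsPWO.pi (fun _ : Fin l => (Set.isPWO_univ_iff.mpr inferInstance : (Set.univ : Set ℕ).IsPWO))
    rwa [Set.pi_univ] at this
  obtain ⟨g, hg⟩ := hpwo.exists_monotone_subseq (f := fun n => ⇑(f n)) (fun n => Set.mem_univ _)
  have hmono : ∀ i j : ℕ, i ≤ j → f (g i) ≤ f (g j) := by
    intro i j hij
    intro k
    exact hg hij k
  let chain : ℕ →o Ideal ℤ :=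
    ⟨fun i => DD σ I (f (g i)), fun i j hij => DD_mono σ I (hmono i j hij)⟩
  obtain ⟨N, hN⟩ := monotone_stabilizes_iff_noetherian.mpr inferInstance chain
  have hEq : DD σ I (f (g N)) = DD σ I (f (g (N + 1))) := hN (N + 1) (Nat.le_succ N)
  have hT : f (g (N + 1)) ∈ TT σ I := (F (g (N + 1))).2
  refine hT.2 (f (g N)) (hmono N (N + 1) (Nat.le_succ N)) ?_ hEq
  intro h
  exact Nat.succ_ne_self N (g.injective (hfinj h)).symm

end Stmt7Aux
end DDmono

section GB
open MvPolynomial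
namespace Stmt7Aux
variable {l : ℕ} (σ : MonomialOrder (Fin l))

theorem exists_minStrongGB (I : Ideal (MvPolynomial (Fin l) ℤ)) :
    ∃ G : Finset (MvPolynomial (Fin l) ℤ), MinStrongGB σ G I := by
  classical
  set d : (Fin l →₀ ℕ) → ℤ := fun m => Submodule.IsPrincipal.generator (DD σ I m) with hd
  have hdvd_iff : ∀ m c, c ∈ DD σ I m ↔ d m ∣ c := by
    intro m c
    rw [← Ideal.mem_span_singleton (α := ℤ)]
    rw [hd, Ideal.span_singleton_generator]
  have hwit : ∀ m, ∃ f, (f ∈ I ∧ f ∈ bdd σ m) ∧ f.coeff m = d m :=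
    fun m => (mem_DD σ).mp (Submodule.IsPrincipal.generator_mem _)
  set fb : (Fin l →₀ ℕ) → MvPolynomial (Fin l) ℤ := fun m => (hwit m).choose with hfbdef
  have hfbI : ∀ m, fb m ∈ I := fun m => (hwit m).choose_spec.1.1
  have hfbb : ∀ m, fb m ∈ bdd σ m := fun m => (hwit m).choose_spec.1.2
  have hfbc : ∀ m, (fb m).coeff m = d m := fun m => (hwit m).choose_spec.2
  have hdne : ∀ m ∈ TT σ I, d m ≠ 0 := by
    intro m hm h0
    apply hm.1
    rw [← Ideal.span_singleton_generator (DD σ I m)]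
    rw [Ideal.span_singleton_eq_bot]
    exact h0
  have hLT : ∀ m ∈ TT σ I, LTerm σ (fb m) = m := by
    intro m hm
    refine LTerm_eq_of σ ?_ (hfbb m)
    rw [hfbc]; exact hdne m hm
  have hLC : ∀ m ∈ TT σ I, LCoef σ (fb m) = d m := by
    intro m hm
    rw [LCoef, hLT m hm, hfbc]
  have hLM : ∀ m ∈ TT σ I, LMon σ (fb m) = monomial m (d m) := by
    intro m hm
    rw [LMon, hLT m hm, hLC m hm]
  have hfb0 : ∀ m ∈ TT σ I, fb m ≠ 0 := by
    intro m hm h0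
    exact hdne m hm (by rw [← hfbc m, h0, coeff_zero])
  set G : Finset (MvPolynomial (Fin l) ℤ) := ((TT_finite σ I).toFinset).image fb with hG
  have hmemG : ∀ g, g ∈ G ↔ ∃ s ∈ TT σ I, fb s = g := by
    intro g
    simp [hG, Finset.mem_image, Set.Finite.mem_toFinset]
  refine ⟨G, ?_, ?_, ?_, ?_⟩
  · -- nonzero
    intro g hg
    obtain ⟨s, hs, rfl⟩ := (hmemG g).mp hg
    exact hfb0 s hs
  · -- span
    apply le_antisymm
    · rw [Ideal.span_le]
      intro g hg
      obtain ⟨s, hs, rfl⟩ := (hmemG g).mp hg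
      exact hfbI s
    · intro f hf
      have key : ∀ b : σ.syn, ∀ f, f ∈ I → σ.toSyn (LTerm σ f) = b →
          f ∈ Ideal.span (G : Set (MvPolynomial (Fin l) ℤ)) := by
        intro b
        induction b using WellFoundedLT.induction with
        | _ b IH =>
          intro f hfI hfsyn
          by_cases hf0 : f = 0
          · simp [hf0]
          set m := LTerm σ f with hm
          have hc0 : LCoef σ f ≠ 0 := LCoef_ne_zero σ hf0
          have hcD : LCoef σ f ∈ DD σ I m := (mem_DD σ).mpr ⟨f, ⟨hfI, self_mem_bdd σ f⟩, rfl⟩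
          have hDne : DD σ I m ≠ ⊥ := by
            intro h
            rw [h, Submodule.mem_bot] at hcD
            exact hc0 hcD
          obtain ⟨s, hsT, hsm, hDeq⟩ := TT_cover σ I m hDne
          have hdvd : d s ∣ LCoef σ f := (hdvd_iff s _).mp (hDeq ▸ hcD)
          obtain ⟨q, hq⟩ := hdvd
          have hfbG : fb s ∈ G := (hmemG _).mpr ⟨s, hsT, rfl⟩
          set u := monomial (m - s) q * fb s with hu
          have huI : u ∈ I := I.mul_mem_left _ (hfbI s)
          have hub : u ∈ bdd σ m := by
            intro s' hs'
            have hcs : coeff s' u ≠ 0 := mem_support_iff.mp hs'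
            rw [hu, coeff_monomial_mul'] at hcs
            by_cases hle : m - s ≤ s'
            · have h2 : s' - (m - s) ∈ (fb s).support := by
                rw [mem_support_iff]
                intro h0
                rw [if_pos hle, h0, mul_zero] at hcs
                exact hcs rfl
              calc σ.toSyn s' = σ.toSyn (s' - (m - s)) + σ.toSyn (m - s) := by
                    rw [← map_add, tsub_add_cancel_of_le hle]
                _ ≤ σ.toSyn s + σ.toSyn (m - s) := add_le_add_left (hfbb s _ h2) _
                _ = σ.toSyn m := by rw [← map_add, add_tsub_cancel_of_le hsm]
            · rw [if_neg hle] at hcs; exact absurd rfl hcs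
          have hcu : coeff m u = LCoef σ f := by
            rw [hu, coeff_monomial_mul', if_pos tsub_le_self, tsub_tsub_cancel_of_le hsm,
              hfbc, hq, mul_comm]
          have hmem : u ∈ Ideal.span (G : Set (MvPolynomial (Fin l) ℤ)) :=
            Ideal.mul_mem_left _ _ (Ideal.subset_span hfbG)
          by_cases hfu : f - u = 0
          · rw [sub_eq_zero] at hfu
            rw [hfu]; exact hmem
          · have hbsub : f - u ∈ bdd σ m := sub_mem (self_mem_bdd σ f) hub
            have hlt1 : σ.toSyn (LTerm σ (f - u)) ≤ σ.toSyn m :=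
              hbsub _ (LTerm_mem_support σ hfu)
            have hne : LTerm σ (f - u) ≠ m := by
              intro he
              have hz : coeff m (f - u) = 0 := by
                rw [coeff_sub, hcu]
                show LCoef σ f - LCoef σ f = 0
                ring
              exact LCoef_ne_zero σ hfu (by rw [LCoef, he, hz])
            have hlt : σ.toSyn (LTerm σ (f - u)) < b := by
              rw [← hfsyn]
              exact lt_of_le_of_ne hlt1 (fun hcon => hne (σ.toSyn.injective hcon))
            have hsub := IH _ hlt (f - u) (I.sub_mem hfI huI) rfl
            have : f = (f - u) + u := by ring
            rw [this]
            exact Ideal.add_mem _ hsub hmem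
      exact key _ f hf rfl
  · -- strong
    intro f hfI hf0
    set m := LTerm σ f with hm
    have hc0 : LCoef σ f ≠ 0 := LCoef_ne_zero σ hf0
    have hcD : LCoef σ f ∈ DD σ I m := (mem_DD σ).mpr ⟨f, ⟨hfI, self_mem_bdd σ f⟩, rfl⟩
    have hDne : DD σ I m ≠ ⊥ := by
      intro h
      rw [h, Submodule.mem_bot] at hcD
      exact hc0 hcD
    obtain ⟨s, hsT, hsm, hDeq⟩ := TT_cover σ I m hDne
    refine ⟨fb s, (hmemG _).mpr ⟨s, hsT, rfl⟩, ?_⟩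
    rw [hLM s hsT, LMon]
    exact monomial_dvd_monomial.mpr ⟨Or.inr hsm, (hdvd_iff s _).mp (hDeq ▸ hcD)⟩
  · -- minimal
    intro g hg g' hg' hne hdvd
    obtain ⟨s, hs, rfl⟩ := (hmemG g).mp hg
    obtain ⟨s', hs', rfl⟩ := (hmemG g').mp hg'
    have hss' : s ≠ s' := fun h => hne (by rw [h])
    rw [hLM s hs, hLM s' hs'] at hdvd
    obtain ⟨h1, h2⟩ := monomial_dvd_monomial.mp hdvd
    have hle : s ≤ s' := h1.resolve_left (hdne s' hs')
    have e1 : DD σ I s ≤ DD σ I s' := DD_mono σ I hle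
    have e2 : DD σ I s' ≤ DD σ I s := by
      intro c hc
      exact (hdvd_iff s c).mpr (dvd_trans h2 ((hdvd_iff s' c).mp hc))
    exact hs'.2 s hle hss' (le_antisymm e1 e2)

end Stmt7Aux
end GB

section Main
open MvPolynomial
namespace Stmt7Aux
variable {l : ℕ}

lemma intForm_eq_sum_monomial (w : Fin l → ℤ) :
    intForm w = ∑ k, monomial (Finsupp.single k 1) (w k) := by
  refine Finset.sum_congr rfl fun k _ => ?_
  rw [C_apply, X, monomial_mul, zero_add, mul_one]

lemma intForm_combo (z : Fin l → ℤ) (w : Fin l → Fin l → ℤ) :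
    (∑ j, C (z j) * intForm (w j)) = intForm (fun u => ∑ j, z j * w j u) := by
  simp only [intForm, Finset.mul_sum]
  rw [Finset.sum_comm]
  refine Finset.sum_congr rfl fun k _ => ?_
  rw [map_sum (C : ℤ →+* MvPolynomial (Fin l) ℤ), Finset.sum_mul]
  refine Finset.sum_congr rfl fun j _ => ?_
  rw [← mul_assoc, ← C_mul]

lemma intForm_ite (v : Fin l) (c : ℤ) :
    intForm (fun u => if v = u then c else 0) = monomial (Finsupp.single v 1) c := by
  rw [intForm_eq_sum_monomial]
  rw [Finset.sum_eq_single v]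
  · rw [if_pos rfl]
  · intro k _ hk
    rw [if_neg (fun h => hk h.symm), monomial_zero]
  · intro h
    exact absurd (Finset.mem_univ v) h

lemma not_single_le_single {k u : Fin l} (h : k ≠ u) :
    ¬ Finsupp.single k 1 ≤ Finsupp.single u (1 : ℕ) := by
  intro hle
  have := Finsupp.le_def.mp hle k
  rw [Finsupp.single_eq_same, Finsupp.single_eq_of_ne' (fun hh => h hh.symm)] at this
  omega

lemma coeff_single_mul_intForm (c : MvPolynomial (Fin l) ℤ) (w : Fin l → ℤ) (u : Fin l) :
    coeff (Finsupp.single u 1) (c * intForm w) = coeff 0 c * w u := by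
  rw [intForm_eq_sum_monomial, Finset.mul_sum, coeff_sum]
  rw [Finset.sum_eq_single u]
  · rw [coeff_mul_monomial', if_pos le_rfl, tsub_self]
  · intro k _ hk
    rw [coeff_mul_monomial', if_neg (not_single_le_single hk)]
  · intro h
    exact absurd (Finset.mem_univ u) h

lemma le_single_cases {s : Fin l →₀ ℕ} {v : Fin l} (h : s ≤ Finsupp.single v 1) :
    s = 0 ∨ s = Finsupp.single v 1 := by
  have hco := Finsupp.le_def.mp h
  by_cases hv : s v = 0
  · left
    ext u
    simp only [Finsupp.coe_zero, Pi.zero_apply]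
    by_cases hu : u = v
    · subst hu; exact hv
    · have := hco u
      rw [Finsupp.single_eq_of_ne' (fun hh => hu hh.symm)] at this
      omega
  · right
    ext u
    by_cases hu : u = v
    · subst hu
      have := hco u
      rw [Finsupp.single_eq_same] at this ⊢
      omega
    · have := hco u
      rw [Finsupp.single_eq_of_ne' (fun hh => hu hh.symm)] at this ⊢
      omega

end Stmt7Aux
end Main

end Stmt7AuxSection

/-- Proposition 4.12: let `α_{i₁},…,α_{i_l}` be `l` of the integral forms of
a central arrangement `𝒜` over `ℚ`, and `p` a good prime for `𝒜` which is `σ`-lucky for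
`I_ℤ = ⟨α_{i₁},…,α_{i_l}⟩_ℤ`. Then the hyperplanes meet only at `0` over `ℚ` iff their
reductions meet only at `0` over `𝔽_p`. -/

theorem stmt7 {l n : ℕ} (a : Fin n → Fin l → ℤ) (hprim : Primitive a)
    (t : Fin l → Fin n) (ht : StrictMono t)
    (σ : MonomialOrder (Fin l)) (p : ℕ) (hgood : GoodPrime a p)
    (hlucky : SigmaLucky σ p (Ideal.span (Set.range fun j => intForm (a (t j))))) :
    (⋂ j, hypSet ℚ (fun k => (a (t j) k : ℚ)) 0) = {0} ↔
      (⋂ j, hypSet (ZMod p) (fun k => (a (t j) k : ZMod p)) 0) = {0} := by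
  classical
  have hp : p.Prime := hgood.1
  haveI : Fact p.Prime := ⟨hp⟩
  set I : Ideal (MvPolynomial (Fin l) ℤ) :=
    Ideal.span (Set.range fun j => intForm (a (t j))) with hI
  constructor
  · -- hard direction
    intro hQ
    -- the Gröbner basis and luckiness
    obtain ⟨G, hGB⟩ := Stmt7Aux.exists_minStrongGB σ I
    have hl : ∀ g ∈ G, ¬ (p : ℤ) ∣ LCoef σ g := hlucky G hGB
    -- evaluation at 0 kills I
    have hI0 : ∀ f ∈ I, MvPolynomial.eval (fun _ => (0 : ℤ)) f = 0 := by
      intro f hf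
      have hle : I ≤ RingHom.ker (MvPolynomial.eval (fun _ => (0 : ℤ))) := by
        rw [hI, Ideal.span_le]
        rintro _ ⟨j, rfl⟩
        simp [RingHom.mem_ker, intForm]
      exact hle hf
    -- the matrix and its determinant
    set A : Matrix (Fin l) (Fin l) ℤ := Matrix.of (fun j k => a (t j) k) with hA
    have hdet : A.det ≠ 0 := by
      intro h0
      obtain ⟨w, hw0, hww⟩ := Matrix.exists_mulVec_eq_zero_iff.mpr h0
      have hmem : (fun k => (w k : ℚ)) ∈ ⋂ j, hypSet ℚ (fun k => (a (t j) k : ℚ)) 0 := by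
        refine Set.mem_iInter.mpr fun j => ?_
        show ∑ k, (a (t j) k : ℚ) * (w k : ℚ) = 0
        have h2 : ∑ k, a (t j) k * w k = 0 := by
          have h3 := congrFun hww j
          simpa [Matrix.mulVec, dotProduct, hA] using h3
        exact_mod_cast congrArg (fun r : ℤ => (r : ℚ)) h2
      rw [hQ] at hmem
      apply hw0
      funext k
      have h6 := congrFun hmem k
      simp only [Pi.zero_apply] at h6
      exact_mod_cast h6
    -- the monomials det·x_v lie in I
    have hdetI : ∀ v : Fin l,
        (monomial (Finsupp.single v 1) A.det : MvPolynomial (Fin l) ℤ) ∈ I := by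
      intro v
      have hcomb := Stmt7Aux.intForm_combo (fun j => A.adjugate v j) (fun j => a (t j))
      have hval : (fun u => ∑ j, A.adjugate v j * a (t j) u)
          = fun u => if v = u then A.det else 0 := by
        funext u
        have h4 := congrFun (congrFun (Matrix.adjugate_mul A) v) u
        simpa [Matrix.mul_apply, Matrix.one_apply, hA, mul_ite, mul_one, mul_zero] using h4
      rw [hval, Stmt7Aux.intForm_ite] at hcomb
      rw [← hcomb]
      exact Ideal.sum_mem _ fun j _ =>
        I.mul_mem_left _ (Ideal.subset_span (Set.mem_range_self j))
    -- key: triangular vectors with unit pivots mod p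
    have key : ∀ v : Fin l, ∃ z : Fin l → ℤ,
        (¬ (p : ℤ) ∣ ∑ j, z j * a (t j) v) ∧
        ∀ u, (∑ j, z j * a (t j) u) ≠ 0 →
          σ.toSyn (Finsupp.single u 1) ≤ σ.toSyn (Finsupp.single v 1) := by
      intro v
      set F := (monomial (Finsupp.single v 1) A.det : MvPolynomial (Fin l) ℤ) with hF
      have hF0 : F ≠ 0 := by
        rw [hF, Ne, monomial_eq_zero]
        exact hdet
      have hFsupp : F.support = {Finsupp.single v 1} := by
        rw [hF, support_monomial, if_neg hdet]
      have hFb : F ∈ Stmt7Aux.bdd σ (Finsupp.single v 1) := by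
        intro s hs
        rw [hFsupp, Finset.mem_singleton] at hs
        rw [hs]
      have hFc : coeff (Finsupp.single v 1) F = A.det := by
        rw [hF, coeff_monomial, if_pos rfl]
      have hLTF : LTerm σ F = Finsupp.single v 1 :=
        Stmt7Aux.LTerm_eq_of σ (by rw [hFc]; exact hdet) hFb
      obtain ⟨g, hgG, hgdvd⟩ := hGB.2.2.1 F (hdetI v) hF0
      have hLMF : LMon σ F = monomial (Finsupp.single v 1) A.det := by
        rw [LMon, hLTF, LCoef, hLTF, hFc]
      rw [hLMF, LMon] at hgdvd
      obtain ⟨h1, h2⟩ := monomial_dvd_monomial.mp hgdvd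
      have hle : LTerm σ g ≤ Finsupp.single v 1 := h1.resolve_left hdet
      have hg0 : g ≠ 0 := hGB.1 g hgG
      have hgI : g ∈ I := by rw [← hGB.2.1]; exact Ideal.subset_span hgG
      have hLTg : LTerm σ g = Finsupp.single v 1 := by
        rcases Stmt7Aux.le_single_cases hle with h0 | h
        · exfalso
          have hsupp : ∀ s ∈ g.support, s = 0 := by
            intro s hs
            have hle2 : σ.toSyn s ≤ σ.toSyn (LTerm σ g) := Stmt7Aux.le_toSyn_LTerm σ hs
            rw [h0, map_zero] at hle2
            have h5 : σ.toSyn s = 0 := le_antisymm hle2 bot_le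
            exact σ.toSyn.injective (by rw [h5, map_zero])
          have hgC : g = C (coeff 0 g) := by
            ext m
            rw [coeff_C]
            by_cases hm : 0 = m
            · rw [if_pos hm, ← hm]
            · rw [if_neg hm]
              have hm2 : m ∉ g.support := fun hc => hm (hsupp m hc).symm
              exact notMem_support_iff.mp hm2
          have hev := hI0 g hgI
          rw [hgC] at hev
          simp only [eval_C] at hev
          exact Stmt7Aux.LCoef_ne_zero σ hg0 (by rw [LCoef, h0, hev])
        · exact h
      have hdD : LCoef σ g ∈ Stmt7Aux.DD σ I (Finsupp.single v 1) :=
        (Stmt7Aux.mem_DD σ).mpr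
          ⟨g, ⟨hgI, by rw [← hLTg]; exact Stmt7Aux.self_mem_bdd σ g⟩, by rw [← hLTg]; rfl⟩
      obtain ⟨f, ⟨hfI, hfb⟩, hfc⟩ := (Stmt7Aux.mem_DD σ).mp hdD
      obtain ⟨c, hcomb⟩ := Ideal.mem_span_range_iff_exists_fun.mp hfI
      have hcoeffs : ∀ u, (∑ j, coeff 0 (c j) * a (t j) u) = coeff (Finsupp.single u 1) f := by
        intro u
        rw [← hcomb, coeff_sum]
        exact Finset.sum_congr rfl fun j _ =>
          (Stmt7Aux.coeff_single_mul_intForm (c j) (a (t j)) u).symm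
      refine ⟨fun j => coeff 0 (c j), ?_, ?_⟩
      · rw [hcoeffs v, hfc]
        exact hl g hgG
      · intro u hu
        rw [hcoeffs u] at hu
        exact hfb _ (mem_support_iff.mpr hu)
    -- conclude by triangular induction
    refine Set.eq_singleton_iff_unique_mem.mpr ⟨?_, ?_⟩
    · refine Set.mem_iInter.mpr fun j => ?_
      show ∑ k, (a (t j) k : ZMod p) * (0 : Fin l → ZMod p) k = 0
      simp
    · intro x hx
      have hxj : ∀ j, ∑ k, (a (t j) k : ZMod p) * x k = 0 := fun j => Set.mem_iInter.mp hx j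
      have hwf : WellFounded
          (fun u v : Fin l => σ.toSyn (Finsupp.single u 1) < σ.toSyn (Finsupp.single v 1)) :=
        InvImage.wf (fun u => σ.toSyn (Finsupp.single u 1)) wellFounded_lt
      have main : ∀ v : Fin l, x v = 0 := by
        refine fun v => hwf.induction (C := fun v => x v = 0) v ?_
        intro v IH
        obtain ⟨z, hz1, hz2⟩ := key v
        have hsum : ∑ u, ((∑ j, z j * a (t j) u : ℤ) : ZMod p) * x u = 0 := by
          have hterm : ∀ u, ((∑ j, z j * a (t j) u : ℤ) : ZMod p) * x u
              = ∑ j, (z j : ZMod p) * ((a (t j) u : ZMod p) * x u) := by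
            intro u
            push_cast
            rw [Finset.sum_mul]
            exact Finset.sum_congr rfl fun j _ => by ring
          rw [Finset.sum_congr rfl fun u _ => hterm u, Finset.sum_comm]
          simp only [← Finset.mul_sum]
          simp only [hxj, mul_zero, Finset.sum_const_zero]
        have herase : ∀ u ∈ Finset.univ.erase v,
            ((∑ j, z j * a (t j) u : ℤ) : ZMod p) * x u = 0 := by
          intro u hu
          have huv : u ≠ v := Finset.ne_of_mem_erase hu
          by_cases h0 : (∑ j, z j * a (t j) u) = 0
          · rw [h0]; simp
          · have hlt : σ.toSyn (Finsupp.single u 1) < σ.toSyn (Finsupp.single v 1) :=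
              lt_of_le_of_ne (hz2 u h0) (fun hc => huv
                ((Finsupp.single_left_inj one_ne_zero).mp (σ.toSyn.injective hc)))
            rw [IH u hlt, mul_zero]
        have hv := Finset.add_sum_erase Finset.univ
          (fun u => ((∑ j, z j * a (t j) u : ℤ) : ZMod p) * x u) (Finset.mem_univ v)
        rw [Finset.sum_eq_zero herase, add_zero, hsum] at hv
        have hpv : ((∑ j, z j * a (t j) v : ℤ) : ZMod p) ≠ 0 := fun hc =>
          hz1 ((ZMod.intCast_zmod_eq_zero_iff_dvd _ p).mp hc)
        exact (mul_eq_zero.mp hv).resolve_left hpv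
      funext v
      exact main v
  · -- easy direction
    intro hFp
    refine Set.eq_singleton_iff_unique_mem.mpr ⟨?_, ?_⟩
    · refine Set.mem_iInter.mpr fun j => ?_
      show ∑ k, (a (t j) k : ℚ) * (0 : Fin l → ℚ) k = 0
      simp
    · intro x hx
      by_contra hx0
      obtain ⟨k0, hk0⟩ := Function.ne_iff.mp hx0
      have hxj : ∀ j, ∑ k, (a (t j) k : ℚ) * x k = 0 := fun j => Set.mem_iInter.mp hx j
      set D : ℤ := ∏ k, ((x k).den : ℤ) with hD
      have hD0 : (D : ℚ) ≠ 0 := by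
        rw [hD]
        push_cast
        refine Finset.prod_ne_zero_iff.mpr fun k _ => ?_
        exact_mod_cast (x k).den_nz  -- den ≠ 0 as ℚ-cast
      set z : Fin l → ℤ := fun k => (x k).num * ∏ k' ∈ Finset.univ.erase k, ((x k').den : ℤ)
        with hz
      have hzq : ∀ k, (z k : ℚ) = x k * D := by
        intro k
        rw [hz]
        push_cast
        rw [← Rat.mul_den_eq_num]
        rw [hD]
        push_cast
        rw [← Finset.mul_prod_erase Finset.univ _ (Finset.mem_univ k)]
        ring
      have hzk0 : z k0 ≠ 0 := by
        intro h0
        have : (x k0) * D = 0 := by rw [← hzq k0, h0, Int.cast_zero]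
        rcases mul_eq_zero.mp this with h | h
        · exact hk0 h
        · exact hD0 h
      have hzlin : ∀ j, ∑ k, a (t j) k * z k = 0 := by
        intro j
        have hcast : ((∑ k, a (t j) k * z k : ℤ) : ℚ) = 0 := by
          push_cast
          rw [Finset.sum_congr rfl fun k _ => by rw [hzq k]]
          calc ∑ k, (a (t j) k : ℚ) * (x k * D) = (∑ k, (a (t j) k : ℚ) * x k) * D := by
                rw [Finset.sum_mul]
                exact Finset.sum_congr rfl fun k _ => by ring
            _ = 0 := by rw [hxj j, zero_mul]
        exact_mod_cast hcast
      obtain ⟨w, hw1, hw2⟩ := Finset.extract_gcd z ⟨k0, Finset.mem_univ k0⟩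
      have hg0 : Finset.univ.gcd z ≠ 0 := by
        intro h0
        exact hzk0 (Finset.gcd_eq_zero_iff.mp h0 k0 (Finset.mem_univ k0))
      have hwlin : ∀ j, ∑ k, a (t j) k * w k = 0 := by
        intro j
        have : Finset.univ.gcd z * (∑ k, a (t j) k * w k) = 0 := by
          rw [Finset.mul_sum, ← hzlin j]
          exact Finset.sum_congr rfl fun k _ => by
            rw [hw1 k (Finset.mem_univ k)]; ring
        exact (mul_eq_zero.mp this).resolve_left hg0
      have hmem : (fun k => (w k : ZMod p)) ∈
          ⋂ j, hypSet (ZMod p) (fun k => (a (t j) k : ZMod p)) 0 := by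
        refine Set.mem_iInter.mpr fun j => ?_
        show ∑ k, (a (t j) k : ZMod p) * (w k : ZMod p) = 0
        have := congrArg (fun r : ℤ => (r : ZMod p)) (hwlin j)
        push_cast at this
        exact this
      rw [hFp] at hmem
      have hdvd : (p : ℤ) ∣ Finset.univ.gcd w := by
        refine Finset.dvd_gcd fun k _ => ?_
        rw [← ZMod.intCast_zmod_eq_zero_iff_dvd]
        exact congrFun hmem k
      rw [hw2] at hdvd
      have := Int.le_of_dvd one_pos hdvd
      have hp2 : (2 : ℤ) ≤ (p : ℤ) := by exact_mod_cast hp.two_le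
      omega
end

section
/- Let α_i, α_j ∈ Z[x_1,...,x_l] be linear forms defining distinct hyperplanes of a central arrangement over Q, neither divisible by any prime. If the reductions (α_i)_p and (α_j)_p mod a prime p are nonzero scalar multiples of each other, then p is not σ-lucky for the ideal ⟨α_i, α_j⟩ in Z[x_1,...,x_l]. -/
open MvPolynomial
open scoped Classical

namespace Aux

variable {l : ℕ} (σ : MonomialOrder (Fin l))

local notation "P" => MvPolynomial (Fin l) ℤ

lemma toSyn_LTerm (f : P) : σ.toSyn (LTerm σ f) = f.support.sup fun d => σ.toSyn d := by
  simp [LTerm]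

lemma le_LTerm {f : P} {t : Fin l →₀ ℕ} (h : f.coeff t ≠ 0) :
    σ.toSyn t ≤ σ.toSyn (LTerm σ f) := by
  rw [toSyn_LTerm]
  exact Finset.le_sup (f := fun d => σ.toSyn d) (MvPolynomial.mem_support_iff.mpr h)

lemma coeff_eq_zero_of_lt {f : P} {t : Fin l →₀ ℕ}
    (h : σ.toSyn (LTerm σ f) < σ.toSyn t) : f.coeff t = 0 := by
  by_contra hc; exact absurd (le_LTerm σ hc) (not_le.mpr h)

lemma LTerm_mem_support {f : P} (hf : f ≠ 0) : LTerm σ f ∈ f.support := by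
  obtain ⟨b, hb, he⟩ := Finset.exists_mem_eq_sup f.support
    (MvPolynomial.support_nonempty.mpr hf) (fun d => σ.toSyn d)
  have : LTerm σ f = b := by rw [LTerm, he]; exact σ.toSyn.symm_apply_apply b
  rwa [this]

lemma LCoef_ne_zero {f : P} (hf : f ≠ 0) : LCoef σ f ≠ 0 :=
  MvPolynomial.mem_support_iff.mp (LTerm_mem_support σ hf)

lemma LTerm_eq {f : P} {t : Fin l →₀ ℕ} (h1 : f.coeff t ≠ 0)
    (h2 : ∀ s ∈ f.support, σ.toSyn s ≤ σ.toSyn t) : LTerm σ f = t := by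
  have hsup : (f.support.sup fun d => σ.toSyn d) = σ.toSyn t :=
    le_antisymm (Finset.sup_le h2)
      (Finset.le_sup (f := fun d => σ.toSyn d) (MvPolynomial.mem_support_iff.mpr h1))
  rw [LTerm, hsup, σ.toSyn.symm_apply_apply]

lemma monomial_mul_data {e : Fin l →₀ ℕ} {c : ℤ} {g : P} (hc : c ≠ 0) (hg : g ≠ 0) :
    LTerm σ (monomial e c * g) = e + LTerm σ g ∧
      LCoef σ (monomial e c * g) = c * LCoef σ g := by
  have hco : ∀ m : Fin l →₀ ℕ, (monomial e c * g).coeff m =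
      if e ≤ m then g.coeff (m - e) * c else 0 := by
    intro m
    rw [mul_comm]
    exact MvPolynomial.coeff_mul_monomial' m e c g
  have hkey : (monomial e c * g).coeff (e + LTerm σ g) = c * LCoef σ g := by
    rw [hco, if_pos le_self_add, add_tsub_cancel_left, mul_comm]
    rfl
  have hLT : LTerm σ (monomial e c * g) = e + LTerm σ g := by
    apply LTerm_eq
    · rw [hkey]; exact mul_ne_zero hc (LCoef_ne_zero σ hg)
    · intro s hs
      rw [MvPolynomial.mem_support_iff, hco] at hs
      split_ifs at hs with hes
      · have hs' : g.coeff (s - e) ≠ 0 := fun h => hs (by rw [h, zero_mul])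
        have := le_LTerm σ hs'
        calc σ.toSyn s = σ.toSyn (e + (s - e)) := by rw [add_tsub_cancel_of_le hes]
          _ = σ.toSyn e + σ.toSyn (s - e) := by rw [map_add]
          _ ≤ σ.toSyn e + σ.toSyn (LTerm σ g) := by exact add_le_add_right this _
          _ = σ.toSyn (e + LTerm σ g) := by rw [map_add]
      · exact absurd rfl hs
  exact ⟨hLT, by rw [LCoef, hLT, hkey]⟩

lemma monomial_dvd {s t : Fin l →₀ ℕ} {c d : ℤ} (hd : d ≠ 0) :
    (monomial s c : P) ∣ monomial t d ↔ s ≤ t ∧ c ∣ d := by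
  constructor
  · rintro ⟨q, hq⟩
    have hco : d = if s ≤ t then q.coeff (t - s) * c else 0 := by
      have := congrArg (fun u : P => u.coeff t) hq
      simpa [mul_comm, MvPolynomial.coeff_mul_monomial'] using this
    split_ifs at hco with hst
    · exact ⟨hst, Dvd.intro_left _ hco.symm⟩
    · exact absurd hco hd
  · rintro ⟨hst, k, hk⟩
    refine ⟨monomial (t - s) k, ?_⟩
    rw [MvPolynomial.monomial_mul, add_tsub_cancel_of_le hst, ← hk]

lemma smul_data {c : ℤ} {f : P} (hc : c ≠ 0) (hf : f ≠ 0) :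
    LTerm σ (c • f) = LTerm σ f ∧ LCoef σ (c • f) = c * LCoef σ f := by
  have hco : ∀ m : Fin l →₀ ℕ, (c • f).coeff m = c * f.coeff m := fun m =>
    MvPolynomial.coeff_smul m c f
  have hLT : LTerm σ (c • f) = LTerm σ f := by
    apply LTerm_eq
    · rw [hco]; exact mul_ne_zero hc (LCoef_ne_zero σ hf)
    · intro u hu
      rw [MvPolynomial.mem_support_iff, hco] at hu
      exact le_LTerm σ (right_ne_zero_of_mul hu)
  exact ⟨hLT, by rw [LCoef, hLT, hco]; rfl⟩

end Aux

namespace Aux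

variable {l : ℕ} (σ : MonomialOrder (Fin l))

local notation "P" => MvPolynomial (Fin l) ℤ

lemma LMon_dvd_iff {g f : P} (hf : f ≠ 0) :
    LMon σ g ∣ LMon σ f ↔ LTerm σ g ≤ LTerm σ f ∧ LCoef σ g ∣ LCoef σ f :=
  monomial_dvd (LCoef_ne_zero σ hf)

lemma reduce {f g : P} (hf : f ≠ 0) (hg : g ≠ 0) (hle : LTerm σ g ≤ LTerm σ f)
    (hdvd : LCoef σ g ∣ LCoef σ f) :
    ∃ q : P, f - q * g = 0 ∨
      (f - q * g ≠ 0 ∧ σ.toSyn (LTerm σ (f - q * g)) < σ.toSyn (LTerm σ f)) := by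
  set e := LTerm σ f - LTerm σ g with he
  set co := LCoef σ f / LCoef σ g with hco
  refine ⟨monomial e co, ?_⟩
  have hc0 : co ≠ 0 := by
    intro h
    apply LCoef_ne_zero σ hf
    rw [← Int.ediv_mul_cancel hdvd, ← hco, h, zero_mul]
  obtain ⟨hqT, hqC⟩ := monomial_mul_data σ hc0 hg (e := e)
  have heT : e + LTerm σ g = LTerm σ f := tsub_add_cancel_of_le hle
  have hqT' : LTerm σ (monomial e co * g) = LTerm σ f := by rw [hqT, heT]
  have hqC' : LCoef σ (monomial e co * g) = LCoef σ f := by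
    rw [hqC, hco, Int.ediv_mul_cancel hdvd]
  by_cases h0 : f - monomial e co * g = 0
  · exact Or.inl h0
  · refine Or.inr ⟨h0, ?_⟩
    have hzero : ∀ t : Fin l →₀ ℕ, σ.toSyn (LTerm σ f) ≤ σ.toSyn t →
        (f - monomial e co * g).coeff t = 0 := by
      intro t ht
      rcases eq_or_lt_of_le ht with heq | hlt
      · have : t = LTerm σ f := σ.toSyn.injective heq.symm
        subst this
        rw [MvPolynomial.coeff_sub]
        have : (monomial e co * g).coeff (LTerm σ f) = LCoef σ f := by
          rw [← hqC', LCoef, hqT']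
        rw [this]; exact sub_self _
      · rw [MvPolynomial.coeff_sub, coeff_eq_zero_of_lt σ hlt,
          coeff_eq_zero_of_lt σ (by rwa [hqT']), sub_zero]
    by_contra hnot
    exact (MvPolynomial.mem_support_iff.mp (LTerm_mem_support σ h0))
      (hzero _ (not_lt.mp hnot))

lemma mem_span_of_div {I : Ideal P} {G : Finset P} (hG0 : ∀ g ∈ G, g ≠ 0)
    (hGI : ∀ g ∈ G, g ∈ I)
    (hdiv : ∀ f ∈ I, f ≠ 0 → ∃ g ∈ G, LMon σ g ∣ LMon σ f) :
    ∀ f ∈ I, f ∈ Ideal.span (G : Set P) := by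
  have main : ∀ s : σ.syn, ∀ f ∈ I, σ.toSyn (LTerm σ f) = s →
      f ∈ Ideal.span (G : Set P) := by
    intro s
    induction s using WellFoundedLT.induction with
    | _ s IH =>
      intro f hfI hfs
      by_cases hf0 : f = 0
      · simp [hf0]
      · obtain ⟨g, hgG, hdvd'⟩ := hdiv f hfI hf0
        obtain ⟨hle, hcd⟩ := (LMon_dvd_iff σ hf0).mp hdvd'
        obtain ⟨q, hq⟩ := reduce σ hf0 (hG0 g hgG) hle hcd
        have hgspan : q * g ∈ Ideal.span (G : Set P) :=
          Ideal.mul_mem_left _ q (Ideal.subset_span hgG)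
        rcases hq with h0 | ⟨hne, hlt⟩
        · have : f = q * g := by rwa [sub_eq_zero] at h0
          rwa [this]
        · have hf' : f - q * g ∈ I := I.sub_mem hfI (I.mul_mem_left q (hGI g hgG))
          have := IH _ (hfs ▸ hlt) (f - q * g) hf' rfl
          have : f - q * g + q * g ∈ Ideal.span (G : Set P) := Ideal.add_mem _ this hgspan
          rwa [sub_add_cancel] at this
  exact fun f hf => main _ f hf rfl

lemma mem_of_smul_mem {I : Ideal P} {G : Finset P} {p : ℕ} (hp : p.Prime)
    (hG0 : ∀ g ∈ G, g ≠ 0) (hGI : ∀ g ∈ G, g ∈ I)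
    (hdiv : ∀ f ∈ I, f ≠ 0 → ∃ g ∈ G, LMon σ g ∣ LMon σ f)
    (hluck : ∀ g ∈ G, ¬ (p : ℤ) ∣ LCoef σ g) :
    ∀ f : P, (p : ℤ) • f ∈ I → f ∈ I := by
  have hpz : (p : ℤ) ≠ 0 := Int.natCast_ne_zero.mpr hp.ne_zero
  have main : ∀ s : σ.syn, ∀ f : P, (p : ℤ) • f ∈ I → σ.toSyn (LTerm σ f) = s → f ∈ I := by
    intro s
    induction s using WellFoundedLT.induction with
    | _ s IH =>
      intro f hfI hfs
      by_cases hf0 : f = 0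
      · rw [hf0]; exact I.zero_mem
      · have hpf0 : (p : ℤ) • f ≠ 0 := smul_ne_zero hpz hf0
        obtain ⟨hsT, hsC⟩ := smul_data σ hpz hf0
        obtain ⟨g, hgG, hdvd'⟩ := hdiv _ hfI hpf0
        obtain ⟨hle, hcd⟩ := (LMon_dvd_iff σ hpf0).mp hdvd'
        rw [hsT] at hle
        rw [hsC] at hcd
        -- LCoef g ∣ p * LCoef f, coprime to p
        have hcop : IsCoprime (LCoef σ g) ((p : ℤ)) :=
          ((Nat.prime_iff_prime_int.mp hp).coprime_iff_not_dvd.mpr (hluck g hgG)).symm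
        have hcd' : LCoef σ g ∣ LCoef σ f := hcop.dvd_of_dvd_mul_left hcd
        obtain ⟨q, hq⟩ := reduce σ hf0 (hG0 g hgG) hle hcd'
        have hmem : (p : ℤ) • (f - q * g) ∈ I := by
          rw [smul_sub]
          exact I.sub_mem hfI (by
            rw [MvPolynomial.smul_eq_C_mul, ← mul_assoc]
            exact I.mul_mem_left _ (hGI g hgG))
        rcases hq with h0 | ⟨hne, hlt⟩
        · have : f = q * g := by rwa [sub_eq_zero] at h0
          rw [this]; exact I.mul_mem_left q (hGI g hgG)
        · have := IH _ (hfs ▸ hlt) (f - q * g) hmem rfl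
          have : f - q * g + q * g ∈ I := I.add_mem this (I.mul_mem_left q (hGI g hgG))
          rwa [sub_add_cancel] at this
  exact fun f hf => main _ f hf rfl

end Aux

namespace Aux

variable {l : ℕ} (σ : MonomialOrder (Fin l))

local notation "P" => MvPolynomial (Fin l) ℤ

/-- The ideal of "coefficients at `t` of elements of `I` supported `σ`-below `t`". -/
noncomputable def Ct (I : Ideal P) (t : Fin l →₀ ℕ) : Ideal ℤ where
  carrier := {c | ∃ f : P, f ∈ I ∧ (∀ s ∈ f.support, σ.toSyn s ≤ σ.toSyn t) ∧ f.coeff t = c}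
  add_mem' := by
    rintro a b ⟨f, hfI, hfs, rfl⟩ ⟨g, hgI, hgs, rfl⟩
    refine ⟨f + g, I.add_mem hfI hgI, fun s hs => ?_, by rw [MvPolynomial.coeff_add]⟩
    rcases Finset.mem_union.mp (MvPolynomial.support_add hs) with h | h
    exacts [hfs s h, hgs s h]
  zero_mem' := ⟨0, I.zero_mem, by simp, by simp⟩
  smul_mem' := by
    rintro r a ⟨f, hfI, hfs, rfl⟩
    refine ⟨r • f, by rw [MvPolynomial.smul_eq_C_mul]; exact I.mul_mem_left _ hfI,
      fun s hs => hfs s (MvPolynomial.support_smul hs), by rw [MvPolynomial.coeff_smul]⟩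

lemma mem_Ct_self {I : Ideal P} {f : P} (hfI : f ∈ I) : LCoef σ f ∈ Ct σ I (LTerm σ f) :=
  ⟨f, hfI, fun s hs => le_LTerm σ (MvPolynomial.mem_support_iff.mp hs), rfl⟩

lemma Ct_elem {I : Ideal P} {t : Fin l →₀ ℕ} {c : ℤ} (hc : c ∈ Ct σ I t) (hc0 : c ≠ 0) :
    ∃ f : P, f ∈ I ∧ f ≠ 0 ∧ LTerm σ f = t ∧ LCoef σ f = c := by
  obtain ⟨f, hfI, hfs, rfl⟩ := hc
  have hf0 : f ≠ 0 := fun h => hc0 (by simp [h])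
  have hT : LTerm σ f = t := LTerm_eq σ hc0 hfs
  exact ⟨f, hfI, hf0, hT, by rw [LCoef, hT]⟩

lemma Ct_mono {I : Ideal P} {s t : Fin l →₀ ℕ} (hst : s ≤ t) : Ct σ I s ≤ Ct σ I t := by
  rintro c ⟨f, hfI, hfs, rfl⟩
  have hco : ∀ m : Fin l →₀ ℕ, (monomial (t - s) 1 * f).coeff m =
      if t - s ≤ m then f.coeff (m - (t - s)) * 1 else 0 := by
    intro m; rw [mul_comm]; exact MvPolynomial.coeff_mul_monomial' m (t - s) 1 f
  refine ⟨monomial (t - s) 1 * f, I.mul_mem_left _ hfI, fun u hu => ?_, ?_⟩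
  · rw [MvPolynomial.mem_support_iff, hco] at hu
    split_ifs at hu with hle
    · have hs' : f.coeff (u - (t - s)) ≠ 0 := fun h => hu (by rw [h, zero_mul])
      have h1 : σ.toSyn (u - (t - s)) ≤ σ.toSyn s :=
        hfs _ (MvPolynomial.mem_support_iff.mpr hs')
      calc σ.toSyn u = σ.toSyn ((t - s) + (u - (t - s))) := by
            rw [add_tsub_cancel_of_le hle]
        _ = σ.toSyn (t - s) + σ.toSyn (u - (t - s)) := by rw [map_add]
        _ ≤ σ.toSyn (t - s) + σ.toSyn s := add_le_add_right h1 _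
        _ = σ.toSyn ((t - s) + s) := by rw [map_add]
        _ = σ.toSyn t := by rw [tsub_add_cancel_of_le hst]
    · exact absurd rfl hu
  · rw [hco, if_pos tsub_le_self, tsub_tsub_cancel_of_le hst, mul_one]

end Aux

namespace Aux

variable {l : ℕ} (σ : MonomialOrder (Fin l))

local notation "P" => MvPolynomial (Fin l) ℤ

lemma exists_strongGB (I : Ideal P) :
    ∃ G : Finset P, (∀ g ∈ G, g ≠ 0) ∧ (∀ g ∈ G, g ∈ I) ∧
      ∀ f ∈ I, f ≠ 0 → ∃ g ∈ G, LMon σ g ∣ LMon σ f := by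
  by_contra hcon
  let gen : P → Prop := fun g => Ideal.span {LCoef σ g} = Ct σ I (LTerm σ g)
  have step : ∀ G : Finset P, ∃ f : P,
      (∀ g ∈ G, g ≠ 0 ∧ g ∈ I ∧ gen g) →
        (f ≠ 0 ∧ f ∈ I ∧ gen f) ∧ ∀ g ∈ G, ¬ LMon σ g ∣ LMon σ f := by
    intro G
    by_cases hG : ∀ g ∈ G, g ≠ 0 ∧ g ∈ I ∧ gen g
    swap
    · exact ⟨0, fun h => absurd h hG⟩
    have hfail : ∃ f0 : P, f0 ∈ I ∧ f0 ≠ 0 ∧ ∀ g ∈ G, ¬ LMon σ g ∣ LMon σ f0 := by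
      by_contra hff
      push_neg at hff
      refine hcon ⟨G, fun g hg => (hG g hg).1, fun g hg => (hG g hg).2.1, ?_⟩
      intro f hf hf0
      obtain ⟨g, hg, hdvd⟩ := hff f hf hf0
      exact ⟨g, hg, hdvd⟩
    obtain ⟨f0, hf0I, hf00, hbad⟩ := hfail
    set t := LTerm σ f0 with ht
    have hc0 : LCoef σ f0 ∈ Ct σ I t := mem_Ct_self σ hf0I
    set d := Submodule.IsPrincipal.generator (Ct σ I t) with hd
    have hspan : Ideal.span {d} = Ct σ I t :=
      Submodule.IsPrincipal.span_singleton_generator _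
    have hdmem : d ∈ Ct σ I t := Submodule.IsPrincipal.generator_mem _
    have hdvd0 : d ∣ LCoef σ f0 := by
      rw [← hspan] at hc0
      exact Ideal.mem_span_singleton.mp hc0
    have hd0 : d ≠ 0 := by
      intro h
      rw [h] at hdvd0
      exact LCoef_ne_zero σ hf00 (zero_dvd_iff.mp hdvd0)
    obtain ⟨f, hfI, hf0, hfT, hfC⟩ := Ct_elem σ hdmem hd0
    refine ⟨f, fun _ => ⟨⟨hf0, hfI, ?_⟩, ?_⟩⟩
    · show Ideal.span {LCoef σ f} = Ct σ I (LTerm σ f)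
      rw [hfC, hfT, hspan]
    · intro g hg hdg
      obtain ⟨hle, hcd⟩ := (LMon_dvd_iff σ hf0).mp hdg
      apply hbad g hg
      apply (LMon_dvd_iff σ hf00).mpr
      rw [hfT] at hle
      rw [hfC] at hcd
      exact ⟨hle, hcd.trans hdvd0⟩
  choose nxt hnxt using step
  let Gs : ℕ → Finset P := fun n => Nat.rec (∅ : Finset P) (fun _ Gk => insert (nxt Gk) Gk) n
  have hInv : ∀ n, ∀ g ∈ Gs n, g ≠ 0 ∧ g ∈ I ∧ gen g := by
    intro n
    induction n with
    | zero => intro g hg; exact absurd hg (Finset.notMem_empty g)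
    | succ n ih =>
      intro g hg
      rcases Finset.mem_insert.mp hg with rfl | hg'
      · exact ((hnxt (Gs n)) ih).1
      · exact ih g hg'
  have hmono : ∀ m n : ℕ, m ≤ n → Gs m ⊆ Gs n := by
    intro m n h
    induction h with
    | refl => exact subset_rfl
    | step _ ih => exact ih.trans (Finset.subset_insert _ _)
  let F : ℕ → P := fun n => nxt (Gs n)
  have hFprop : ∀ n, F n ≠ 0 ∧ F n ∈ I ∧ gen (F n) := fun n => ((hnxt (Gs n)) (hInv n)).1
  have hFbad : ∀ i j : ℕ, i < j → ¬ LMon σ (F i) ∣ LMon σ (F j) := by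
    intro i j hij
    exact ((hnxt (Gs j)) (hInv j)).2 (F i) (hmono (i + 1) j hij (Finset.mem_insert_self _ _))
  have hPWO : (Set.univ : Set (Fin l → ℕ)).IsPWO :=
    Set.isPWO_of_wellQuasiOrderedLE _
  obtain ⟨φ, hφ⟩ := hPWO.exists_monotone_subseq (f := fun n => ⇑(LTerm σ (F n)))
    (fun n => Set.mem_univ _)
  have hT : ∀ k : ℕ, LTerm σ (F (φ k)) ≤ LTerm σ (F (φ (k + 1))) := by
    intro k
    have h := hφ (Nat.le_succ k)
    intro x
    exact h x
  have hdvd : ∀ k : ℕ, LCoef σ (F (φ (k + 1))) ∣ LCoef σ (F (φ k)) := by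
    intro k
    have hgen2 := (hFprop (φ (k + 1))).2.2
    have hmem : LCoef σ (F (φ k)) ∈ Ct σ I (LTerm σ (F (φ (k + 1)))) :=
      Ct_mono σ (hT k) (mem_Ct_self σ (hFprop (φ k)).2.1)
    rw [← hgen2] at hmem
    exact Ideal.mem_span_singleton.mp hmem
  have hnd : ∀ k : ℕ, ¬ LCoef σ (F (φ k)) ∣ LCoef σ (F (φ (k + 1))) := by
    intro k hdd
    exact hFbad (φ k) (φ (k + 1)) (φ.strictMono (Nat.lt_succ_self k))
      ((LMon_dvd_iff σ (hFprop (φ (k + 1))).1).mpr ⟨hT k, hdd⟩)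
  have hlt : ∀ k : ℕ, (LCoef σ (F (φ (k + 1)))).natAbs < (LCoef σ (F (φ k))).natAbs := by
    intro k
    have hne0 : LCoef σ (F (φ k)) ≠ 0 := LCoef_ne_zero σ (hFprop (φ k)).1
    have hle := Nat.le_of_dvd (Int.natAbs_pos.mpr hne0) (Int.natAbs_dvd_natAbs.mpr (hdvd k))
    rcases lt_or_eq_of_le hle with h | h
    · exact h
    · exfalso
      apply hnd k
      apply Int.natAbs_dvd_natAbs.mp
      rw [h]
  have hdesc : ∀ k : ℕ, (LCoef σ (F (φ k))).natAbs + k ≤ (LCoef σ (F (φ 0))).natAbs := by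
    intro k
    induction k with
    | zero => simp
    | succ k ih => have := hlt k; omega
  have := hdesc ((LCoef σ (F (φ 0))).natAbs + 1)
  omega

end Aux

namespace Aux

variable {l : ℕ} (σ : MonomialOrder (Fin l))

local notation "P" => MvPolynomial (Fin l) ℤ

lemma exists_minGB (I : Ideal P) : ∃ G : Finset P, MinStrongGB σ G I := by
  obtain ⟨G0, h1, h2, h3⟩ := exists_strongGB σ I
  have main : ∀ n : ℕ, ∀ G : Finset P, G.card ≤ n →
      (∀ g ∈ G, g ≠ 0) → (∀ g ∈ G, g ∈ I) →
      (∀ f ∈ I, f ≠ 0 → ∃ g ∈ G, LMon σ g ∣ LMon σ f) →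
      ∃ G' : Finset P, MinStrongGB σ G' I := by
    intro n
    induction n with
    | zero =>
      intro G hc h1 h2 h3
      have hGe : G = ∅ := Finset.card_eq_zero.mp (Nat.le_zero.mp hc)
      subst hGe
      have hI : ∀ f ∈ I, f = 0 := by
        intro f hf
        by_contra hf0
        obtain ⟨g, hg, -⟩ := h3 f hf hf0
        exact absurd hg (Finset.notMem_empty g)
      refine ⟨∅, fun g hg => absurd hg (Finset.notMem_empty g), ?_, ?_, ?_⟩
      · rw [Finset.coe_empty, Ideal.span_empty]
        exact (eq_bot_iff.mpr fun f hf => Ideal.mem_bot.mpr (hI f hf)).symm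
      · intro f hf hf0; exact absurd (hI f hf) hf0
      · intro g hg; exact absurd hg (Finset.notMem_empty g)
    | succ n ih =>
      intro G hc h1 h2 h3
      by_cases hmin : ∀ g ∈ G, ∀ g' ∈ G, g ≠ g' → ¬ LMon σ g ∣ LMon σ g'
      · refine ⟨G, h1, ?_, h3, hmin⟩
        apply le_antisymm
        · rw [Ideal.span_le]; intro g hg; exact h2 g hg
        · intro f hf; exact mem_span_of_div σ h1 h2 h3 f hf
      · push_neg at hmin
        obtain ⟨g, hg, g', hg', hgne, hdvd⟩ := hmin
        apply ih (G.erase g')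
        · have := Finset.card_erase_of_mem hg'; omega
        · exact fun h hh => h1 h (Finset.mem_of_mem_erase hh)
        · exact fun h hh => h2 h (Finset.mem_of_mem_erase hh)
        · intro f hf hf0
          obtain ⟨h, hh, hd⟩ := h3 f hf hf0
          by_cases hhg : h = g'
          · exact ⟨g, Finset.mem_erase.mpr ⟨hgne, hg⟩, hdvd.trans (hhg ▸ hd)⟩
          · exact ⟨h, Finset.mem_erase.mpr ⟨hhg, hh⟩, hd⟩
  exact main G0.card G0 le_rfl h1 h2 h3

lemma coeff_mul_intForm (c : P) (a : Fin l → ℤ) (k : Fin l) :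
    (c * intForm a).coeff (Finsupp.single k 1) = c.coeff 0 * a k := by
  classical
  rw [intForm, Finset.mul_sum, MvPolynomial.coeff_sum]
  rw [Finset.sum_eq_single k]
  · have he : c * (C (a k) * X k) = (C (a k) * c) * X k := by ring
    rw [he, MvPolynomial.coeff_mul_X']
    rw [if_pos (by simp [Finsupp.support_single_ne_zero])]
    rw [tsub_self, MvPolynomial.coeff_C_mul, mul_comm]
  · intro j _ hj
    have he : c * (C (a j) * X j) = (C (a j) * c) * X j := by ring
    rw [he, MvPolynomial.coeff_mul_X',
      if_neg (by simpa [Finsupp.support_single_ne_zero] using hj)]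
  · intro h; exact absurd (Finset.mem_univ k) h

lemma coeff_intForm (a : Fin l → ℤ) (k : Fin l) :
    (intForm a).coeff (Finsupp.single k 1) = a k := by
  have := coeff_mul_intForm (1 : P) a k
  simpa using this

lemma smul_intForm (pz b : ℤ) (a₁ a₂ u : Fin l → ℤ) (h : ∀ k, pz * u k = a₁ k - b * a₂ k) :
    pz • intForm u = intForm a₁ - C b * intForm a₂ := by
  rw [intForm, intForm, intForm, Finset.smul_sum, Finset.mul_sum, ← Finset.sum_sub_distrib]
  apply Finset.sum_congr rfl
  intro k _
  rw [MvPolynomial.smul_eq_C_mul, ← mul_assoc, ← MvPolynomial.C_mul, h k, MvPolynomial.C_sub,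
    MvPolynomial.C_mul, sub_mul, mul_assoc]

end Aux

/-- Lemma 6.1: let `αᵢ, αⱼ` be primitive integral linear forms that are not
proportional (they define distinct hyperplanes of a central arrangement over `ℚ`). If
`(αᵢ)_p = β (αⱼ)_p` for some nonzero `β ∈ 𝔽_p`, then `p` is not `σ`-lucky for
`⟨αᵢ, αⱼ⟩ ⊆ ℤ[x₁,…,x_l]`. -/
theorem stmt12 {l : ℕ} (a₁ a₂ : Fin l → ℤ)
    (hprim₁ : ∀ q : ℕ, q.Prime → ∃ k, ¬ (q : ℤ) ∣ a₁ k)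
    (hprim₂ : ∀ q : ℕ, q.Prime → ∃ k, ¬ (q : ℤ) ∣ a₂ k)
    (hne : ∀ c : ℚ, ¬ ∀ k, (a₂ k : ℚ) = c * (a₁ k : ℚ))
    (σ : MonomialOrder (Fin l)) (p : ℕ) (hp : p.Prime)
    (hmult : ∃ β : ZMod p, β ≠ 0 ∧ ∀ k, (a₁ k : ZMod p) = β * (a₂ k : ZMod p)) :
    ¬ SigmaLucky σ p (Ideal.span {intForm a₁, intForm a₂}) := by
  intro hlucky
  haveI : NeZero p := ⟨hp.ne_zero⟩
  obtain ⟨β, hβ0, hβ⟩ := hmult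
  set I : Ideal (MvPolynomial (Fin l) ℤ) := Ideal.span {intForm a₁, intForm a₂} with hI
  obtain ⟨G, hGB⟩ := Aux.exists_minGB σ I
  obtain ⟨hG0, hGspan, hGdiv, hGmin⟩ := hGB
  have hluck := hlucky G ⟨hG0, hGspan, hGdiv, hGmin⟩
  have hGI : ∀ g ∈ G, g ∈ I := fun g hg => hGspan ▸ Ideal.subset_span hg
  set b : ℤ := (β.val : ℤ) with hb
  have hbcast : ((b : ℤ) : ZMod p) = β := by
    rw [hb, Int.cast_natCast, ZMod.natCast_val, ZMod.cast_id]
  have hdvdk : ∀ k, (p : ℤ) ∣ (a₁ k - b * a₂ k) := by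
    intro k
    rw [← ZMod.intCast_zmod_eq_zero_iff_dvd]
    rw [Int.cast_sub, Int.cast_mul, hbcast, hβ k]
    ring
  set u : Fin l → ℤ := fun k => (a₁ k - b * a₂ k) / p with hu
  have hpu : ∀ k, (p : ℤ) * u k = a₁ k - b * a₂ k := fun k => Int.mul_ediv_cancel' (hdvdk k)
  have hsmul : (p : ℤ) • intForm u = intForm a₁ - C b * intForm a₂ :=
    Aux.smul_intForm (p : ℤ) b a₁ a₂ u hpu
  have hmem : (p : ℤ) • intForm u ∈ I := by
    rw [hsmul, hI]
    exact Ideal.mem_span_pair.mpr ⟨1, -C b, by ring⟩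
  have huI : intForm u ∈ I :=
    Aux.mem_of_smul_mem σ hp hG0 hGI hGdiv hluck (intForm u) hmem
  rw [hI] at huI
  obtain ⟨c₁, c₂, hcc⟩ := Ideal.mem_span_pair.mp huI
  set m : ℤ := c₁.coeff 0 with hm
  set n : ℤ := c₂.coeff 0 with hn
  have hcoeff : ∀ k, m * a₁ k + n * a₂ k = u k := by
    intro k
    have h := congrArg (fun q : MvPolynomial (Fin l) ℤ => q.coeff (Finsupp.single k 1)) hcc
    simpa [MvPolynomial.coeff_add, Aux.coeff_mul_intForm, Aux.coeff_intForm] using h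
  have key : ∀ k, ((1 : ℤ) - (p : ℤ) * m) * a₁ k = ((p : ℤ) * n + b) * a₂ k := by
    intro k
    have h1 := hpu k
    have h2 := hcoeff k
    linear_combination -h1 - (p : ℤ) * h2
  have hB : ((p : ℤ) * n + b) ≠ 0 := by
    intro h
    apply hβ0
    have hdb : (p : ℤ) ∣ b := ⟨-n, by linarith⟩
    rw [← hbcast]
    exact (ZMod.intCast_zmod_eq_zero_iff_dvd b p).mpr hdb
  have hBq : (((p : ℤ) * n + b : ℤ) : ℚ) ≠ 0 := Int.cast_ne_zero.mpr hB
  apply hne ((((1 : ℤ) - (p : ℤ) * m : ℤ) : ℚ) / (((p : ℤ) * n + b : ℤ) : ℚ))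
  intro k
  have hk := key k
  have hkq : (((1 : ℤ) - (p : ℤ) * m : ℤ) : ℚ) * (a₁ k : ℚ)
      = (((p : ℤ) * n + b : ℤ) : ℚ) * (a₂ k : ℚ) := by exact_mod_cast congrArg Int.cast hk
  push_cast at hkq hBq ⊢
  rw [div_mul_eq_mul_div, eq_div_iff hBq]
  linear_combination -hkq
end

section
/- Let A be a central arrangement in Q^l with integer defining forms, none divisible by any prime. If a prime p is (σ,2)-lucky for A (i.e., σ-lucky for every ideal ⟨α_i, α_j⟩_Z with codim(H_i ∩ H_j) = 2), then p is good for A, i.e., the reduction of Q(A) = ∏ α_i modulo p is a reduced polynomial. -/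
open MvPolynomial
open scoped Classical
set_option maxHeartbeats 1000000

/-- `p` is `(σ,κ)`-lucky for the arrangement with forms `a`: `p` is `σ`-lucky for every ideal
`⟨α_{i₁},…,α_{i_κ}⟩_ℤ` with `codim(H_{i₁} ∩ ⋯ ∩ H_{i_κ}) = κ`. -/
noncomputable def SigmaKLucky {l n : ℕ} (σ : MonomialOrder (Fin l)) (a : Fin n → Fin l → ℤ)
    (κ p : ℕ) : Prop :=
  ∀ t : Fin κ → Fin n, StrictMono t →
    adim ℚ (⋂ j, hypSet ℚ (fun k => (a (t j) k : ℚ)) 0) = (l : ℤ) - κ →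
    SigmaLucky σ p (Ideal.span (Set.range fun j => intForm (a (t j))))

namespace StmtAux

variable {l : ℕ} (σ : MonomialOrder (Fin l))

variable {Rc : Type*} [CommSemiring Rc]

/-- generalized leading exponent -/
noncomputable def mdeg (f : MvPolynomial (Fin l) Rc) : Fin l →₀ ℕ :=
  σ.toSyn.symm (f.support.sup fun d => σ.toSyn d)

noncomputable def mcoef (f : MvPolynomial (Fin l) Rc) : Rc :=
  f.coeff (mdeg σ f)

variable {σ}

lemma toSyn_mdeg (f : MvPolynomial (Fin l) Rc) :
    σ.toSyn (mdeg σ f) = f.support.sup fun d => σ.toSyn d := by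
  simp [mdeg]

lemma mdeg_mem_support {f : MvPolynomial (Fin l) Rc} (hf : f ≠ 0) :
    mdeg σ f ∈ f.support := by
  have hne : f.support.Nonempty := MvPolynomial.support_nonempty.mpr hf
  obtain ⟨b, hb, hsup⟩ := Finset.exists_mem_eq_sup f.support hne fun d => σ.toSyn d
  have : mdeg σ f = b := by simp [mdeg, hsup]
  rwa [this]

lemma le_toSyn_mdeg {f : MvPolynomial (Fin l) Rc} {d : Fin l →₀ ℕ} (hd : d ∈ f.support) :
    σ.toSyn d ≤ σ.toSyn (mdeg σ f) := by
  rw [toSyn_mdeg]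
  exact Finset.le_sup hd

lemma mcoef_ne_zero {f : MvPolynomial (Fin l) Rc} (hf : f ≠ 0) : mcoef σ f ≠ 0 := by
  have := mdeg_mem_support (σ := σ) hf
  rwa [MvPolynomial.mem_support_iff] at this

lemma coeff_eq_zero_of_lt {f : MvPolynomial (Fin l) Rc} {d : Fin l →₀ ℕ}
    (h : σ.toSyn (mdeg σ f) < σ.toSyn d) : f.coeff d = 0 := by
  by_contra hc
  exact absurd (le_toSyn_mdeg (MvPolynomial.mem_support_iff.mpr hc)) (not_le.mpr h)

/-- characterization: if coeff at d is nonzero and d bounds the support, it is the mdeg -/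
lemma mdeg_eq_of_max {f : MvPolynomial (Fin l) Rc} {d : Fin l →₀ ℕ}
    (hc : f.coeff d ≠ 0) (hb : ∀ e ∈ f.support, σ.toSyn e ≤ σ.toSyn d) :
    mdeg σ f = d ∧ mcoef σ f = f.coeff d := by
  have hd : d ∈ f.support := MvPolynomial.mem_support_iff.mpr hc
  have h1 : σ.toSyn (mdeg σ f) ≤ σ.toSyn d := by
    rw [toSyn_mdeg]; exact Finset.sup_le hb
  have h2 := le_toSyn_mdeg (σ := σ) hd
  have h3 : mdeg σ f = d := σ.toSyn.injective (le_antisymm h1 h2)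
  exact ⟨h3, by rw [mcoef, h3]⟩

lemma mdeg_monomial {d : Fin l →₀ ℕ} {c : Rc} (hc : c ≠ 0) :
    mdeg σ (MvPolynomial.monomial d c) = d ∧ mcoef σ (MvPolynomial.monomial d c) = c := by
  have h := mdeg_eq_of_max (σ := σ) (f := MvPolynomial.monomial d c) (d := d) ?_ ?_
  · rcases h with ⟨h1, h2⟩
    refine ⟨h1, by rwa [MvPolynomial.coeff_monomial, if_pos rfl] at h2⟩
  · rwa [MvPolynomial.coeff_monomial, if_pos rfl]
  · intro e he
    rw [MvPolynomial.support_monomial, if_neg hc] at he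
    simp only [Finset.mem_singleton] at he
    subst he; rfl

lemma mdeg_zero_imp {f : MvPolynomial (Fin l) Rc} (h : mdeg σ f = 0) :
    f = MvPolynomial.C (f.coeff 0) := by
  ext d
  rw [MvPolynomial.coeff_C]
  by_cases hd : d = 0
  · subst hd; simp
  · rw [if_neg (fun hh => hd hh.symm)]
    by_contra hc
    have hmem : d ∈ f.support := MvPolynomial.mem_support_iff.mpr hc
    have := le_toSyn_mdeg (σ := σ) hmem
    rw [h, map_zero] at this
    have : σ.toSyn d = 0 := le_antisymm this (by simpa using bot_le (a := σ.toSyn d))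
    exact hd (by simpa using σ.toSyn.injective (this.trans (map_zero σ.toSyn).symm))

/-- lower bound lemma for differences -/
lemma mdeg_lt_of_bound {f : MvPolynomial (Fin l) Rc} {τ : Fin l →₀ ℕ} (hf : f ≠ 0)
    (hb : ∀ d ∈ f.support, σ.toSyn d ≤ σ.toSyn τ) (hc : f.coeff τ = 0) :
    σ.toSyn (mdeg σ f) < σ.toSyn τ := by
  have h1 : σ.toSyn (mdeg σ f) ≤ σ.toSyn τ := hb _ (mdeg_mem_support hf)
  rcases lt_or_eq_of_le h1 with h | h
  · exact h
  · exfalso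
    have : mdeg σ f = τ := σ.toSyn.injective h
    exact mcoef_ne_zero hf (by rw [mcoef, this]; exact hc)

lemma mdeg_mul {Rd : Type*} [CommRing Rd] [NoZeroDivisors Rd]
    {f g : MvPolynomial (Fin l) Rd} (hf : f ≠ 0) (hg : g ≠ 0) :
    mdeg σ (f * g) = mdeg σ f + mdeg σ g ∧ mcoef σ (f * g) = mcoef σ f * mcoef σ g := by
  have hco : (f * g).coeff (mdeg σ f + mdeg σ g) = mcoef σ f * mcoef σ g := by
    rw [MvPolynomial.coeff_mul]
    refine Finset.sum_eq_single_of_mem (mdeg σ f, mdeg σ g)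
        (Finset.HasAntidiagonal.mem_antidiagonal.mpr rfl) ?_
    · rintro ⟨d, e⟩ hmem hne
      rw [Finset.HasAntidiagonal.mem_antidiagonal] at hmem
      by_cases h1 : σ.toSyn (mdeg σ f) < σ.toSyn d
      · rw [coeff_eq_zero_of_lt h1, zero_mul]
      by_cases h2 : σ.toSyn (mdeg σ g) < σ.toSyn e
      · rw [coeff_eq_zero_of_lt h2, mul_zero]
      push_neg at h1 h2
      exfalso
      have hsum : σ.toSyn d + σ.toSyn e = σ.toSyn (mdeg σ f) + σ.toSyn (mdeg σ g) := by
        rw [← map_add, ← map_add, hmem]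
      have hd : σ.toSyn d = σ.toSyn (mdeg σ f) := le_antisymm h1 (by
        by_contra hlt
        push_neg at hlt
        have := add_lt_add_of_lt_of_le hlt h2
        rw [hsum] at this
        exact lt_irrefl _ this)
      have he : σ.toSyn e = σ.toSyn (mdeg σ g) := by
        have := hsum
        rw [hd] at this
        exact add_left_cancel this
      exact hne (Prod.ext (σ.toSyn.injective hd) (σ.toSyn.injective he))
  have hne : (f * g).coeff (mdeg σ f + mdeg σ g) ≠ 0 := by
    rw [hco]; exact mul_ne_zero (mcoef_ne_zero hf) (mcoef_ne_zero hg)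
  have h := mdeg_eq_of_max (σ := σ) hne ?_
  · exact ⟨h.1, by rw [h.2, hco]⟩
  · intro e he
    rw [MvPolynomial.mem_support_iff] at he
    by_contra hgt
    push_neg at hgt
    apply he
    rw [MvPolynomial.coeff_mul]
    apply Finset.sum_eq_zero
    rintro ⟨d1, d2⟩ hmem
    rw [Finset.HasAntidiagonal.mem_antidiagonal] at hmem
    by_cases h1 : f.coeff d1 = 0
    · rw [h1, zero_mul]
    by_cases h2 : g.coeff d2 = 0
    · rw [h2, mul_zero]
    exfalso
    have hb1 := le_toSyn_mdeg (σ := σ) (MvPolynomial.mem_support_iff.mpr h1)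
    have hb2 := le_toSyn_mdeg (σ := σ) (MvPolynomial.mem_support_iff.mpr h2)
    have : σ.toSyn e ≤ σ.toSyn (mdeg σ f) + σ.toSyn (mdeg σ g) := by
      rw [← hmem, map_add]
      exact add_le_add hb1 hb2
    rw [← map_add] at this
    exact absurd this (not_le.mpr hgt)

section Corollaries

variable {Rd : Type*} [CommRing Rd] [NoZeroDivisors Rd] [Nontrivial Rd]

lemma mdeg_C_mul {r : Rd} {f : MvPolynomial (Fin l) Rd} (hr : r ≠ 0) (hf : f ≠ 0) :
    mdeg σ (MvPolynomial.C r * f) = mdeg σ f ∧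
      mcoef σ (MvPolynomial.C r * f) = r * mcoef σ f := by
  have hC : (MvPolynomial.C r : MvPolynomial (Fin l) Rd) ≠ 0 := by
    rwa [ne_eq, MvPolynomial.C_eq_zero]
  have h := mdeg_mul (σ := σ) hC hf
  have hc0 : mdeg σ (MvPolynomial.C r : MvPolynomial (Fin l) Rd) = 0 ∧
      mcoef σ (MvPolynomial.C r : MvPolynomial (Fin l) Rd) = r := by
    rw [MvPolynomial.C_apply]
    exact mdeg_monomial (σ := σ) (d := 0) hr
  rw [hc0.1, hc0.2, zero_add] at h
  exact h

lemma mdeg_monomial_mul {δ : Fin l →₀ ℕ} {f : MvPolynomial (Fin l) Rd} (hf : f ≠ 0) :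
    mdeg σ (MvPolynomial.monomial δ (1 : Rd) * f) = δ + mdeg σ f ∧
      mcoef σ (MvPolynomial.monomial δ (1 : Rd) * f) = mcoef σ f := by
  have hM : (MvPolynomial.monomial δ (1 : Rd)) ≠ 0 := by
    rw [ne_eq, MvPolynomial.monomial_eq_zero]; exact one_ne_zero
  have h := mdeg_mul (σ := σ) hM hf
  have hm := mdeg_monomial (σ := σ) (d := δ) (c := (1 : Rd)) one_ne_zero
  rw [hm.1, hm.2, one_mul] at h
  exact h

/-- divisibility of monomials, forward direction -/
lemma monomial_dvd_monomial_iff {d d' : Fin l →₀ ℕ} {c c' : Rd} (hc' : c' ≠ 0) :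
    (MvPolynomial.monomial d c ∣ MvPolynomial.monomial d' c') ↔ d ≤ d' ∧ c ∣ c' := by
  constructor
  · rintro ⟨q, hq⟩
    have hco : ∀ m, (MvPolynomial.monomial d' c').coeff m =
        (MvPolynomial.monomial d c * q).coeff m := fun m => by rw [hq]
    have h1 := hco d'
    rw [MvPolynomial.coeff_monomial, if_pos rfl, MvPolynomial.coeff_monomial_mul'] at h1
    by_cases hle : d ≤ d'
    · refine ⟨hle, ?_⟩
      rw [if_pos hle] at h1
      exact ⟨q.coeff (d' - d), h1⟩
    · rw [if_neg hle] at h1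
      exact absurd h1 hc'
  · rintro ⟨hle, m, hm⟩
    refine ⟨MvPolynomial.monomial (d' - d) m, ?_⟩
    rw [MvPolynomial.monomial_mul, ← hm]
    congr 1
    rw [add_tsub_cancel_of_le hle]

end Corollaries

section IntFormLemmas

lemma intForm_eq_sum_monomial (v : Fin l → ℤ) :
    intForm v = ∑ k, MvPolynomial.monomial (Finsupp.single k 1) (v k) := by
  unfold intForm
  refine Finset.sum_congr rfl fun k _ => ?_
  rw [MvPolynomial.C_mul_X_eq_monomial]

lemma coeff_intForm (v : Fin l → ℤ) (k : Fin l) :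
    (intForm v).coeff (Finsupp.single k 1) = v k := by
  rw [intForm_eq_sum_monomial, MvPolynomial.coeff_sum]
  rw [Finset.sum_eq_single k]
  · rw [MvPolynomial.coeff_monomial, if_pos rfl]
  · intro m _ hm
    rw [MvPolynomial.coeff_monomial, if_neg]
    intro h
    exact hm (Finsupp.single_left_injective (one_ne_zero : (1:ℕ) ≠ 0) h)
  · intro h; exact absurd (Finset.mem_univ k) h

lemma supp_intForm {v : Fin l → ℤ} {d : Fin l →₀ ℕ} (hd : d ∈ (intForm v).support) :
    ∃ k, d = Finsupp.single k 1 := by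
  rw [MvPolynomial.mem_support_iff] at hd
  by_contra hc
  push_neg at hc
  apply hd
  rw [intForm_eq_sum_monomial, MvPolynomial.coeff_sum]
  apply Finset.sum_eq_zero
  intro k _
  rw [MvPolynomial.coeff_monomial, if_neg (fun h => hc k h.symm)]

lemma intForm_eq_zero_iff {v : Fin l → ℤ} : intForm v = 0 ↔ v = 0 := by
  constructor
  · intro h
    funext k
    have := coeff_intForm v k
    rw [h] at this
    simpa using this.symm
  · rintro rfl
    unfold intForm
    simp

lemma intForm_add (u v : Fin l → ℤ) : intForm (u + v) = intForm u + intForm v := by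
  unfold intForm
  rw [← Finset.sum_add_distrib]
  refine Finset.sum_congr rfl fun k _ => ?_
  simp [map_add, add_mul]

lemma intForm_sub (u v : Fin l → ℤ) : intForm (u - v) = intForm u - intForm v := by
  unfold intForm
  rw [← Finset.sum_sub_distrib]
  refine Finset.sum_congr rfl fun k _ => ?_
  simp [map_sub, sub_mul]

lemma intForm_smul (c : ℤ) (v : Fin l → ℤ) :
    intForm (c • v) = MvPolynomial.C c * intForm v := by
  unfold intForm
  rw [Finset.mul_sum]
  refine Finset.sum_congr rfl fun k _ => ?_
  simp only [Pi.smul_apply, smul_eq_mul, map_mul]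
  ring

lemma constantCoeff_intForm (v : Fin l → ℤ) :
    MvPolynomial.constantCoeff (intForm v) = 0 := by
  unfold intForm
  rw [map_sum]
  apply Finset.sum_eq_zero
  intro k _
  simp

/-- mdeg of a nonzero linear form is a single variable -/
lemma mdeg_intForm {v : Fin l → ℤ} (hv : v ≠ 0) :
    ∃ k₀, mdeg σ (intForm v) = Finsupp.single k₀ 1 ∧
      mcoef σ (intForm v) = v k₀ ∧ v k₀ ≠ 0 := by
  have hne : intForm v ≠ 0 := fun h => hv (intForm_eq_zero_iff.mp h)
  obtain ⟨k₀, hk₀⟩ := supp_intForm (mdeg_mem_support (σ := σ) hne)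
  refine ⟨k₀, hk₀, ?_, ?_⟩
  · rw [mcoef, hk₀, coeff_intForm]
  · rw [← coeff_intForm v k₀, ← hk₀]
    exact mcoef_ne_zero hne

/-- the linear coefficient extraction: coefficient of `x_k` in `A * intForm v` -/
lemma coeff_single_mul_intForm (A : MvPolynomial (Fin l) ℤ) (v : Fin l → ℤ) (k : Fin l) :
    (A * intForm v).coeff (Finsupp.single k 1) =
      MvPolynomial.constantCoeff A * v k := by
  rw [intForm_eq_sum_monomial, Finset.mul_sum, MvPolynomial.coeff_sum]
  have hterm : ∀ m : Fin l,
      (A * MvPolynomial.monomial (Finsupp.single m 1) (v m)).coeff (Finsupp.single k 1) =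
      if m = k then MvPolynomial.constantCoeff A * v k else 0 := by
    intro m
    rw [MvPolynomial.coeff_mul_monomial']
    by_cases hmk : m = k
    · subst hmk
      rw [if_pos le_rfl, if_pos rfl, tsub_self]
      rfl
    · rw [if_neg, if_neg hmk]
      rw [Finsupp.single_le_iff]
      simp only [Finsupp.single_apply]
      rw [if_neg (fun h => hmk h.symm)]
      omega
  rw [Finset.sum_congr rfl fun m _ => hterm m]
  rw [Finset.sum_ite_eq' Finset.univ k fun _ => MvPolynomial.constantCoeff A * v k]
  rw [if_pos (Finset.mem_univ k)]

end IntFormLemmas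

section Existence

variable {l : ℕ} {σ : MonomialOrder (Fin l)}

local notation "Rl" => MvPolynomial (Fin l) ℤ

lemma LMon_eq (f : Rl) : LMon σ f = MvPolynomial.monomial (mdeg σ f) (mcoef σ f) := rfl

lemma LCoef_eq (f : Rl) : LCoef σ f = mcoef σ f := rfl

lemma exists_finset_span_subset (s : Set Rl) :
    ∃ T : Finset Rl, ↑T ⊆ s ∧ Ideal.span (T : Set Rl) = Ideal.span s := by
  obtain ⟨F, hF⟩ := IsNoetherian.noetherian (Ideal.span s)
  have key : ∀ F' : Finset Rl, (∀ x ∈ F', x ∈ Ideal.span s) →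
      ∃ T : Finset Rl, ↑T ⊆ s ∧ ∀ x ∈ F', x ∈ Ideal.span (T : Set Rl) := by
    intro F'
    induction F' using Finset.induction_on with
    | empty => exact fun _ => ⟨∅, by simp, by simp⟩
    | @insert x F'' hx ih =>
      intro h
      obtain ⟨T1, hT1s, hT1⟩ := ih fun y hy => h y (Finset.mem_insert_of_mem hy)
      obtain ⟨T2, hT2s, hx2⟩ :=
        Submodule.mem_span_finite_of_mem_span (h x (Finset.mem_insert_self x F''))
      refine ⟨T1 ∪ T2, ?_, ?_⟩
      · rw [Finset.coe_union]
        exact Set.union_subset hT1s hT2s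
      · intro y hy
        rcases Finset.mem_insert.mp hy with rfl | hy'
        · exact Ideal.span_mono (by rw [Finset.coe_union]; exact Set.subset_union_right) hx2
        · exact Ideal.span_mono (by rw [Finset.coe_union]; exact Set.subset_union_left)
            (hT1 y hy')
  obtain ⟨T, hTs, hT⟩ := key F fun x hx => by
    rw [← hF]; exact Submodule.subset_span hx
  refine ⟨T, hTs, le_antisymm (Ideal.span_mono hTs) ?_⟩
  rw [← hF]
  exact Ideal.span_le.mpr fun x hx => hT x hx

/-- the ideal of achievable leading coefficients at exponent `d` -/
noncomputable def SIdeal (σ : MonomialOrder (Fin l)) (I : Ideal Rl) (d : Fin l →₀ ℕ) :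
    Ideal ℤ where
  carrier := {c | c = 0 ∨ ∃ f, f ∈ I ∧ f ≠ 0 ∧ mdeg σ f = d ∧ mcoef σ f = c}
  zero_mem' := Or.inl rfl
  add_mem' := by
    rintro a b (rfl | ⟨f1, hf1I, hf1ne, hd1, rfl⟩) hb
    · simpa using hb
    rcases hb with rfl | ⟨f2, hf2I, hf2ne, hd2, rfl⟩
    · rw [add_zero]
      exact Or.inr ⟨f1, hf1I, hf1ne, hd1, rfl⟩
    by_cases hz : mcoef σ f1 + mcoef σ f2 = 0
    · exact Or.inl hz
    right
    have hcoeff : (f1 + f2).coeff d = mcoef σ f1 + mcoef σ f2 := by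
      rw [MvPolynomial.coeff_add]
      rw [show f1.coeff d = mcoef σ f1 by rw [← hd1]; rfl,
        show f2.coeff d = mcoef σ f2 by rw [← hd2]; rfl]
    have hcne : (f1 + f2).coeff d ≠ 0 := by rw [hcoeff]; exact hz
    have hbound : ∀ e ∈ (f1 + f2).support, σ.toSyn e ≤ σ.toSyn d := by
      intro e he
      rcases Finset.mem_union.mp (MvPolynomial.support_add he) with h | h
      · exact hd1 ▸ le_toSyn_mdeg h
      · exact hd2 ▸ le_toSyn_mdeg h
    have hne : f1 + f2 ≠ 0 := fun h0 => hcne (by rw [h0]; simp)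
    obtain ⟨h1, h2⟩ := mdeg_eq_of_max (σ := σ) hcne hbound
    exact ⟨f1 + f2, I.add_mem hf1I hf2I, hne, h1, by rw [h2, hcoeff]⟩
  smul_mem' := by
    rintro r a (rfl | ⟨f, hfI, hfne, hd, rfl⟩)
    · simp
    by_cases hr : r = 0
    · subst hr; simp
    right
    have hC : (MvPolynomial.C r : Rl) ≠ 0 := by rwa [ne_eq, MvPolynomial.C_eq_zero]
    obtain ⟨h1, h2⟩ := mdeg_C_mul (σ := σ) hr hfne
    exact ⟨MvPolynomial.C r * f, I.mul_mem_left _ hfI, mul_ne_zero hC hfne,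
      by rw [h1, hd], by rw [h2]; rfl⟩

lemma mem_SIdeal {I : Ideal Rl} {d : Fin l →₀ ℕ} {c : ℤ} :
    c ∈ SIdeal σ I d ↔ c = 0 ∨ ∃ f, f ∈ I ∧ f ≠ 0 ∧ mdeg σ f = d ∧ mcoef σ f = c :=
  Iff.rfl

lemma span_eq_of_cov (I : Ideal Rl) (G : Finset Rl)
    (hGI : ∀ g ∈ G, g ∈ I) (hGne : ∀ g ∈ G, g ≠ 0)
    (hcov : ∀ f ∈ I, f ≠ 0 → ∃ g ∈ G, LMon σ g ∣ LMon σ f) :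
    Ideal.span (G : Set Rl) = I := by
  refine le_antisymm (Ideal.span_le.mpr fun g hg => hGI g hg) ?_
  have H : ∀ s : σ.syn, ∀ f, f ∈ I → σ.toSyn (mdeg σ f) = s →
      f ∈ Ideal.span (G : Set Rl) := by
    intro s
    induction s using WellFoundedLT.induction with
    | _ s IH =>
      intro f hfI hfs
      by_cases hf0 : f = 0
      · subst hf0; exact zero_mem _
      obtain ⟨g, hgG, hdvd⟩ := hcov f hfI hf0
      have hgne : g ≠ 0 := hGne g hgG
      rw [LMon_eq, LMon_eq, monomial_dvd_monomial_iff (mcoef_ne_zero hf0)] at hdvd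
      obtain ⟨hle, hdvdc⟩ := hdvd
      set c : ℤ := mcoef σ f / mcoef σ g with hc
      have hcmul : c * mcoef σ g = mcoef σ f := Int.ediv_mul_cancel hdvdc
      have hcne : c ≠ 0 := by
        intro h0
        exact mcoef_ne_zero hf0 (by rw [← hcmul, h0, zero_mul])
      set q : Rl := MvPolynomial.monomial (mdeg σ f - mdeg σ g) c * g with hqdef
      have hqq : q = MvPolynomial.C c * (MvPolynomial.monomial (mdeg σ f - mdeg σ g) 1 * g) := by
        rw [hqdef, ← mul_assoc, MvPolynomial.C_mul_monomial, mul_one]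
      have hmon := mdeg_monomial_mul (σ := σ) (δ := mdeg σ f - mdeg σ g) hgne
      have hmm : MvPolynomial.monomial (mdeg σ f - mdeg σ g) (1:ℤ) * g ≠ 0 :=
        mul_ne_zero (by rw [ne_eq, MvPolynomial.monomial_eq_zero]; exact one_ne_zero) hgne
      have hCm := mdeg_C_mul (σ := σ) hcne hmm
      have hq1 : mdeg σ q = mdeg σ f := by
        rw [hqq, hCm.1, hmon.1, tsub_add_cancel_of_le hle]
      have hq2 : mcoef σ q = mcoef σ f := by
        rw [hqq, hCm.2, hmon.2]
        exact hcmul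
      have hq_in_I : q ∈ I := I.mul_mem_left _ (hGI g hgG)
      have hqspan : q ∈ Ideal.span (G : Set Rl) :=
        Ideal.mul_mem_left _ _ (Ideal.subset_span hgG)
      by_cases hf' : f - q = 0
      · rw [show f = q from by rw [sub_eq_zero] at hf'; exact hf']
        exact hqspan
      · have hlt : σ.toSyn (mdeg σ (f - q)) < s := by
          rw [← hfs]
          apply mdeg_lt_of_bound hf'
          · intro d hd
            rcases Finset.mem_union.mp (MvPolynomial.support_sub (Fin l) f q hd) with h | h
            · exact le_toSyn_mdeg h
            · exact hq1 ▸ le_toSyn_mdeg h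
          · rw [MvPolynomial.coeff_sub,
              show q.coeff (mdeg σ f) = mcoef σ q by rw [← hq1]; rfl,
              show f.coeff (mdeg σ f) = mcoef σ f from rfl, hq2, sub_self]
        have hmem' := IH _ hlt (f - q) (I.sub_mem hfI hq_in_I) rfl
        rw [show f = (f - q) + q from by ring]
        exact add_mem hmem' hqspan
  exact fun f hf => H _ f hf rfl

lemma prune (I : Ideal Rl) :
    ∀ G₀ : Finset Rl, (∀ g ∈ G₀, g ∈ I ∧ g ≠ 0) →
    (∀ f ∈ I, f ≠ 0 → ∃ g ∈ G₀, LMon σ g ∣ LMon σ f) →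
    ∃ G : Finset Rl, (∀ g ∈ G, g ∈ I ∧ g ≠ 0) ∧
      (∀ f ∈ I, f ≠ 0 → ∃ g ∈ G, LMon σ g ∣ LMon σ f) ∧
      (∀ g ∈ G, ∀ g' ∈ G, g ≠ g' → ¬ LMon σ g ∣ LMon σ g') := by
  intro G₀
  induction G₀ using Finset.strongInductionOn with
  | _ G₀ IH =>
    intro hmem hcov
    by_cases hmin : ∀ g ∈ G₀, ∀ g' ∈ G₀, g ≠ g' → ¬ LMon σ g ∣ LMon σ g'
    · exact ⟨G₀, hmem, hcov, hmin⟩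
    push_neg at hmin
    obtain ⟨g, hg, g', hg', hne, hdvd⟩ := hmin
    apply IH (G₀.erase g') (Finset.erase_ssubset hg')
    · exact fun h hh => hmem h (Finset.mem_of_mem_erase hh)
    · intro f hfI hf0
      obtain ⟨h, hhG, hdvd2⟩ := hcov f hfI hf0
      by_cases hhg : h = g'
      · exact ⟨g, Finset.mem_erase.mpr ⟨hne, hg⟩, dvd_trans hdvd (hhg ▸ hdvd2)⟩
      · exact ⟨h, Finset.mem_erase.mpr ⟨hhg, hhG⟩, hdvd2⟩

theorem exists_minStrongGB (σ : MonomialOrder (Fin l)) (I : Ideal Rl) :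
    ∃ G : Finset Rl, MinStrongGB σ G I := by
  obtain ⟨T₁, hT₁sub, hT₁span⟩ :=
    exists_finset_span_subset ((fun f => LMon σ f) '' {f | f ∈ I ∧ f ≠ 0})
  have hwitex : ∀ m ∈ T₁, ∃ f, f ∈ I ∧ f ≠ 0 ∧ LMon σ f = m := by
    intro m hm
    obtain ⟨f, ⟨hfI, hfne⟩, hfm⟩ := hT₁sub hm
    exact ⟨f, hfI, hfne, hfm⟩
  set wit : Rl → Rl := fun m =>
    if h : ∃ f, f ∈ I ∧ f ≠ 0 ∧ LMon σ f = m then h.choose else 0 with hwitdef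
  have hwit_spec : ∀ m ∈ T₁, wit m ∈ I ∧ wit m ≠ 0 ∧ LMon σ (wit m) = m := by
    intro m hm
    have h := hwitex m hm
    rw [hwitdef]
    simp only [dif_pos h]
    exact h.choose_spec
  set T₀ : Finset Rl := T₁.image wit with hT₀def
  have hT₀I : ∀ g ∈ T₀, g ∈ I ∧ g ≠ 0 := by
    intro g hg
    obtain ⟨m, hm, rfl⟩ := Finset.mem_image.mp hg
    exact ⟨(hwit_spec m hm).1, (hwit_spec m hm).2.1⟩
  have hLMmem : ∀ f, f ∈ I → f ≠ 0 →
      LMon σ f ∈ Ideal.span (↑(T₀.image fun g => LMon σ g) : Set Rl) := by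
    intro f hfI hfne
    have h1 : LMon σ f ∈ Ideal.span ((fun f => LMon σ f) '' {f | f ∈ I ∧ f ≠ 0}) :=
      Ideal.subset_span ⟨f, ⟨hfI, hfne⟩, rfl⟩
    rw [← hT₁span] at h1
    refine Ideal.span_mono ?_ h1
    intro m hm
    rw [Finset.mem_coe] at hm
    rw [Finset.coe_image]
    exact ⟨wit m, Finset.mem_image_of_mem wit hm, (hwit_spec m hm).2.2⟩
  -- extraction lemma
  have hext : ∀ f, f ∈ I → f ≠ 0 → mcoef σ f ∈
      Ideal.span (↑((T₀.filter fun g => mdeg σ g ≤ mdeg σ f).image fun g => mcoef σ g) :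
        Set ℤ) := by
    intro f hfI hfne
    obtain ⟨w, hwsupp, hwsum⟩ := Submodule.mem_span_set.mp (hLMmem f hfI hfne)
    have hco : mcoef σ f = (w.sum fun mi r => r • mi).coeff (mdeg σ f) := by
      rw [hwsum, LMon_eq, MvPolynomial.coeff_monomial, if_pos rfl]
    rw [hco, Finsupp.sum, MvPolynomial.coeff_sum]
    apply Ideal.sum_mem
    intro m hm
    have hmem : m ∈ (T₀.image fun g => LMon σ g) := by
      have := hwsupp (Finset.mem_coe.mpr hm)
      rwa [Finset.mem_coe] at this
    obtain ⟨g, hgT₀, rfl⟩ := Finset.mem_image.mp hmem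
    rw [smul_eq_mul, LMon_eq, MvPolynomial.coeff_mul_monomial']
    by_cases hle : mdeg σ g ≤ mdeg σ f
    · rw [if_pos hle]
      apply Ideal.mul_mem_left
      apply Ideal.subset_span
      rw [Finset.coe_image]
      exact ⟨g, Finset.mem_coe.mpr (Finset.mem_filter.mpr ⟨hgT₀, hle⟩), rfl⟩
    · rw [if_neg hle]
      exact Ideal.zero_mem _
  -- principal generators
  have hprinc : ∀ d : Fin l →₀ ℕ, ∃ nd : ℤ, SIdeal σ I d = Ideal.span {nd} := fun d =>
    Submodule.IsPrincipal.principal (SIdeal σ I d)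
  choose nfun hnfun using hprinc
  set dT : Finset Rl → (Fin l →₀ ℕ) := fun T' => T'.sup fun g => mdeg σ g with hdTdef
  set Q : Finset Rl → Rl → Prop := fun T' g =>
    g ∈ I ∧ g ≠ 0 ∧ mdeg σ g = dT T' ∧ mcoef σ g = nfun (dT T') with hQdef
  set wit2 : Finset Rl → Rl := fun T' => if h : ∃ g, Q T' g then h.choose else 0 with hwit2def
  set G₀ : Finset Rl := (T₀.powerset.filter fun T' => ∃ g, Q T' g).image wit2 with hG₀def
  have hwit2_spec : ∀ T' : Finset Rl, (∃ g, Q T' g) → Q T' (wit2 T') := by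
    intro T' h
    rw [hwit2def]
    simp only [dif_pos h]
    exact h.choose_spec
  have hG₀mem : ∀ g ∈ G₀, g ∈ I ∧ g ≠ 0 := by
    intro g hg
    obtain ⟨T', hT', rfl⟩ := Finset.mem_image.mp hg
    have hq := hwit2_spec T' (Finset.mem_filter.mp hT').2
    exact ⟨hq.1, hq.2.1⟩
  have hG₀cov : ∀ f ∈ I, f ≠ 0 → ∃ g ∈ G₀, LMon σ g ∣ LMon σ f := by
    intro f hfI hfne
    set T' : Finset Rl := T₀.filter fun g => mdeg σ g ≤ mdeg σ f with hT'def
    have hsub1 : ∀ c ∈ ((T'.image fun g => mcoef σ g) : Finset ℤ),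
        c ∈ SIdeal σ I (dT T') := by
      intro c hc
      obtain ⟨g, hgT', rfl⟩ := Finset.mem_image.mp hc
      obtain ⟨hgT₀, hgle⟩ := Finset.mem_filter.mp hgT'
      obtain ⟨hgI, hgne⟩ := hT₀I g hgT₀
      have hgle2 : mdeg σ g ≤ dT T' := Finset.le_sup (f := fun g => mdeg σ g) hgT'
      have hM : (MvPolynomial.monomial (dT T' - mdeg σ g) (1:ℤ) : Rl) ≠ 0 := by
        rw [ne_eq, MvPolynomial.monomial_eq_zero]; exact one_ne_zero
      obtain ⟨h1, h2⟩ := mdeg_monomial_mul (σ := σ) (δ := dT T' - mdeg σ g) hgne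
      rw [mem_SIdeal]
      exact Or.inr ⟨MvPolynomial.monomial (dT T' - mdeg σ g) 1 * g,
        I.mul_mem_left _ hgI, mul_ne_zero hM hgne,
        by rw [h1, tsub_add_cancel_of_le hgle2], h2⟩
    have hmc : mcoef σ f ∈ SIdeal σ I (dT T') := by
      have h := hext f hfI hfne
      exact Ideal.span_le.mpr (fun c hc => hsub1 c (Finset.mem_coe.mp hc)) h
    have hdvdn : nfun (dT T') ∣ mcoef σ f := by
      rw [hnfun] at hmc
      exact Ideal.mem_span_singleton.mp hmc
    have hn0 : nfun (dT T') ≠ 0 := by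
      intro h
      rw [h] at hdvdn
      exact mcoef_ne_zero hfne (zero_dvd_iff.mp hdvdn)
    have hQex : ∃ g, Q T' g := by
      have hmemn : nfun (dT T') ∈ SIdeal σ I (dT T') := by
        rw [hnfun]
        exact Ideal.mem_span_singleton.mpr dvd_rfl
      rcases mem_SIdeal.mp hmemn with h | ⟨g, hgI, hgne, hgd, hgc⟩
      · exact absurd h hn0
      · exact ⟨g, hgI, hgne, hgd, hgc⟩
    have hT'mem : T' ∈ T₀.powerset.filter fun T'' => ∃ g, Q T'' g :=
      Finset.mem_filter.mpr ⟨Finset.mem_powerset.mpr (Finset.filter_subset _ _), hQex⟩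
    have hq := hwit2_spec T' hQex
    refine ⟨wit2 T', Finset.mem_image_of_mem wit2 hT'mem, ?_⟩
    rw [LMon_eq, LMon_eq, hq.2.2.1, hq.2.2.2,
      monomial_dvd_monomial_iff (mcoef_ne_zero hfne)]
    refine ⟨Finset.sup_le fun g hg => (Finset.mem_filter.mp hg).2, hdvdn⟩
  obtain ⟨G, hGmem, hGcov, hGmin⟩ := prune I G₀ hG₀mem hG₀cov
  exact ⟨G, fun g hg => (hGmem g hg).2,
    span_eq_of_cov I G (fun g hg => (hGmem g hg).1) (fun g hg => (hGmem g hg).2) hGcov,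
    hGcov, hGmin⟩

end Existence

section Descent

variable {l : ℕ}

lemma descent (σ : MonomialOrder (Fin l)) {p : ℕ} (hp : p.Prime) (va vb : Fin l → ℤ)
    (G : Finset (MvPolynomial (Fin l) ℤ))
    (hGI : ∀ g ∈ G, g ∈ Ideal.span {intForm va, intForm vb})
    (hGne : ∀ g ∈ G, g ≠ 0)
    (hcov : ∀ f ∈ Ideal.span {intForm va, intForm vb}, f ≠ 0 → ∃ g ∈ G, LMon σ g ∣ LMon σ f)
    (hluck : ∀ g ∈ G, ¬ (p : ℤ) ∣ LCoef σ g) :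
    ∀ h₀ : Fin l → ℤ, (p : ℤ) • h₀ ∈ Submodule.span ℤ ({va, vb} : Set (Fin l → ℤ)) →
      h₀ ∈ Submodule.span ℤ ({va, vb} : Set (Fin l → ℤ)) := by
  set I : Ideal (MvPolynomial (Fin l) ℤ) := Ideal.span {intForm va, intForm vb} with hIdef
  set M : Submodule ℤ (Fin l → ℤ) := Submodule.span ℤ ({va, vb} : Set (Fin l → ℤ)) with hMdef
  have hvaI : intForm va ∈ I := Ideal.subset_span (by left; rfl)
  have hvbI : intForm vb ∈ I := Ideal.subset_span (by right; rfl)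
  have M2I : ∀ m : Fin l → ℤ, m ∈ M → intForm m ∈ I := by
    intro m hmem
    obtain ⟨α, β, hab⟩ := Submodule.mem_span_pair.mp hmem
    rw [← hab, intForm_add, intForm_smul, intForm_smul]
    exact add_mem (Ideal.mul_mem_left _ _ hvaI) (Ideal.mul_mem_left _ _ hvbI)
  have hcc : ∀ g ∈ I, MvPolynomial.constantCoeff g = 0 := by
    have hle : I ≤ RingHom.ker (MvPolynomial.constantCoeff (σ := Fin l) (R := ℤ)) := by
      rw [hIdef]
      apply Ideal.span_le.mpr
      rintro x hx
      rcases hx with rfl | hx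
      · exact RingHom.mem_ker.mpr (constantCoeff_intForm va)
      · rw [Set.mem_singleton_iff] at hx
        subst hx
        exact RingHom.mem_ker.mpr (constantCoeff_intForm vb)
    exact fun g hg => RingHom.mem_ker.mp (hle hg)
  have gvec : ∀ g ∈ I, (fun k => g.coeff (Finsupp.single k 1)) ∈ M := by
    intro g hg
    obtain ⟨A, B, hAB⟩ := Ideal.mem_span_pair.mp hg
    apply Submodule.mem_span_pair.mpr
    refine ⟨MvPolynomial.constantCoeff A, MvPolynomial.constantCoeff B, ?_⟩
    funext k
    rw [← hAB, MvPolynomial.coeff_add, coeff_single_mul_intForm, coeff_single_mul_intForm]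
    simp [mul_comm]
  have hp0 : (p : ℤ) ≠ 0 := by exact_mod_cast hp.ne_zero
  have main : ∀ s : σ.syn, ∀ h₀ : Fin l → ℤ, σ.toSyn (mdeg σ (intForm h₀)) = s →
      (p : ℤ) • h₀ ∈ M → h₀ ∈ M := by
    intro s
    induction s using WellFoundedLT.induction with
    | _ s IH =>
      intro h₀ hs hmem
      by_cases h0 : h₀ = 0
      · subst h0; exact zero_mem _
      have hph0 : (p : ℤ) • h₀ ≠ 0 := by
        intro h
        rcases smul_eq_zero.mp h with h | h
        · exact hp0 h
        · exact h0 h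
      obtain ⟨k₀, hk₀d, hk₀c, hk₀ne⟩ := mdeg_intForm (σ := σ) h0
      have hint : intForm ((p : ℤ) • h₀) = MvPolynomial.C (p : ℤ) * intForm h₀ :=
        intForm_smul _ _
      have hIne : intForm ((p : ℤ) • h₀) ≠ 0 := fun h => hph0 (intForm_eq_zero_iff.mp h)
      have hIint : intForm ((p : ℤ) • h₀) ∈ I := M2I _ hmem
      obtain ⟨g, hgG, hdvd⟩ := hcov _ hIint hIne
      have hintne : intForm h₀ ≠ 0 := fun h => h0 (intForm_eq_zero_iff.mp h)
      obtain ⟨hdm, hcm⟩ := mdeg_C_mul (σ := σ) hp0 hintne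
      have hLM : LMon σ (intForm ((p : ℤ) • h₀)) =
          MvPolynomial.monomial (Finsupp.single k₀ 1) ((p : ℤ) * h₀ k₀) := by
        rw [LMon_eq, hint, hdm, hcm, hk₀d, hk₀c]
      rw [hLM, LMon_eq] at hdvd
      obtain ⟨hle, hdvdc⟩ :=
        (monomial_dvd_monomial_iff (mul_ne_zero hp0 hk₀ne)).mp hdvd
      have hcases : mdeg σ g = 0 ∨ mdeg σ g = Finsupp.single k₀ 1 := by
        by_cases hz : mdeg σ g k₀ = 0
        · left
          ext k
          by_cases hk : k = k₀
          · subst hk; simpa using hz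
          · have := (Finsupp.le_def.mp hle) k
            rw [Finsupp.single_apply, if_neg (fun h => hk h.symm)] at this
            simpa using Nat.le_zero.mp this
        · right
          ext k
          by_cases hk : k = k₀
          · subst hk
            have := (Finsupp.le_def.mp hle) k
            rw [Finsupp.single_apply, if_pos rfl] at this
            rw [Finsupp.single_apply, if_pos rfl]
            omega
          · have := (Finsupp.le_def.mp hle) k
            rw [Finsupp.single_apply, if_neg (fun h => hk h.symm)] at this
            rw [Finsupp.single_apply, if_neg (fun h => hk h.symm)]
            omega
      rcases hcases with hzero | hsingle
      · exfalso
        have hgC : g = MvPolynomial.C (g.coeff 0) := mdeg_zero_imp hzero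
        have hg0 : g.coeff 0 = 0 := hcc g (hGI g hgG)
        exact hGne g hgG (by rw [hgC, hg0, map_zero])
      · set m₁ : Fin l → ℤ := fun k => g.coeff (Finsupp.single k 1) with hm₁def
        have hm₁M : m₁ ∈ M := gvec g (hGI g hgG)
        have hc₁ : m₁ k₀ = mcoef σ g := by
          rw [hm₁def]
          show g.coeff (Finsupp.single k₀ 1) = mcoef σ g
          rw [mcoef, hsingle]
        have hc₁ne : mcoef σ g ≠ 0 := mcoef_ne_zero (hGne g hgG)
        have hpnd : ¬ (p : ℤ) ∣ mcoef σ g := by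
          have := hluck g hgG
          rwa [LCoef_eq] at this
        have hcop : IsCoprime (mcoef σ g) ((p : ℤ)) := by
          rw [Int.isCoprime_iff_gcd_eq_one]
          by_contra hne
          have hdp : (Int.gcd (mcoef σ g) (p : ℤ) : ℤ) ∣ (p : ℤ) := Int.gcd_dvd_right _ _
          have hgp : Int.gcd (mcoef σ g) (p : ℤ) ∣ p := by
            exact_mod_cast hdp
          rcases (Nat.Prime.eq_one_or_self_of_dvd hp _ hgp) with h | h
          · exact hne h
          · apply hpnd
            rw [← h]
            exact_mod_cast Int.gcd_dvd_left _ _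
        have hdvd2 : mcoef σ g ∣ h₀ k₀ := by
          exact hcop.dvd_of_dvd_mul_left hdvdc
        set m' : ℤ := h₀ k₀ / mcoef σ g with hm'def
        have hm'c : m' * mcoef σ g = h₀ k₀ := Int.ediv_mul_cancel hdvd2
        set e₀ : Fin l → ℤ := h₀ - m' • m₁ with he₀def
        have he₀M : (p : ℤ) • e₀ ∈ M := by
          rw [he₀def, smul_sub]
          exact sub_mem hmem (M.smul_mem _ (M.smul_mem _ hm₁M))
        have he₀k₀ : e₀ k₀ = 0 := by
          rw [he₀def]
          simp only [Pi.sub_apply, Pi.smul_apply, smul_eq_mul]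
          rw [hc₁, hm'c, sub_self]
        by_cases he₀ : e₀ = 0
        · have heq : h₀ = m' • m₁ := by
            have := he₀def ▸ he₀
            rwa [sub_eq_zero] at this
          rw [heq]
          exact M.smul_mem _ hm₁M
        · have hlt : σ.toSyn (mdeg σ (intForm e₀)) < s := by
            rw [← hs]
            obtain ⟨k₁, hk₁d, hk₁c, hk₁ne⟩ := mdeg_intForm (σ := σ) he₀
            rw [hk₁d, hk₀d]
            have hk₁0 : k₁ ≠ k₀ := by
              intro h
              rw [h] at hk₁ne
              exact hk₁ne he₀k₀
            have hor : h₀ k₁ ≠ 0 ∨ m₁ k₁ ≠ 0 := by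
              by_contra hcon
              push_neg at hcon
              apply hk₁ne
              rw [he₀def]
              simp [hcon.1, hcon.2]
            have hb : σ.toSyn (Finsupp.single k₁ 1) ≤ σ.toSyn (Finsupp.single k₀ 1) := by
              rcases hor with h | h
              · have hmem2 : Finsupp.single k₁ 1 ∈ (intForm h₀).support := by
                  rw [MvPolynomial.mem_support_iff, coeff_intForm]; exact h
                have := le_toSyn_mdeg (σ := σ) hmem2
                rwa [hk₀d] at this
              · have hmem2 : Finsupp.single k₁ 1 ∈ g.support := by
                  rw [MvPolynomial.mem_support_iff]; exact h
                have := le_toSyn_mdeg (σ := σ) hmem2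
                rwa [hsingle] at this
            rcases lt_or_eq_of_le hb with h | h
            · exact h
            · exact absurd
                (Finsupp.single_left_injective (one_ne_zero : (1:ℕ) ≠ 0) (σ.toSyn.injective h))
                hk₁0
          have he₀M' := IH _ hlt e₀ rfl he₀M
          have heq : h₀ = e₀ + m' • m₁ := by
            rw [he₀def]
            abel
          rw [heq]
          exact add_mem he₀M' (M.smul_mem _ hm₁M)
  exact fun h₀ hm => main _ h₀ rfl hm

end Descent

section FieldSide

variable {l : ℕ} {K : Type*} [Field K]

lemma isUnit_imp_C (σ : MonomialOrder (Fin l)) {u : MvPolynomial (Fin l) K}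
    (hu : IsUnit u) : ∃ c : K, c ≠ 0 ∧ u = MvPolynomial.C c := by
  obtain ⟨v, hv⟩ := isUnit_iff_exists_inv.mp hu
  have hu0 : u ≠ 0 := by
    rintro rfl
    rw [zero_mul] at hv
    exact one_ne_zero hv.symm
  have hv0 : v ≠ 0 := by
    rintro rfl
    rw [mul_zero] at hv
    exact one_ne_zero hv.symm
  have h1 := (mdeg_mul (σ := σ) hu0 hv0).1
  rw [hv] at h1
  have hone : mdeg σ (1 : MvPolynomial (Fin l) K) = 0 := by
    have := (mdeg_monomial (σ := σ) (d := (0 : Fin l →₀ ℕ)) (one_ne_zero : (1:K) ≠ 0)).1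
    rwa [MvPolynomial.monomial_zero', MvPolynomial.C_1] at this
  rw [hone] at h1
  have hu0d : mdeg σ u = 0 := by
    have := h1.symm
    have h2 : mdeg σ u = 0 ∧ mdeg σ v = 0 := by
      constructor <;> (ext k; have := congrFun (congrArg (fun f : Fin l →₀ ℕ => (f : Fin l → ℕ)) this) k)
      · simp only [Finsupp.coe_add, Pi.add_apply, Finsupp.coe_zero, Pi.zero_apply] at this
        simp only [Finsupp.coe_zero, Pi.zero_apply]
        omega
      · simp only [Finsupp.coe_add, Pi.add_apply, Finsupp.coe_zero, Pi.zero_apply] at this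
        simp only [Finsupp.coe_zero, Pi.zero_apply]
        omega
    exact h2.1
  refine ⟨u.coeff 0, ?_, mdeg_zero_imp hu0d⟩
  intro hc
  apply hu0
  rw [mdeg_zero_imp hu0d, hc, map_zero]

lemma irreducible_of_mdeg_single (σ : MonomialOrder (Fin l)) {F : MvPolynomial (Fin l) K}
    (hF : F ≠ 0) {k₀ : Fin l} (hk₀ : mdeg σ F = Finsupp.single k₀ 1) : Irreducible F := by
  constructor
  · intro hu
    obtain ⟨c, hc, rfl⟩ := isUnit_imp_C σ hu
    have hdC : mdeg σ (MvPolynomial.C c : MvPolynomial (Fin l) K) = 0 := by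
      have := (mdeg_monomial (σ := σ) (d := (0 : Fin l →₀ ℕ)) hc).1
      rwa [← MvPolynomial.C_apply] at this
    rw [hdC] at hk₀
    exact (one_ne_zero : (1:ℕ) ≠ 0) (Finsupp.single_eq_zero.mp hk₀.symm)
  · intro g h hgh
    have hg0 : g ≠ 0 := by rintro rfl; rw [zero_mul] at hgh; exact hF hgh
    have hh0 : h ≠ 0 := by rintro rfl; rw [mul_zero] at hgh; exact hF hgh
    have hadd : mdeg σ g + mdeg σ h = Finsupp.single k₀ 1 := by
      rw [← hk₀, hgh]
      exact ((mdeg_mul (σ := σ) hg0 hh0).1).symm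
    have hor : mdeg σ g = 0 ∨ mdeg σ h = 0 := by
      by_cases hz : mdeg σ g k₀ = 0
      · left
        ext k
        have hk := congrFun (congrArg (fun f : Fin l →₀ ℕ => (f : Fin l → ℕ)) hadd) k
        simp only [Finsupp.coe_add, Pi.add_apply] at hk
        rw [show ((Finsupp.single k₀ 1 : Fin l →₀ ℕ) : Fin l → ℕ) k
            = if k₀ = k then 1 else 0 from Finsupp.single_apply] at hk
        simp only [Finsupp.coe_zero, Pi.zero_apply]
        by_cases hkk : k₀ = k
        · subst hkk; rw [if_pos rfl] at hk; omega
        · rw [if_neg hkk] at hk; omega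
      · right
        ext k
        have hk := congrFun (congrArg (fun f : Fin l →₀ ℕ => (f : Fin l → ℕ)) hadd) k
        simp only [Finsupp.coe_add, Pi.add_apply] at hk
        rw [show ((Finsupp.single k₀ 1 : Fin l →₀ ℕ) : Fin l → ℕ) k
            = if k₀ = k then 1 else 0 from Finsupp.single_apply] at hk
        simp only [Finsupp.coe_zero, Pi.zero_apply]
        by_cases hkk : k₀ = k
        · subst hkk; rw [if_pos rfl] at hk; omega
        · rw [if_neg hkk] at hk; omega
    have hCu : ∀ w : MvPolynomial (Fin l) K, w ≠ 0 → mdeg σ w = 0 → IsUnit w := by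
      intro w hw0 hwd
      have hwC := mdeg_zero_imp hwd
      have hc : w.coeff 0 ≠ 0 := by
        intro hcc
        apply hw0
        rw [hwC, hcc, map_zero]
      apply IsUnit.of_mul_eq_one (a := w) (MvPolynomial.C (w.coeff 0)⁻¹)
      nth_rewrite 1 [hwC]
      rw [← map_mul, mul_inv_cancel₀ hc, MvPolynomial.C_1]
    rcases hor with h1 | h1
    · exact Or.inl (hCu g hg0 h1)
    · exact Or.inr (hCu h hh0 h1)

lemma assoc_of_not_squarefree {n : ℕ} (β : Fin n → MvPolynomial (Fin l) K)
    (hirr : ∀ i, Irreducible (β i)) (h : ¬ Squarefree (∏ i, β i)) :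
    ∃ i j, i ≠ j ∧ Associated (β i) (β j) := by
  rw [Squarefree] at h
  push_neg at h
  obtain ⟨x, hx2, hxu⟩ := h
  have hprodne : (∏ i, β i) ≠ 0 :=
    Finset.prod_ne_zero_iff.mpr fun i _ => (hirr i).ne_zero
  have hx0 : x ≠ 0 := by
    rintro rfl
    rw [mul_zero] at hx2
    exact hprodne (zero_dvd_iff.mp hx2)
  obtain ⟨q, hqirr, hqdvd⟩ := WfDvdMonoid.exists_irreducible_factor hxu hx0
  have hqprime : Prime q := UniqueFactorizationMonoid.irreducible_iff_prime.mp hqirr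
  have hqdvdP : q ∣ ∏ i, β i := hqdvd.trans ((dvd_mul_right x x).trans hx2)
  obtain ⟨i, _, hqi⟩ := (Prime.dvd_finset_prod_iff hqprime β).mp hqdvdP
  have hq2 : q * q ∣ ∏ i, β i := (mul_dvd_mul hqdvd hqdvd).trans hx2
  have hai : Associated q (β i) := hqirr.associated_of_dvd (hirr i) hqi
  have hsplit : (∏ j, β j) = β i * ∏ j ∈ Finset.univ.erase i, β j :=
    (Finset.mul_prod_erase Finset.univ β (Finset.mem_univ i)).symm
  obtain ⟨u, hu⟩ := id hai
  have hq0 : q ≠ 0 := hqirr.ne_zero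
  have hqrest : q ∣ ∏ j ∈ Finset.univ.erase i, β j := by
    have h2 : q * q ∣ q * (↑u * ∏ j ∈ Finset.univ.erase i, β j) := by
      rw [← mul_assoc, hu, ← hsplit]
      exact hq2
    have h3 := (mul_dvd_mul_iff_left hq0).mp h2
    rcases hqprime.2.2 _ _ h3 with h4 | h4
    · exact absurd (isUnit_of_dvd_unit h4 u.isUnit) hqirr.1
    · exact h4
  obtain ⟨j, hjmem, hqj⟩ := (Prime.dvd_finset_prod_iff hqprime β).mp hqrest
  have hij : j ≠ i := (Finset.mem_erase.mp hjmem).1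
  exact ⟨i, j, fun hh => hij hh.symm,
    hai.symm.trans (hqirr.associated_of_dvd (hirr j) hqj)⟩

end FieldSide

section Geometry

variable {l : ℕ}

lemma adim_two (W : Fin 2 → Fin l → ℚ) (hA : W 0 ≠ 0)
    (h1 : ∀ c : ℚ, ¬ ∀ k, W 1 k = c * W 0 k) :
    adim ℚ (⋂ j, hypSet ℚ (W j) 0) = (l : ℤ) - 2 := by
  classical
  set ψ : (Fin l → ℚ) →ₗ[ℚ] (Fin 2 → ℚ) :=
    { toFun := fun x j => ∑ k, W j k * x k
      map_add' := by
        intro x y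
        funext j
        simp only [Pi.add_apply, mul_add]
        rw [Finset.sum_add_distrib]
      map_smul' := by
        intro c x
        funext j
        simp only [Pi.smul_apply, smul_eq_mul, RingHom.id_apply, Finset.mul_sum]
        exact Finset.sum_congr rfl fun k _ => by ring } with hψdef
  have hψapp : ∀ x j, ψ x j = ∑ k, W j k * x k := fun x j => rfl
  have hker : (⋂ j, hypSet ℚ (W j) 0) = (LinearMap.ker ψ : Set (Fin l → ℚ)) := by
    ext x
    simp only [Set.mem_iInter, hypSet, Set.mem_setOf_eq, SetLike.mem_coe, LinearMap.mem_ker]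
    constructor
    · intro h
      funext j
      rw [Pi.zero_apply, ← h j]
      exact hψapp x j
    · intro h j
      rw [← hψapp x j, h]
      rfl
  have h0mem : (0 : Fin l → ℚ) ∈ ⋂ j, hypSet ℚ (W j) 0 := by
    refine Set.mem_iInter.mpr fun j => ?_
    simp [hypSet]
  have hSne : (⋂ j, hypSet ℚ (W j) 0) ≠ ∅ :=
    Set.nonempty_iff_ne_empty.mp ⟨0, h0mem⟩
  obtain ⟨k, hk⟩ := Function.ne_iff.mp hA
  rw [Pi.zero_apply] at hk
  by_cases hprop : ∀ m, W 0 k * W 1 m - W 1 k * W 0 m = 0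
  · exfalso
    apply h1 (W 1 k / W 0 k)
    intro m
    have := hprop m
    field_simp
    linarith [hprop m]
  push_neg at hprop
  obtain ⟨m, hD⟩ := hprop
  set D : ℚ := W 0 k * W 1 m - W 1 k * W 0 m with hDdef
  have hkm : k ≠ m := by
    intro h
    subst h
    apply hD
    ring
  have hsurj : Function.Surjective ψ := by
    intro w
    set α : ℚ := (W 1 m * w 0 - W 0 m * w 1) / D with hαdef
    set β : ℚ := (W 0 k * w 1 - W 1 k * w 0) / D with hβdef
    refine ⟨Pi.single k α + Pi.single m β, ?_⟩
    have hψs : ∀ j, ψ (Pi.single k α + Pi.single m β) j = W j k * α + W j m * β := by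
      intro j
      rw [hψapp]
      simp only [Pi.add_apply]
      have hsplit : (∑ x : Fin l, W j x * ((Pi.single k α : Fin l → ℚ) x + (Pi.single m β : Fin l → ℚ) x))
            = (∑ x : Fin l, W j x * (Pi.single k α : Fin l → ℚ) x)
              + (∑ x : Fin l, W j x * (Pi.single m β : Fin l → ℚ) x) := by
        rw [← Finset.sum_add_distrib]
        exact Finset.sum_congr rfl fun x _ => by ring
      rw [hsplit]
      congr 1
      · rw [Finset.sum_eq_single k]
        · rw [Pi.single_eq_same]
        · intro b _ hb
          rw [Pi.single_eq_of_ne hb, mul_zero]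
        · intro hh; exact absurd (Finset.mem_univ k) hh
      · rw [Finset.sum_eq_single m]
        · rw [Pi.single_eq_same]
        · intro b _ hb
          rw [Pi.single_eq_of_ne hb, mul_zero]
        · intro hh; exact absurd (Finset.mem_univ m) hh
    funext j
    rw [hψs j]
    fin_cases j
    · show W 0 k * α + W 0 m * β = w 0
      rw [hαdef, hβdef]
      field_simp
      ring
    · show W 1 k * α + W 1 m * β = w 1
      rw [hαdef, hβdef]
      field_simp
      ring
  have hrange : LinearMap.range ψ = ⊤ := LinearMap.range_eq_top.mpr hsurj
  have hrn := LinearMap.finrank_range_add_finrank_ker ψ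
  rw [hrange, finrank_top] at hrn
  rw [Module.finrank_pi ℚ, Module.finrank_pi ℚ] at hrn
  simp only [Fintype.card_fin] at hrn
  have hdir : (affineSpan ℚ (⋂ j, hypSet ℚ (W j) 0)).direction = LinearMap.ker ψ := by
    rw [direction_affineSpan, hker]
    apply le_antisymm
    · rw [vectorSpan_def]
      apply Submodule.span_le.mpr
      rintro v hv
      obtain ⟨x, hx, y, hy, rfl⟩ := hv
      rw [SetLike.mem_coe] at hx hy
      exact SetLike.mem_coe.mpr (sub_mem hx hy)
    · intro x hx
      have hx0 : x = x -ᵥ (0 : Fin l → ℚ) := by rw [vsub_eq_sub, sub_zero]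
      rw [vectorSpan_def, hx0]
      apply Submodule.subset_span
      exact Set.vsub_mem_vsub (SetLike.mem_coe.mpr hx) (SetLike.mem_coe.mpr (zero_mem _))
  rw [adim, if_neg hSne, hdir]
  omega

end Geometry

end StmtAux

/-- Theorem 6.3: if `p` is `(σ,2)`-lucky for the central arrangement `𝒜`
(with primitive, pairwise non-proportional integral forms), then `p` is good for `𝒜`, i.e.
the reduction of `Q(𝒜) = ∏ αᵢ` modulo `p` is squarefree. -/
theorem stmt13 {l n : ℕ} (a : Fin n → Fin l → ℤ) (hprim : Primitive a)
    (hdist : ∀ i j : Fin n, i ≠ j → ∀ c : ℚ, ¬ ∀ k, (a j k : ℚ) = c * (a i k : ℚ))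
    (σ : MonomialOrder (Fin l)) (p : ℕ) (hp : p.Prime)
    (hlucky : SigmaKLucky σ a 2 p) :
    Squarefree (MvPolynomial.map (Int.castRingHom (ZMod p)) (∏ i, intForm (a i))) := by
  classical
  haveI : Fact p.Prime := ⟨hp⟩
  by_contra hsq
  open StmtAux in
  set π : ℤ →+* ZMod p := Int.castRingHom (ZMod p) with hπdef
  set β : Fin n → MvPolynomial (Fin l) (ZMod p) :=
    fun i => MvPolynomial.map π (intForm (a i)) with hβdef
  have hprodeq : MvPolynomial.map π (∏ i, intForm (a i)) = ∏ i, β i := by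
    rw [map_prod]
  rw [hprodeq] at hsq
  have hβcoeff : ∀ i k, (β i).coeff (Finsupp.single k 1) = π (a i k) := by
    intro i k
    rw [hβdef]
    rw [MvPolynomial.coeff_map, StmtAux.coeff_intForm]
  have hβne : ∀ i, β i ≠ 0 := by
    intro i h
    obtain ⟨k, hk⟩ := hprim i p hp
    apply hk
    have h2 := hβcoeff i k
    rw [h, MvPolynomial.coeff_zero] at h2
    have h3 : ((a i k : ℤ) : ZMod p) = 0 := h2.symm
    exact (ZMod.intCast_zmod_eq_zero_iff_dvd _ p).mp h3
  have hβirr : ∀ i, Irreducible (β i) := by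
    intro i
    have hne := hβne i
    have hsupp := StmtAux.mdeg_mem_support (σ := σ) hne
    have hsub := MvPolynomial.support_map_subset π (intForm (a i)) hsupp
    obtain ⟨k₀, hk₀⟩ := StmtAux.supp_intForm hsub
    exact StmtAux.irreducible_of_mdeg_single σ hne hk₀
  obtain ⟨i1, j1, hij, hassoc⟩ := StmtAux.assoc_of_not_squarefree β hβirr hsq
  obtain ⟨i₀, j₀, hlt, hassoc'⟩ : ∃ i₀ j₀, i₀ < j₀ ∧ Associated (β i₀) (β j₀) := by
    rcases lt_or_gt_of_ne hij with h | h
    · exact ⟨i1, j1, h, hassoc⟩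
    · exact ⟨j1, i1, h, hassoc.symm⟩
  obtain ⟨u, hu⟩ := hassoc'
  obtain ⟨γ, hγ0, hγ⟩ := StmtAux.isUnit_imp_C σ u.isUnit
  have hrel : ∀ k, π (a j₀ k) = γ * π (a i₀ k) := by
    intro k
    rw [← hβcoeff j₀ k, ← hu, hγ, mul_comm, MvPolynomial.coeff_C_mul, hβcoeff]
  obtain ⟨c, hc⟩ := ZMod.intCast_surjective (n := p) γ
  have hdvd : ∀ k, (p : ℤ) ∣ a j₀ k - c * a i₀ k := by
    intro k
    have h1 := hrel k
    rw [← hc] at h1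
    rw [← ZMod.intCast_zmod_eq_zero_iff_dvd]
    push_cast
    have h2 : ((a j₀ k : ℤ) : ZMod p) = (c : ZMod p) * ((a i₀ k : ℤ) : ZMod p) := h1
    rw [h2]
    ring
  set t : Fin 2 → Fin n := ![i₀, j₀] with htdef
  have ht0 : t 0 = i₀ := rfl
  have ht1 : t 1 = j₀ := rfl
  have hsm : StrictMono t := by
    intro x y hxy
    fin_cases x <;> fin_cases y
    · exact absurd hxy (lt_irrefl _)
    · exact hlt
    · exact absurd hxy (by decide)
    · exact absurd hxy (lt_irrefl _)
  have hA0 : (fun k => ((a i₀ k : ℤ) : ℚ)) ≠ (0 : Fin l → ℚ) := by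
    obtain ⟨k, hk⟩ := hprim i₀ 2 Nat.prime_two
    intro h
    apply hk
    have h2 := congrFun h k
    rw [Pi.zero_apply, Int.cast_eq_zero] at h2
    rw [h2]
    exact dvd_zero _
  have hadim : adim ℚ (⋂ j', hypSet ℚ (fun k => ((a (t j') k : ℤ) : ℚ)) 0)
      = (l : ℤ) - 2 := by
    apply StmtAux.adim_two
    · exact hA0
    · intro cq hcq
      apply hdist i₀ j₀ (ne_of_lt hlt) cq
      intro k
      exact hcq k
  have hluckI := hlucky t hsm (by exact_mod_cast hadim)
  have hI : (Ideal.span (Set.range fun j' => intForm (a (t j'))))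
      = Ideal.span {intForm (a i₀), intForm (a j₀)} := by
    congr 1
    ext x
    simp only [Set.mem_range, Set.mem_insert_iff, Set.mem_singleton_iff]
    constructor
    · rintro ⟨j', rfl⟩
      fin_cases j'
      · left; rfl
      · right; rfl
    · rintro (rfl | rfl)
      · exact ⟨0, rfl⟩
      · exact ⟨1, rfl⟩
  rw [hI] at hluckI
  obtain ⟨G, hG⟩ := StmtAux.exists_minStrongGB σ (Ideal.span {intForm (a i₀), intForm (a j₀)})
  have hnop := hluckI G hG
  obtain ⟨hGne, hGspan, hGcov, hGmin⟩ := hG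
  have hGI : ∀ g ∈ G, g ∈ Ideal.span {intForm (a i₀), intForm (a j₀)} := by
    intro g hg
    rw [← hGspan]
    exact Ideal.subset_span hg
  set h₀ : Fin l → ℤ := fun k => (a j₀ k - c * a i₀ k) / p with hh₀def
  have hph₀ : (p : ℤ) • h₀ = (fun k => a j₀ k - c * a i₀ k) := by
    funext k
    rw [Pi.smul_apply, smul_eq_mul, hh₀def]
    exact Int.mul_ediv_cancel' (hdvd k)
  have hva : a i₀ ∈ Submodule.span ℤ ({a i₀, a j₀} : Set (Fin l → ℤ)) :=
    Submodule.subset_span (by left; rfl)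
  have hvb : a j₀ ∈ Submodule.span ℤ ({a i₀, a j₀} : Set (Fin l → ℤ)) :=
    Submodule.subset_span (by right; rfl)
  have hmem : (p : ℤ) • h₀ ∈ Submodule.span ℤ ({a i₀, a j₀} : Set (Fin l → ℤ)) := by
    rw [hph₀]
    have heq : (fun k => a j₀ k - c * a i₀ k) = a j₀ - c • a i₀ := by
      funext k
      simp [mul_comm]
    rw [heq]
    exact sub_mem hvb (Submodule.smul_mem _ _ hva)
  have hdes := StmtAux.descent σ hp (a i₀) (a j₀) G hGI hGne hGcov hnop h₀ hmem
  obtain ⟨α', β', hαβ⟩ := Submodule.mem_span_pair.mp hdes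
  have hkey : ∀ k, a j₀ k - c * a i₀ k = p * (α' * a i₀ k + β' * a j₀ k) := by
    intro k
    have h1 := congrFun hαβ k
    simp only [Pi.add_apply, Pi.smul_apply, smul_eq_mul] at h1
    have h2 := congrFun hph₀ k
    rw [Pi.smul_apply, smul_eq_mul] at h2
    rw [← h2, ← h1]
  by_cases hβ1 : (1 : ℤ) - p * β' = 0
  · have hdvd1 : (p : ℤ) ∣ 1 := ⟨β', by linarith⟩
    have h1 := Int.le_of_dvd one_pos hdvd1
    have h2 : (2 : ℤ) ≤ (p : ℤ) := by exact_mod_cast hp.two_le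
    omega
  · apply hdist i₀ j₀ (ne_of_lt hlt)
      (((c + p * α' : ℤ) : ℚ) / ((1 - p * β' : ℤ) : ℚ))
    intro k
    have hk := hkey k
    have hden : ((1 - p * β' : ℤ) : ℚ) ≠ 0 := Int.cast_ne_zero.mpr hβ1
    rw [div_mul_eq_mul_div, eq_div_iff hden]
    have hkQ : ((a j₀ k : ℤ) : ℚ) - (c : ℚ) * ((a i₀ k : ℤ) : ℚ)
        = (p : ℚ) * ((α' : ℚ) * ((a i₀ k : ℤ) : ℚ) + (β' : ℚ) * ((a j₀ k : ℤ) : ℚ)) := by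
      exact_mod_cast hk
    push_cast
    linear_combination hkQ
end
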